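/- arXiv:2001.01776 — 6 statements merged into one kernel-verified Lean document; each statement's English description precedes it below -/
import Mathlib

section
/- Let G = (V, E, d, w) be a locally finite weighted graph. For any two vertices u, v ∈ V with u ≠ v, the Lin–Lu–Yau Ricci curvature admits the limit-free representation κ(u, v) = (1/d(u,v)) · sup_B Σ_{x,y ∈ V} B(x,y) d(x,y), where the supremum is taken over all ∗-couplings B between μ_u and μ_v. -/
open Filter Finset
open scoped Classical

namespace RicciWeighted

variable {V : Type*}

/-- The length of a walk with respect to an edge-length function `d`:
the sum of the lengths of its edges. -/
noncomputable def walkLength (G : SimpleGraph V) (d : V → V → ℝ) {x y : V}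
    (p : G.Walk x y) : ℝ :=
  (p.darts.map fun e => d e.toProd.1 e.toProd.2).sum

/-- `d x y` is the shortest weighted path distance between `x` and `y`
(i.e. the greatest lower bound of the lengths of walks joining them). -/
def IsShortestDist (G : SimpleGraph V) (d : V → V → ℝ) : Prop :=
  ∀ x y : V, IsGLB {r : ℝ | ∃ p : G.Walk x y, walkLength G d p = r} (d x y)

/-- The total weight `D_x = ∑_{y ∼ x} w_{x y}` at a vertex `x`. -/
noncomputable def deg (G : SimpleGraph V) [∀ v : V, Fintype (G.neighborSet v)]
    (w : V → V → ℝ) (x : V) : ℝ :=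
  ∑ y ∈ G.neighborFinset x, w x y

/-- The random-walk probability distribution `μ_x^α`. -/
noncomputable def mu (G : SimpleGraph V) [∀ v : V, Fintype (G.neighborSet v)]
    (w : V → V → ℝ) (α : ℝ) (x : V) : V → ℝ :=
  fun z => if z = x then α else if G.Adj x z then (1 - α) * w x z / deg G w x else 0

/-- A coupling between two finitely supported distributions `μ₁` and `μ₂`. -/
structure IsCoupling (μ₁ μ₂ : V → ℝ) (A : V → V → ℝ) : Prop where
  mem_Icc : ∀ x y : V, A x y ∈ Set.Icc (0 : ℝ) 1
  finite_support : (Function.support fun p : V × V => A p.1 p.2).Finite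
  marginal_fst : ∀ x : V, ∑ᶠ y : V, A x y = μ₁ x
  marginal_snd : ∀ y : V, ∑ᶠ x : V, A x y = μ₂ y

/-- The transport cost `∑_{x,y} A(x,y) d(x,y)` of a plan `A`. -/
noncomputable def cost (d : V → V → ℝ) (A : V → V → ℝ) : ℝ :=
  ∑ᶠ p : V × V, A p.1 p.2 * d p.1 p.2

/-- The Wasserstein transportation distance between `μ₁` and `μ₂`. -/
noncomputable def W (d : V → V → ℝ) (μ₁ μ₂ : V → ℝ) : ℝ :=
  sInf {r : ℝ | ∃ A : V → V → ℝ, IsCoupling μ₁ μ₂ A ∧ cost d A = r}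

/-- The `α`-Ricci curvature `κ_α(x,y) = 1 - W(μ_x^α, μ_y^α)/d(x,y)`. -/
noncomputable def kappaAlpha (G : SimpleGraph V) [∀ v : V, Fintype (G.neighborSet v)]
    (d w : V → V → ℝ) (α : ℝ) (x y : V) : ℝ :=
  1 - W d (mu G w α x) (mu G w α y) / d x y

/-- `k` is the (Lin–Lu–Yau) Ricci curvature of the pair `(x, y)`:
the limit of `κ_α(x,y)/(1-α)` as `α → 1⁻`. -/
def IsRicci (G : SimpleGraph V) [∀ v : V, Fintype (G.neighborSet v)]
    (d w : V → V → ℝ) (x y : V) (k : ℝ) : Prop :=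
  Tendsto (fun α : ℝ => kappaAlpha G d w α x y / (1 - α))
    (nhdsWithin 1 (Set.Iio 1)) (nhds k)

/-- A `∗`-coupling between `μ_u` and `μ_v`. -/
structure IsStarCoupling (μu μv : V → ℝ) (u v : V) (B : V → V → ℝ) : Prop where
  pos : 0 < B u v
  nonpos : ∀ x y : V, (x, y) ≠ (u, v) → B x y ≤ 0
  finite_support : (Function.support fun p : V × V => B p.1 p.2).Finite
  sum_zero : ∑ᶠ p : V × V, B p.1 p.2 = 0
  marginal_fst : ∀ x : V, x ≠ u → ∑ᶠ y : V, B x y = -μu x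
  marginal_snd : ∀ y : V, y ≠ v → ∑ᶠ x : V, B x y = -μv y

/-- The `Treelike` property: for every edge `(x,y)` and every `k ∈ N(x)`, `l ∈ N(y)`,
`d(k,l) = d(k,x) + d(x,y) + d(y,l)`. -/
def Treelike (G : SimpleGraph V) (d : V → V → ℝ) : Prop :=
  ∀ x y : V, G.Adj x y →
    ∀ k : V, (k = x ∨ G.Adj x k) → ∀ l : V, (l = y ∨ G.Adj y l) →
      d k l = d k x + d x y + d y l

/-- `f` is Lip(1) with respect to `d`. -/
def Lip1 (d : V → V → ℝ) (f : V → ℝ) : Prop := ∀ x y : V, f x - f y ≤ d x y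

end RicciWeighted


namespace StarProofAux

open RicciWeighted


variable {V : Type*}

lemma finsum_pair_eq_sum (f : V → V → ℝ) (t : Finset V)
    (h : ∀ x y, f x y ≠ 0 → x ∈ t ∧ y ∈ t) :
    ∑ᶠ p : V × V, f p.1 p.2 = ∑ x ∈ t, ∑ y ∈ t, f x y := by
  rw [finsum_eq_sum_of_support_subset (f := fun p : V × V => f p.1 p.2) (s := t ×ˢ t)
      (by rintro ⟨x, y⟩ hxy
          simp only [Finset.coe_product, Set.mem_prod]
          exact h x y hxy)]
  rw [Finset.sum_product]

lemma finsum_row_eq_sum (f : V → V → ℝ) (t : Finset V) (x : V)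
    (h : ∀ y, f x y ≠ 0 → y ∈ t) :
    ∑ᶠ y, f x y = ∑ y ∈ t, f x y :=
  finsum_eq_sum_of_support_subset _ h

lemma sum_ite_pair_row (t : Finset V) (u v : V) (hv : v ∈ t) (c : V → V → ℝ) (x : V) :
    ∑ y ∈ t, (if x = u ∧ y = v then c x y else 0) = if x = u then c x v else 0 := by
  by_cases hx : x = u
  · simp only [hx, true_and, if_true]
    rw [Finset.sum_ite_eq' t v (c u), if_pos hv]
  · simp [hx]

lemma sum_ite_pair_col (t : Finset V) (u v : V) (hu : u ∈ t) (c : V → V → ℝ) (y : V) :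
    ∑ x ∈ t, (if x = u ∧ y = v then c x y else 0) = if y = v then c u y else 0 := by
  by_cases hy : y = v
  · simp only [hy, and_true, if_true]
    rw [Finset.sum_ite_eq' t u (fun x => c x v), if_pos hu]
  · simp [hy]

lemma double_sum_ite (t : Finset V) (u v : V) (hu : u ∈ t) (hv : v ∈ t) (c : V → V → ℝ) :
    ∑ x ∈ t, ∑ y ∈ t, (if x = u ∧ y = v then c x y else 0) = c u v := by
  have : ∀ x ∈ t, ∑ y ∈ t, (if x = u ∧ y = v then c x y else 0)
      = if x = u then c x v else 0 := fun x _ => sum_ite_pair_row t u v hv c x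
  rw [Finset.sum_congr rfl this, Finset.sum_ite_eq' t u (fun x => c x v), if_pos hu]



section Graph

variable {V : Type*} (G : SimpleGraph V) [∀ v : V, Fintype (G.neighborSet v)]
variable (d w : V → V → ℝ)

lemma mu_support (α : ℝ) (x z : V) (h : mu G w α x z ≠ 0) :
    z ∈ insert x (G.neighborFinset x) := by
  unfold mu at h
  split_ifs at h with h1 h2
  · simp [h1]
  · simp [SimpleGraph.mem_neighborFinset, h2]
  · exact absurd rfl h

lemma deg_pos (hw_pos : ∀ x y : V, G.Adj x y → 0 < w x y) (x : V)
    (hx : (G.neighborFinset x).Nonempty) : 0 < deg G w x :=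
  Finset.sum_pos (fun y hy => hw_pos x y (by simpa using hy)) hx

lemma w_le_deg (hw_pos : ∀ x y : V, G.Adj x y → 0 < w x y) {x z : V} (hz : G.Adj x z) :
    w x z ≤ deg G w x := by
  apply Finset.single_le_sum (f := fun y => w x y)
    (fun y hy => (hw_pos x y (by simpa using hy)).le)
  simpa [SimpleGraph.mem_neighborFinset] using hz

lemma mu_nonneg (hw_pos : ∀ x y : V, G.Adj x y → 0 < w x y) {α : ℝ}
    (h0 : 0 ≤ α) (h1 : α ≤ 1) (x z : V) : 0 ≤ mu G w α x z := by
  unfold mu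
  split_ifs with ha hb
  · exact h0
  · have hD := deg_pos G w hw_pos x ⟨z, by simpa [SimpleGraph.mem_neighborFinset] using hb⟩
    exact div_nonneg (mul_nonneg (by linarith) (hw_pos x z hb).le) hD.le
  · exact le_refl 0

lemma mu_self (α : ℝ) (x : V) : mu G w α x x = α := by simp [mu]

lemma mu_le_one (hw_pos : ∀ x y : V, G.Adj x y → 0 < w x y) {α : ℝ}
    (h0 : 0 ≤ α) (h1 : α ≤ 1) (x z : V) : mu G w α x z ≤ 1 := by
  unfold mu
  split_ifs with ha hb
  · exact h1
  · have hD := deg_pos G w hw_pos x ⟨z, by simpa [SimpleGraph.mem_neighborFinset] using hb⟩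
    rw [div_le_one hD]
    have h2 : w x z ≤ deg G w x := w_le_deg G w hw_pos hb
    nlinarith [(hw_pos x z hb)]
  · exact zero_le_one

lemma mu_mass (hw_pos : ∀ x y : V, G.Adj x y → 0 < w x y) (α : ℝ) (x : V)
    (hx : (G.neighborFinset x).Nonempty) : ∑ᶠ z, mu G w α x z = 1 := by
  rw [finsum_eq_sum_of_support_subset (mu G w α x)
      (s := insert x (G.neighborFinset x)) (fun z hz => by
        simpa using mu_support G w α x z hz)]
  rw [Finset.sum_insert (G.notMem_neighborFinset_self x)]
  have hD := deg_pos G w hw_pos x hx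
  have : ∀ z ∈ G.neighborFinset x, mu G w α x z = (1 - α) * w x z / deg G w x := by
    intro z hz
    have hadj : G.Adj x z := by simpa [SimpleGraph.mem_neighborFinset] using hz
    simp [mu, hadj, (G.ne_of_adj hadj).symm]
  rw [Finset.sum_congr rfl this, mu_self]
  have : ∑ z ∈ G.neighborFinset x, (1 - α) * w x z / deg G w x
      = (1 - α) * (∑ z ∈ G.neighborFinset x, w x z) / deg G w x := by
    rw [Finset.mul_sum, Finset.sum_div]
  rw [this]
  have hdeg : (∑ z ∈ G.neighborFinset x, w x z) = deg G w x := rfl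
  rw [hdeg, mul_div_assoc, div_self hD.ne']
  ring

lemma mu_scale (α : ℝ) {u x : V} (hx : x ≠ u) :
    mu G w α u x = (1 - α) * mu G w 0 u x := by
  unfold mu
  rw [if_neg hx, if_neg hx]
  split_ifs with h
  · ring
  · ring

lemma d_nonneg (hd_pos : ∀ x y : V, G.Adj x y → 0 < d x y)
    (hshort : IsShortestDist G d) (x y : V) : 0 ≤ d x y := by
  refine (hshort x y).2 ?_
  rintro r ⟨p, rfl⟩
  unfold walkLength
  apply List.sum_nonneg
  intro a ha
  obtain ⟨e, he, rfl⟩ := List.mem_map.1 ha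
  exact (hd_pos _ _ e.adj).le

lemma walkLength_nonneg (hd_pos : ∀ x y : V, G.Adj x y → 0 < d x y)
    {x y : V} (p : G.Walk x y) : 0 ≤ walkLength G d p := by
  unfold walkLength
  apply List.sum_nonneg
  intro a ha
  obtain ⟨e, he, rfl⟩ := List.mem_map.1 ha
  exact (hd_pos _ _ e.adj).le

lemma d_pos (hd_pos : ∀ x y : V, G.Adj x y → 0 < d x y)
    (hshort : IsShortestDist G d) {u v : V} (huv : u ≠ v)
    (hNu : (G.neighborFinset u).Nonempty) : 0 < d u v := by
  classical
  set ε : ℝ := (G.neighborFinset u).inf' hNu (fun z => d u z) with hε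
  have hεpos : 0 < ε := by
    rw [hε, Finset.lt_inf'_iff]
    intro z hz
    exact hd_pos u z (by simpa [SimpleGraph.mem_neighborFinset] using hz)
  have hlb : ε ∈ lowerBounds {r : ℝ | ∃ p : G.Walk u v, walkLength G d p = r} := by
    rintro r ⟨p, rfl⟩
    cases p with
    | nil => exact absurd rfl huv
    | cons h q =>
      rename_i z
      have h1 : walkLength G d (SimpleGraph.Walk.cons h q)
          = d u z + walkLength G d q := by
        unfold walkLength
        rw [SimpleGraph.Walk.darts_cons, List.map_cons, List.sum_cons]
      rw [h1]
      have h2 : ε ≤ d u z := Finset.inf'_le _ (by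
        simpa [SimpleGraph.mem_neighborFinset] using h)
      have h3 := walkLength_nonneg G d hd_pos q
      linarith
  exact lt_of_lt_of_le hεpos ((hshort u v).2 hlb)


lemma mu_fin_support (α : ℝ) (x : V) : (Function.support (mu G w α x)).Finite :=
  Set.Finite.subset (insert x (G.neighborFinset x)).finite_toSet
    (fun z hz => by simpa using mu_support G w α x z hz)

lemma cost_nonneg (A : V → V → ℝ) (hA : ∀ x y : V, 0 ≤ A x y)
    (hd0 : ∀ x y : V, 0 ≤ d x y) : 0 ≤ cost d A :=
  finsum_nonneg fun p => mul_nonneg (hA _ _) (hd0 _ _)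

lemma prod_coupling (hw_pos : ∀ x y : V, G.Adj x y → 0 < w x y) {α : ℝ}
    (h0 : 0 ≤ α) (h1 : α ≤ 1) (u v : V)
    (hNu : (G.neighborFinset u).Nonempty) (hNv : (G.neighborFinset v).Nonempty) :
    IsCoupling (mu G w α u) (mu G w α v)
      (fun x y => mu G w α u x * mu G w α v y) where
  mem_Icc x y := ⟨mul_nonneg (mu_nonneg G w hw_pos h0 h1 u x) (mu_nonneg G w hw_pos h0 h1 v y),
    mul_le_one₀ (mu_le_one G w hw_pos h0 h1 u x) (mu_nonneg G w hw_pos h0 h1 v y)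
      (mu_le_one G w hw_pos h0 h1 v y)⟩
  finite_support := by
    apply Set.Finite.subset ((mu_fin_support G w α u).prod (mu_fin_support G w α v))
    rintro ⟨x, y⟩ hxy
    simp only [Function.mem_support] at hxy
    simp only [Set.mem_prod, Function.mem_support]
    exact ⟨left_ne_zero_of_mul hxy, right_ne_zero_of_mul hxy⟩
  marginal_fst x := by
    rw [← mul_finsum (fun y => mu G w α v y) (mu G w α u x),
      mu_mass G w hw_pos α v hNv, mul_one]
  marginal_snd y := by
    rw [← finsum_mul (fun x => mu G w α u x) (mu G w α v y)]
    rw [mu_mass G w hw_pos α u hNu, one_mul]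


/-- The big finset associated to a finitely supported matrix and the pair `u v`. -/
noncomputable def bigT (u v : V) (sB : Finset (V × V)) : Finset V :=
  sB.image Prod.fst ∪ sB.image Prod.snd ∪ {u, v} ∪ G.neighborFinset u ∪ G.neighborFinset v

lemma u_mem_bigT (u v : V) (sB : Finset (V × V)) : u ∈ bigT G u v sB := by
  simp [bigT]

lemma v_mem_bigT (u v : V) (sB : Finset (V × V)) : v ∈ bigT G u v sB := by
  simp [bigT]

lemma mem_bigT_of_mem {u v : V} {sB : Finset (V × V)} {x y : V}
    (h : (x, y) ∈ sB) : x ∈ bigT G u v sB ∧ y ∈ bigT G u v sB := by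
  constructor
  · simp only [bigT, Finset.mem_union]
    exact Or.inl (Or.inl (Or.inl (Or.inl (Finset.mem_image_of_mem Prod.fst h))))
  · simp only [bigT, Finset.mem_union]
    exact Or.inl (Or.inl (Or.inl (Or.inr (Finset.mem_image_of_mem Prod.snd h))))

lemma mu_mem_bigT {u v : V} (sB : Finset (V × V)) (α : ℝ) {z : V} :
    (mu G w α u z ≠ 0 → z ∈ bigT G u v sB) ∧ (mu G w α v z ≠ 0 → z ∈ bigT G u v sB) := by
  constructor
  · intro h
    have := mu_support G w α u z h
    simp only [Finset.mem_insert, SimpleGraph.mem_neighborFinset] at this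
    rcases this with h | h
    · simp [bigT, h]
    · simp [bigT, h]
  · intro h
    have := mu_support G w α v z h
    simp only [Finset.mem_insert, SimpleGraph.mem_neighborFinset] at this
    rcases this with h | h
    · simp [bigT, h]
    · simp [bigT, h]

lemma mu_sum_bigT (hw_pos : ∀ x y : V, G.Adj x y → 0 < w x y) {u v : V}
    (sB : Finset (V × V)) (α : ℝ) (hNu : (G.neighborFinset u).Nonempty) :
    ∑ x ∈ bigT G u v sB, mu G w α u x = 1 := by
  rw [← finsum_eq_sum_of_support_subset (mu G w α u)
      (s := bigT G u v sB) (fun z hz => (mu_mem_bigT G w sB α).1 hz)]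
  exact mu_mass G w hw_pos α u hNu

lemma mu_sum_bigT' (hw_pos : ∀ x y : V, G.Adj x y → 0 < w x y) {u v : V}
    (sB : Finset (V × V)) (α : ℝ) (hNv : (G.neighborFinset v).Nonempty) :
    ∑ y ∈ bigT G u v sB, mu G w α v y = 1 := by
  rw [← finsum_eq_sum_of_support_subset (mu G w α v)
      (s := bigT G u v sB) (fun z hz => (mu_mem_bigT G w sB α).2 hz)]
  exact mu_mass G w hw_pos α v hNv

/-- Row sum at `u` of a star coupling is `1`; column sum at `v` is `1`. -/
lemma star_row_col (hw_pos : ∀ x y : V, G.Adj x y → 0 < w x y) {u v : V}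
    (hNu : (G.neighborFinset u).Nonempty) (hNv : (G.neighborFinset v).Nonempty)
    {B : V → V → ℝ} (hB : IsStarCoupling (mu G w 0 u) (mu G w 0 v) u v B)
    (t : Finset V) (ht : t = bigT G u v hB.finite_support.toFinset) :
    (∑ y ∈ t, B u y = 1) ∧ (∑ x ∈ t, B x v = 1) := by
  have hBt : ∀ x y : V, B x y ≠ 0 → x ∈ t ∧ y ∈ t := by
    intro x y h
    rw [ht]
    exact mem_bigT_of_mem G (by simpa using h)
  have hut : u ∈ t := ht ▸ u_mem_bigT G u v _
  have hvt : v ∈ t := ht ▸ v_mem_bigT G u v _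
  have htotal : ∑ x ∈ t, ∑ y ∈ t, B x y = 0 := by
    rw [← finsum_pair_eq_sum B t hBt]; exact hB.sum_zero
  have hrow : ∀ x : V, x ≠ u → ∑ y ∈ t, B x y = -(mu G w 0 u x) := by
    intro x hx
    rw [← finsum_row_eq_sum B t x (fun y h => (hBt x y h).2)]
    exact hB.marginal_fst x hx
  have hcol : ∀ y : V, y ≠ v → ∑ x ∈ t, B x y = -(mu G w 0 v y) := by
    intro y hy
    rw [← finsum_eq_sum_of_support_subset (fun x => B x y) (s := t)
      (fun x h => (hBt x y h).1)]
    exact hB.marginal_snd y hy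
  have hmuu : ∑ x ∈ t, mu G w 0 u x = 1 := ht ▸ mu_sum_bigT G w hw_pos _ 0 hNu
  have hmuv : ∑ y ∈ t, mu G w 0 v y = 1 := ht ▸ mu_sum_bigT' G w hw_pos _ 0 hNv
  constructor
  · have h1 : ∑ x ∈ t, ∑ y ∈ t, B x y
        = (∑ y ∈ t, B u y) + ∑ x ∈ t.erase u, ∑ y ∈ t, B x y :=
      (Finset.add_sum_erase t _ hut).symm
    have h2 : ∑ x ∈ t.erase u, ∑ y ∈ t, B x y = -1 := by
      have : ∀ x ∈ t.erase u, ∑ y ∈ t, B x y = -(mu G w 0 u x) := fun x hx =>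
        hrow x (Finset.ne_of_mem_erase hx)
      rw [Finset.sum_congr rfl this, Finset.sum_neg_distrib]
      have : ∑ x ∈ t.erase u, mu G w 0 u x = 1 := by
        have h3 := Finset.add_sum_erase t (mu G w 0 u) hut
        rw [mu_self] at h3
        linarith [hmuu, h3]
      rw [this]
    rw [h1, h2] at htotal
    linarith
  · have hswap : ∑ x ∈ t, ∑ y ∈ t, B x y = ∑ y ∈ t, ∑ x ∈ t, B x y :=
      Finset.sum_comm
    rw [hswap] at htotal
    have h1 : ∑ y ∈ t, ∑ x ∈ t, B x y
        = (∑ x ∈ t, B x v) + ∑ y ∈ t.erase v, ∑ x ∈ t, B x y :=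
      (Finset.add_sum_erase t _ hvt).symm
    have h2 : ∑ y ∈ t.erase v, ∑ x ∈ t, B x y = -1 := by
      have : ∀ y ∈ t.erase v, ∑ x ∈ t, B x y = -(mu G w 0 v y) := fun y hy =>
        hcol y (Finset.ne_of_mem_erase hy)
      rw [Finset.sum_congr rfl this, Finset.sum_neg_distrib]
      have : ∑ y ∈ t.erase v, mu G w 0 v y = 1 := by
        have h3 := Finset.add_sum_erase t (mu G w 0 v) hvt
        rw [mu_self] at h3
        linarith [hmuv, h3]
      rw [this]
    rw [h1, h2] at htotal
    linarith


lemma star_to_coupling (hd_pos : ∀ x y : V, G.Adj x y → 0 < d x y)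
    (hw_pos : ∀ x y : V, G.Adj x y → 0 < w x y) {u v : V}
    (hNu : (G.neighborFinset u).Nonempty) (hNv : (G.neighborFinset v).Nonempty)
    {B : V → V → ℝ} (hB : IsStarCoupling (mu G w 0 u) (mu G w 0 v) u v B)
    {α : ℝ} (h0 : 0 ≤ α) (h1 : α < 1)
    (hM : ∀ x y : V, (1 - α) * |B x y| ≤ 1) :
    IsCoupling (mu G w α u) (mu G w α v)
      (fun x y => -((1 - α) * B x y) + (if x = u ∧ y = v then 1 else 0)) ∧
    cost d (fun x y => -((1 - α) * B x y) + (if x = u ∧ y = v then 1 else 0))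
      = d u v - (1 - α) * cost d B := by
  classical
  set A : V → V → ℝ :=
    fun x y => -((1 - α) * B x y) + (if x = u ∧ y = v then 1 else 0) with hAdef
  set t : Finset V := bigT G u v hB.finite_support.toFinset with htdef
  have hBt : ∀ x y : V, B x y ≠ 0 → x ∈ t ∧ y ∈ t := by
    intro x y h
    exact mem_bigT_of_mem G (by simpa using h)
  have hut : u ∈ t := u_mem_bigT G u v _
  have hvt : v ∈ t := v_mem_bigT G u v _
  have hrc := star_row_col G w hw_pos hNu hNv hB t rfl
  have h1α : (0:ℝ) < 1 - α := by linarith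
  have hAt : ∀ x y : V, A x y ≠ 0 → x ∈ t ∧ y ∈ t := by
    intro x y h
    by_cases hxy : x = u ∧ y = v
    · exact ⟨hxy.1 ▸ hut, hxy.2 ▸ hvt⟩
    · apply hBt x y
      intro h0'
      apply h
      simp [hAdef, h0', hxy]
  have hcoup : IsCoupling (mu G w α u) (mu G w α v) A := by
    constructor
    · intro x y
      rw [Set.mem_Icc]
      by_cases hxy : x = u ∧ y = v
      · have hBpos : 0 < B x y := by rw [hxy.1, hxy.2]; exact hB.pos
        have hb1 : (1 - α) * B x y ≤ 1 := by
          have h' := hM x y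
          rwa [abs_of_pos hBpos] at h'
        have hb2 : 0 ≤ (1 - α) * B x y := mul_nonneg h1α.le hBpos.le
        have hA : A x y = -((1 - α) * B x y) + 1 := by simp [hAdef, hxy]
        rw [hA]
        constructor <;> linarith
      · have hBle : B x y ≤ 0 := hB.nonpos x y (by
          simp only [ne_eq, Prod.mk.injEq]
          exact fun h => hxy ⟨h.1, h.2⟩)
        have hb1 : (1 - α) * (-(B x y)) ≤ 1 := by
          have h' := hM x y
          rwa [abs_of_nonpos hBle] at h'
        have hA : A x y = -((1 - α) * B x y) := by simp [hAdef, hxy]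
        rw [hA]
        constructor
        · nlinarith
        · nlinarith
    · apply Set.Finite.subset (hB.finite_support.union (Set.finite_singleton (u, v)))
      rintro ⟨x, y⟩ hxy
      simp only [Function.mem_support] at hxy
      by_cases h : (x, y) = (u, v)
      · exact Or.inr h
      · left
        simp only [Function.mem_support]
        intro h0'
        apply hxy
        have : ¬(x = u ∧ y = v) := by
          intro hc
          exact h (by simp [hc.1, hc.2])
        simp [hAdef, h0', this]
    · intro x
      rw [finsum_row_eq_sum A t x (fun y h => (hAt x y h).2)]
      have hsplit : ∑ y ∈ t, A x y
          = -((1 - α) * ∑ y ∈ t, B x y) + (if x = u then 1 else 0) := by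
        rw [hAdef]
        rw [Finset.sum_add_distrib, Finset.sum_neg_distrib, ← Finset.mul_sum]
        congr 1
        exact sum_ite_pair_row t u v hvt (fun _ _ => 1) x
      rw [hsplit]
      by_cases hx : x = u
      · subst hx
        rw [if_pos rfl, hrc.1, mu_self]
        ring
      · rw [if_neg hx]
        have : ∑ y ∈ t, B x y = -(mu G w 0 u x) := by
          rw [← finsum_row_eq_sum B t x (fun y h => (hBt x y h).2)]
          exact hB.marginal_fst x hx
        rw [this, mu_scale G w α hx]
        ring
    · intro y
      rw [finsum_eq_sum_of_support_subset (fun x => A x y) (s := t)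
        (fun x h => (hAt x y h).1)]
      have hsplit : ∑ x ∈ t, A x y
          = -((1 - α) * ∑ x ∈ t, B x y) + (if y = v then 1 else 0) := by
        rw [hAdef]
        rw [Finset.sum_add_distrib, Finset.sum_neg_distrib, ← Finset.mul_sum]
        congr 1
        exact sum_ite_pair_col t u v hut (fun _ _ => 1) y
      rw [hsplit]
      by_cases hy : y = v
      · subst hy
        rw [if_pos rfl, hrc.2, mu_self]
        ring
      · rw [if_neg hy]
        have : ∑ x ∈ t, B x y = -(mu G w 0 v y) := by
          rw [← finsum_eq_sum_of_support_subset (fun x => B x y) (s := t)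
            (fun x h => (hBt x y h).1)]
          exact hB.marginal_snd y hy
        rw [this, mu_scale G w α hy]
        ring
  refine ⟨hcoup, ?_⟩
  have hcA : cost d A = ∑ x ∈ t, ∑ y ∈ t, A x y * d x y := by
    unfold cost
    exact finsum_pair_eq_sum (fun x y => A x y * d x y) t
      (fun x y h => hAt x y (left_ne_zero_of_mul h))
  have hcB : cost d B = ∑ x ∈ t, ∑ y ∈ t, B x y * d x y := by
    unfold cost
    exact finsum_pair_eq_sum (fun x y => B x y * d x y) t
      (fun x y h => hBt x y (left_ne_zero_of_mul h))
  rw [hcA, hcB]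
  have hterm : ∀ x y : V, A x y * d x y
      = -((1 - α) * (B x y * d x y)) + (if x = u ∧ y = v then d x y else 0) := by
    intro x y
    by_cases hxy : x = u ∧ y = v
    · simp only [hAdef, if_pos hxy]
      ring
    · simp only [hAdef, if_neg hxy, add_zero]
      ring
  calc ∑ x ∈ t, ∑ y ∈ t, A x y * d x y
      = ∑ x ∈ t, ∑ y ∈ t, (-((1 - α) * (B x y * d x y))
          + (if x = u ∧ y = v then d x y else 0)) := by
        apply Finset.sum_congr rfl
        intro x _
        apply Finset.sum_congr rfl
        intro y _
        exact hterm x y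
    _ = -((1 - α) * ∑ x ∈ t, ∑ y ∈ t, B x y * d x y)
        + ∑ x ∈ t, ∑ y ∈ t, (if x = u ∧ y = v then d x y else 0) := by
        simp only [Finset.sum_add_distrib, Finset.sum_neg_distrib, Finset.mul_sum]
    _ = -((1 - α) * ∑ x ∈ t, ∑ y ∈ t, B x y * d x y) + d u v := by
        rw [double_sum_ite t u v hut hvt d]
    _ = d u v - (1 - α) * ∑ x ∈ t, ∑ y ∈ t, B x y * d x y := by ring


lemma coupling_to_star (hw_pos : ∀ x y : V, G.Adj x y → 0 < w x y) {u v : V}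
    (hNu : (G.neighborFinset u).Nonempty) (hNv : (G.neighborFinset v).Nonempty)
    {A : V → V → ℝ} {α : ℝ} (h0 : 0 ≤ α) (h1 : α < 1)
    (hA : IsCoupling (mu G w α u) (mu G w α v) A) :
    IsStarCoupling (mu G w 0 u) (mu G w 0 v) u v
      (fun x y => (-(A x y) + (if x = u ∧ y = v then 1 else 0)) / (1 - α)) ∧
    cost d (fun x y => (-(A x y) + (if x = u ∧ y = v then 1 else 0)) / (1 - α))
      = (d u v - cost d A) / (1 - α) := by
  classical
  set B : V → V → ℝ :=
    fun x y => (-(A x y) + (if x = u ∧ y = v then 1 else 0)) / (1 - α) with hBdef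
  set t : Finset V := bigT G u v hA.finite_support.toFinset with htdef
  have h1α : (0:ℝ) < 1 - α := by linarith
  have hAt : ∀ x y : V, A x y ≠ 0 → x ∈ t ∧ y ∈ t := by
    intro x y h
    exact mem_bigT_of_mem G (by simpa using h)
  have hut : u ∈ t := u_mem_bigT G u v _
  have hvt : v ∈ t := v_mem_bigT G u v _
  have hBt : ∀ x y : V, B x y ≠ 0 → x ∈ t ∧ y ∈ t := by
    intro x y h
    by_cases hxy : x = u ∧ y = v
    · exact ⟨hxy.1 ▸ hut, hxy.2 ▸ hvt⟩
    · apply hAt x y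
      intro h0'
      apply h
      simp [hBdef, h0', hxy]
  have hAnn : ∀ x y : V, 0 ≤ A x y := fun x y => (hA.mem_Icc x y).1
  have hrowA : ∀ x : V, ∑ y ∈ t, A x y = mu G w α u x := by
    intro x
    rw [← finsum_row_eq_sum A t x (fun y h => (hAt x y h).2)]
    exact hA.marginal_fst x
  have hcolA : ∀ y : V, ∑ x ∈ t, A x y = mu G w α v y := by
    intro y
    rw [← finsum_eq_sum_of_support_subset (fun x => A x y) (s := t)
      (fun x h => (hAt x y h).1)]
    exact hA.marginal_snd y
  have htotal : ∑ x ∈ t, ∑ y ∈ t, A x y = 1 := by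
    have : ∀ x ∈ t, ∑ y ∈ t, A x y = mu G w α u x := fun x _ => hrowA x
    rw [Finset.sum_congr rfl this]
    exact mu_sum_bigT G w hw_pos _ α hNu
  have hAuv : A u v < 1 := by
    have h2 : A u v ≤ ∑ y ∈ t, A u y :=
      Finset.single_le_sum (fun y _ => hAnn u y) hvt
    rw [hrowA u, mu_self] at h2
    linarith
  have hBfin : (Function.support fun p : V × V => B p.1 p.2).Finite := by
    apply Set.Finite.subset (hA.finite_support.union (Set.finite_singleton (u, v)))
    rintro ⟨x, y⟩ hxy
    simp only [Function.mem_support] at hxy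
    by_cases h : (x, y) = (u, v)
    · exact Or.inr h
    · left
      simp only [Function.mem_support]
      intro h0'
      apply hxy
      have hne : ¬(x = u ∧ y = v) := by
        intro hc
        exact h (by simp [hc.1, hc.2])
      simp [hBdef, h0', hne]
  have hstar : IsStarCoupling (mu G w 0 u) (mu G w 0 v) u v B := by
    constructor
    · have hb : B u v = (-(A u v) + 1) / (1 - α) := by simp [hBdef]
      rw [hb]
      apply div_pos (by linarith) h1α
    · intro x y hxy
      have hne : ¬(x = u ∧ y = v) := by
        intro hc
        exact hxy (by simp [Prod.ext_iff, hc.1, hc.2])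
      have hb : B x y = -(A x y) / (1 - α) := by simp [hBdef, hne]
      rw [hb]
      apply div_nonpos_of_nonpos_of_nonneg (by linarith [hAnn x y]) h1α.le
    · exact hBfin
    · rw [finsum_pair_eq_sum B t hBt]
      have hterm : ∀ x y : V, B x y
          = (-(A x y)) / (1 - α) + (if x = u ∧ y = v then 1 / (1 - α) else 0) := by
        intro x y
        by_cases hxy : x = u ∧ y = v
        · simp only [hBdef, if_pos hxy]
          ring
        · simp only [hBdef, if_neg hxy]
          ring
      calc ∑ x ∈ t, ∑ y ∈ t, B x y
          = ∑ x ∈ t, ∑ y ∈ t, ((-(A x y)) / (1 - α)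
              + (if x = u ∧ y = v then 1 / (1 - α) else 0)) := by
            exact Finset.sum_congr rfl fun x _ => Finset.sum_congr rfl fun y _ => hterm x y
        _ = (∑ x ∈ t, ∑ y ∈ t, -(A x y)) / (1 - α)
              + ∑ x ∈ t, ∑ y ∈ t, (if x = u ∧ y = v then 1 / (1 - α) else 0) := by
            simp only [Finset.sum_add_distrib, Finset.sum_div]
        _ = 0 := by
            rw [double_sum_ite t u v hut hvt (fun _ _ => 1 / (1 - α))]
            simp only [Finset.sum_neg_distrib]
            rw [htotal]
            field_simp
            ring
    · intro x hx
      rw [finsum_row_eq_sum B t x (fun y h => (hBt x y h).2)]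
      have hterm : ∀ y ∈ t, B x y = -(A x y) / (1 - α) := by
        intro y _
        have hne : ¬(x = u ∧ y = v) := fun hc => hx hc.1
        simp [hBdef, hne]
      rw [Finset.sum_congr rfl hterm, ← Finset.sum_div, Finset.sum_neg_distrib, hrowA x,
        mu_scale G w α hx]
      field_simp
    · intro y hy
      rw [finsum_eq_sum_of_support_subset (fun x => B x y) (s := t)
        (fun x h => (hBt x y h).1)]
      have hterm : ∀ x ∈ t, B x y = -(A x y) / (1 - α) := by
        intro x _
        have hne : ¬(x = u ∧ y = v) := fun hc => hy hc.2
        simp [hBdef, hne]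
      rw [Finset.sum_congr rfl hterm, ← Finset.sum_div, Finset.sum_neg_distrib, hcolA y,
        mu_scale G w α hy]
      field_simp
  refine ⟨hstar, ?_⟩
  have hcA : cost d A = ∑ x ∈ t, ∑ y ∈ t, A x y * d x y := by
    unfold cost
    exact finsum_pair_eq_sum (fun x y => A x y * d x y) t
      (fun x y h => hAt x y (left_ne_zero_of_mul h))
  have hcB : cost d B = ∑ x ∈ t, ∑ y ∈ t, B x y * d x y := by
    unfold cost
    exact finsum_pair_eq_sum (fun x y => B x y * d x y) t
      (fun x y h => hBt x y (left_ne_zero_of_mul h))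
  rw [hcA, hcB]
  have hterm : ∀ x y : V, B x y * d x y
      = (-(A x y * d x y)) / (1 - α)
        + (if x = u ∧ y = v then d x y / (1 - α) else 0) := by
    intro x y
    by_cases hxy : x = u ∧ y = v
    · simp only [hBdef, if_pos hxy]
      ring
    · simp only [hBdef, if_neg hxy]
      ring
  calc ∑ x ∈ t, ∑ y ∈ t, B x y * d x y
      = ∑ x ∈ t, ∑ y ∈ t, ((-(A x y * d x y)) / (1 - α)
          + (if x = u ∧ y = v then d x y / (1 - α) else 0)) := by
        exact Finset.sum_congr rfl fun x _ => Finset.sum_congr rfl fun y _ => hterm x y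
    _ = (∑ x ∈ t, ∑ y ∈ t, -(A x y * d x y)) / (1 - α)
          + ∑ x ∈ t, ∑ y ∈ t, (if x = u ∧ y = v then d x y / (1 - α) else 0) := by
        simp only [Finset.sum_add_distrib, Finset.sum_div]
    _ = (d u v - ∑ x ∈ t, ∑ y ∈ t, A x y * d x y) / (1 - α) := by
        rw [double_sum_ite t u v hut hvt (fun x y => d x y / (1 - α))]
        simp only [Finset.sum_neg_distrib]
        ring


lemma neighbor_nonempty (hconn : G.Connected) {u v : V} (huv : u ≠ v) :
    (G.neighborFinset u).Nonempty := by
  obtain ⟨p⟩ := hconn.preconnected u v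
  cases p with
  | nil => exact absurd rfl huv
  | cons h q =>
    rename_i z
    exact ⟨z, by simpa [SimpleGraph.mem_neighborFinset] using h⟩

end Graph

end StarProofAux

open RicciWeighted in
/-- **Curvature via `∗`-coupling functions.** For a locally finite weighted
graph `G = (V,E,d,w)` and distinct vertices `u, v`, the Lin–Lu–Yau Ricci curvature admits
the limit-free representation
`κ(u,v) = (1/d(u,v)) · sup_B ∑_{x,y} B(x,y) d(x,y)`,
the supremum taken over all `∗`-couplings `B` between `μ_u` and `μ_v`; equivalently
`d(u,v)·κ(u,v)` is the least upper bound of the costs of `∗`-couplings. -/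
theorem curvature_eq_sup_star_coupling
    {V : Type*} (G : SimpleGraph V) [∀ v : V, Fintype (G.neighborSet v)]
    (hconn : G.Connected)
    (d w : V → V → ℝ)
    (hd_symm : ∀ x y : V, d x y = d y x)
    (hd_pos : ∀ x y : V, G.Adj x y → 0 < d x y)
    (hshort : IsShortestDist G d)
    (hw_symm : ∀ x y : V, w x y = w y x)
    (hw_pos : ∀ x y : V, G.Adj x y → 0 < w x y)
    (u v : V) (huv : u ≠ v)
    (k : ℝ) (hk : IsRicci G d w u v k) :
    IsLUB {r : ℝ | ∃ B : V → V → ℝ,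
        IsStarCoupling (mu G w 0 u) (mu G w 0 v) u v B ∧ cost d B = r}
      (d u v * k) := by
  classical
  have hNu : (G.neighborFinset u).Nonempty := StarProofAux.neighbor_nonempty G hconn huv
  have hNv : (G.neighborFinset v).Nonempty :=
    StarProofAux.neighbor_nonempty G hconn (Ne.symm huv)
  have hd0 : ∀ x y : V, 0 ≤ d x y := StarProofAux.d_nonneg G d hd_pos hshort
  have hduv : 0 < d u v := StarProofAux.d_pos G d hd_pos hshort huv hNu
  have hbdd : ∀ α : ℝ, BddBelow {r : ℝ | ∃ A : V → V → ℝ,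
      IsCoupling (mu G w α u) (mu G w α v) A ∧ cost d A = r} := by
    intro α
    refine ⟨0, ?_⟩
    rintro r ⟨A, hA, rfl⟩
    exact StarProofAux.cost_nonneg d A (fun x y => (hA.mem_Icc x y).1) hd0
  constructor
  · -- every star coupling cost is at most d u v * k
    rintro r ⟨B, hB, rfl⟩
    set s : Finset (V × V) := hB.finite_support.toFinset with hsdef
    set M : ℝ := 1 + ∑ p ∈ s, |B p.1 p.2| with hMdef
    have hMpos : (0:ℝ) < M := by
      have : (0:ℝ) ≤ ∑ p ∈ s, |B p.1 p.2| :=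
        Finset.sum_nonneg fun p _ => abs_nonneg _
      linarith
    have hM1 : (1:ℝ) ≤ M := by
      have : (0:ℝ) ≤ ∑ p ∈ s, |B p.1 p.2| :=
        Finset.sum_nonneg fun p _ => abs_nonneg _
      linarith
    have habs : ∀ x y : V, |B x y| ≤ M := by
      intro x y
      by_cases h : (x, y) ∈ s
      · have := Finset.single_le_sum (f := fun p : V × V => |B p.1 p.2|)
          (fun p _ => abs_nonneg _) h
        simp only at this
        linarith
      · have : B x y = 0 := by
          by_contra hc
          exact h (by simpa [hsdef] using hc)
        simp [this]
        linarith
    set α₀ : ℝ := 1 - 1 / M with hα₀def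
    have hα₀0 : 0 ≤ α₀ := by
      have : 1 / M ≤ 1 := by
        rw [div_le_one hMpos]
        exact hM1
      simp only [hα₀def]
      linarith
    have hα₀1 : α₀ < 1 := by
      have : 0 < 1 / M := by positivity
      simp only [hα₀def]
      linarith
    have hev : ∀ᶠ α in nhdsWithin (1:ℝ) (Set.Iio 1),
        cost d B / d u v ≤ kappaAlpha G d w α u v / (1 - α) := by
      filter_upwards [Ioo_mem_nhdsLT hα₀1] with α hα
      have h0 : 0 ≤ α := le_trans hα₀0 hα.1.le
      have h1 : α < 1 := hα.2
      have h1α : (0:ℝ) < 1 - α := by linarith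
      have hMα : ∀ x y : V, (1 - α) * |B x y| ≤ 1 := by
        intro x y
        have hle : 1 - α ≤ 1 / M := by
          simp only [hα₀def] at hα
          linarith [hα.1]
        calc (1 - α) * |B x y| ≤ (1 / M) * M := by
              apply mul_le_mul hle (habs x y) (abs_nonneg _)
              positivity
          _ = 1 := by field_simp
      obtain ⟨hcoup, hcost⟩ := StarProofAux.star_to_coupling G d w hd_pos hw_pos
        hNu hNv hB h0 h1 hMα
      have hW : W d (mu G w α u) (mu G w α v) ≤ d u v - (1 - α) * cost d B := by
        rw [W]
        refine le_trans (csInf_le (hbdd α) ?_) (le_of_eq hcost)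
        exact ⟨_, hcoup, rfl⟩
      rw [kappaAlpha, le_div_iff₀ h1α]
      have e2 : W d (mu G w α u) (mu G w α v) / d u v
          ≤ (d u v - (1 - α) * cost d B) / d u v := by gcongr
      have e3 : (d u v - (1 - α) * cost d B) / d u v
          = 1 - cost d B / d u v * (1 - α) := by
        field_simp
      rw [e3] at e2
      linarith
    have := ge_of_tendsto hk hev
    calc cost d B = cost d B / d u v * d u v := by field_simp
      _ ≤ k * d u v := by
          apply mul_le_mul_of_nonneg_right this hduv.le
      _ = d u v * k := mul_comm _ _
  · -- least upper bound
    intro b hb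
    have hev : ∀ᶠ α in nhdsWithin (1:ℝ) (Set.Iio 1),
        kappaAlpha G d w α u v / (1 - α) ≤ b / d u v := by
      filter_upwards [Ioo_mem_nhdsLT (zero_lt_one (α := ℝ))] with α hα
      have h0 : 0 ≤ α := hα.1.le
      have h1 : α < 1 := hα.2
      have h1α : (0:ℝ) < 1 - α := by linarith
      have hWge : d u v - (1 - α) * b ≤ W d (mu G w α u) (mu G w α v) := by
        rw [W]
        apply le_csInf
        · exact ⟨_, ⟨_, StarProofAux.prod_coupling G w hw_pos h0 h1.le u v hNu hNv, rfl⟩⟩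
        · rintro r ⟨A, hA, rfl⟩
          obtain ⟨hstar, hcost⟩ :=
            StarProofAux.coupling_to_star G d w hw_pos hNu hNv h0 h1 hA
          have hmem : (d u v - cost d A) / (1 - α) ∈ {r : ℝ | ∃ B : V → V → ℝ,
              IsStarCoupling (mu G w 0 u) (mu G w 0 v) u v B ∧ cost d B = r} :=
            ⟨_, hstar, hcost⟩
          have hle := hb hmem
          rw [div_le_iff₀ h1α] at hle
          linarith
      rw [kappaAlpha, div_le_div_iff₀ h1α hduv]
      have hWd : W d (mu G w α u) (mu G w α v) / d u v * d u v
          = W d (mu G w α u) (mu G w α v) :=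
        div_mul_cancel₀ _ hduv.ne'
      have hexp : (1 - W d (mu G w α u) (mu G w α v) / d u v) * d u v
          = d u v - W d (mu G w α u) (mu G w α v) := by
        rw [sub_mul, one_mul, hWd]
      rw [hexp]
      linarith
    have := le_of_tendsto hk hev
    calc d u v * k = k * d u v := mul_comm _ _
      _ ≤ b / d u v * d u v := mul_le_mul_of_nonneg_right this hduv.le
      _ = b := div_mul_cancel₀ _ hduv.ne'
end

section
/- Let G = (V, E) be a finite connected simple graph with girth at least 6, equipped with uniform edge weights (d ≡ 1 and w ≡ 1). Then the Gauss–Bonnet theorem holds for G: K(G) = χ(G), where χ(G) = 2 − 2g(G) is the Euler characteristic of G and g(G) = |E| − |V| + 1 is the graph genus; equivalently K(G) = 2|V| − 2|E|. -/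
open Filter Finset
open scoped Classical

section GBAux
set_option linter.unusedSectionVars false

open SimpleGraph Finset RicciWeighted

variable {V : Type*} [DecidableEq V] [Fintype V]

private lemma gb_sum_ite_one (a : V) (p g : V → ℝ) :
    ∑ v, (if v = a then p v else g v) = p a + ∑ v ∈ univ.erase a, g v := by
  rw [← Finset.add_sum_erase _ _ (mem_univ a)]
  simp only [if_pos rfl]
  congr 1
  exact Finset.sum_congr rfl fun v hv => if_neg (Finset.ne_of_mem_erase hv)

private lemma gb_sum_ite_two (a b : V) (hab : a ≠ b) (p q g : V → ℝ) :
    ∑ v, (if v = a then p v else if v = b then q v else g v)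
      = p a + q b + ∑ v ∈ (univ.erase a).erase b, g v := by
  rw [gb_sum_ite_one]
  have h : ∑ v ∈ univ.erase a, (if v = b then q v else g v)
      = q b + ∑ v ∈ (univ.erase a).erase b, g v := by
    rw [← Finset.add_sum_erase _ _ (Finset.mem_erase.mpr ⟨hab.symm, mem_univ b⟩), if_pos rfl]
    congr 1
    exact Finset.sum_congr rfl fun v hv => if_neg (Finset.ne_of_mem_erase hv)
  rw [h, add_assoc]

private lemma gb_sum_pred {s : Finset V} (P : V → Prop) [DecidablePred P] (g : V → ℝ) :
    ∑ v ∈ s, (if P v then g v else 0) = ∑ v ∈ s.filter P, g v := by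
  rw [Finset.sum_filter]

variable {G : SimpleGraph V}

private lemma gb_cycle_ge (h6 : 6 ≤ G.girth) {a : V} (w : G.Walk a a) (hw : w.IsCycle) :
    6 ≤ w.length := by
  have he : (6 : ℕ∞) ≤ G.egirth := by
    rcases eq_or_ne G.egirth ⊤ with h | h
    · simp [h]
    · rw [← ENat.coe_toNat h]; exact_mod_cast h6
  exact_mod_cast le_egirth.mp he a w hw

private lemma gb_no_tri (h6 : 6 ≤ G.girth) {x y z : V} (hxy : G.Adj x y) (hyz : G.Adj y z)
    (hzx : G.Adj z x) : False := by
  have h5 := gb_cycle_ge h6 (Walk.cons hxy (Walk.cons hyz (Walk.cons hzx Walk.nil)))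
    (by simp [Walk.isCycle_def, Walk.isTrail_def, hxy.ne, hyz.ne, hzx.ne, hxy.ne', hyz.ne',
        hzx.ne'])
  simp at h5

private lemma gb_no_c4 (h6 : 6 ≤ G.girth) {x y z u : V} (h1 : G.Adj x y) (h2 : G.Adj y z)
    (h3 : G.Adj z u) (h4 : G.Adj u x) (hxz : x ≠ z) (hyu : y ≠ u) : False := by
  have h5 := gb_cycle_ge h6 (Walk.cons h1 (Walk.cons h2 (Walk.cons h3 (Walk.cons h4 Walk.nil))))
    (by simp [Walk.isCycle_def, Walk.isTrail_def, h1.ne, h2.ne, h3.ne, h4.ne, h1.ne', h2.ne',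
        h3.ne', h4.ne', hxz, hyu, hxz.symm, hyu.symm])
  simp at h5

private lemma gb_no_c5 (h6 : 6 ≤ G.girth) {x y z u v : V} (h1 : G.Adj x y) (h2 : G.Adj y z)
    (h3 : G.Adj z u) (h4 : G.Adj u v) (h5 : G.Adj v x)
    (hxz : x ≠ z) (hxu : x ≠ u) (hyu : y ≠ u) (hyv : y ≠ v) (hzv : z ≠ v) : False := by
  have hh := gb_cycle_ge h6
    (Walk.cons h1 (Walk.cons h2 (Walk.cons h3 (Walk.cons h4 (Walk.cons h5 Walk.nil)))))
    (by simp [Walk.isCycle_def, Walk.isTrail_def, h1.ne, h2.ne, h3.ne, h4.ne, h5.ne, h1.ne',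
        h2.ne', h3.ne', h4.ne', h5.ne', hxz, hxu, hyu, hyv, hzv, hxz.symm, hxu.symm, hyu.symm,
        hyv.symm, hzv.symm])
  simp at hh

private lemma gb_exists_mid {a b : V} (p : G.Walk a b) (hp : p.length = 2) :
    ∃ c, G.Adj a c ∧ G.Adj c b := by
  cases p with
  | nil => simp at hp
  | cons h q =>
    cases q with
    | nil => simp at hp
    | cons h' q' =>
      cases q' with
      | nil => exact ⟨_, h, h'⟩
      | cons h'' q'' => simp at hp

private lemma gb_dist_two (hconn : G.Connected) {a b : V} (hne : a ≠ b) (hnadj : ¬ G.Adj a b)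
    {c : V} (h1 : G.Adj a c) (h2 : G.Adj c b) : G.dist a b = 2 := by
  have hub : G.dist a b ≤ 2 := by
    have := SimpleGraph.dist_le (Walk.cons h1 (Walk.cons h2 Walk.nil)) (G := G)
    simpa using this
  have h0 : G.dist a b ≠ 0 := fun h => hne (hconn.dist_eq_zero_iff.mp h)
  have h1' : G.dist a b ≠ 1 := fun h => hnadj (dist_eq_one_iff_adj.mp h)
  omega

private lemma gb_dist_three (hconn : G.Connected) {a b : V} (hne : a ≠ b) (hnadj : ¬ G.Adj a b)
    (hmid : ∀ c, G.Adj a c → G.Adj c b → False)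
    {c d : V} (h1 : G.Adj a c) (h2 : G.Adj c d) (h3 : G.Adj d b) : G.dist a b = 3 := by
  have hub : G.dist a b ≤ 3 := by
    have := SimpleGraph.dist_le (Walk.cons h1 (Walk.cons h2 (Walk.cons h3 Walk.nil))) (G := G)
    simpa using this
  have h0 : G.dist a b ≠ 0 := fun h => hne (hconn.dist_eq_zero_iff.mp h)
  have h1' : G.dist a b ≠ 1 := fun h => hnadj (dist_eq_one_iff_adj.mp h)
  have h2' : G.dist a b ≠ 2 := by
    intro h
    obtain ⟨p, hp⟩ := (hconn a b).exists_walk_length_eq_dist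
    rw [h] at hp
    obtain ⟨c, hc1, hc2⟩ := gb_exists_mid p hp
    exact hmid c hc1 hc2
  omega

end GBAux

section GBW
set_option linter.unusedSectionVars false
set_option maxHeartbeats 1000000

open SimpleGraph Finset RicciWeighted

variable {V : Type*} [DecidableEq V] [Fintype V] {G : SimpleGraph V} [DecidableRel G.Adj]

private lemma gb_W_eq (hconn : G.Connected) (h6 : 6 ≤ G.girth) {x y : V} (hxy : G.Adj x y)
    {α : ℝ} (hα : α ∈ Set.Ioo (1/2 : ℝ) 1) :
    W (fun a b => (G.dist a b : ℝ)) (mu G (fun _ _ => 1) α x) (mu G (fun _ _ => 1) α y)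
      = 1 + 2*(1-α)*(1 - 1/(G.degree x : ℝ) - 1/(G.degree y : ℝ)) := by
  classical
  obtain ⟨hα1, hα2⟩ := hα
  set ε : ℝ := 1 - α with hεdef
  have hε0 : 0 < ε := by simp only [hεdef]; linarith
  have hε2 : ε < 1/2 := by simp only [hεdef]; linarith
  -- degrees
  have hdx : 0 < G.degree x := G.degree_pos_iff_exists_adj x |>.mpr ⟨y, hxy⟩
  have hdy : 0 < G.degree y := G.degree_pos_iff_exists_adj y |>.mpr ⟨x, hxy.symm⟩
  set Dx : ℝ := (G.degree x : ℝ) with hDxdef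
  set Dy : ℝ := (G.degree y : ℝ) with hDydef
  have hDx1 : 1 ≤ Dx := by simp only [hDxdef]; exact_mod_cast hdx
  have hDy1 : 1 ≤ Dy := by simp only [hDydef]; exact_mod_cast hdy
  have hDx0 : Dx ≠ 0 := by linarith
  have hDy0 : Dy ≠ 0 := by linarith
  -- the weight and degree functions
  have hdeg : ∀ v : V, deg G (fun _ _ => (1:ℝ)) v = (G.degree v : ℝ) := by
    intro v
    simp [deg, Finset.sum_const, G.card_neighborFinset_eq_degree]
  -- clean form of mu
  have hmux : ∀ u : V, mu G (fun _ _ => (1:ℝ)) α x u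
      = if u = x then α else if G.Adj x u then ε/Dx else 0 := by
    intro u
    simp only [mu, hdeg, mul_one, hεdef, hDxdef]
  have hmuy : ∀ v : V, mu G (fun _ _ => (1:ℝ)) α y v
      = if v = y then α else if G.Adj y v then ε/Dy else 0 := by
    intro v
    simp only [mu, hdeg, mul_one, hεdef, hDydef]
  -- adjacency / distance facts
  have nadjxv : ∀ v, G.Adj y v → v ≠ x → ¬ G.Adj x v := fun v hyv hvx hxv =>
    gb_no_tri h6 hxy hyv hxv.symm
  have nadjuy : ∀ u, G.Adj x u → u ≠ y → ¬ G.Adj u y := fun u hxu huy hadj =>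
    gb_no_tri h6 hxy hadj.symm hxu.symm
  have dxy : G.dist x y = 1 := dist_eq_one_iff_adj.mpr hxy
  have dxv : ∀ v, G.Adj y v → v ≠ x → G.dist x v = 2 := fun v hyv hvx =>
    gb_dist_two hconn (Ne.symm hvx) (nadjxv v hyv hvx) hxy hyv
  have duy : ∀ u, G.Adj x u → u ≠ y → G.dist u y = 2 := fun u hxu huy =>
    gb_dist_two hconn huy (nadjuy u hxu huy) hxu.symm hxy
  have duv3 : ∀ u v, G.Adj x u → u ≠ y → G.Adj y v → v ≠ x → G.dist u v = 3 := by
    intro u v hxu huy hyv hvx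
    have hne : u ≠ v := by
      rintro rfl
      exact gb_no_tri h6 hxy hyv hxu.symm
    have hnadj : ¬ G.Adj u v := fun huv =>
      gb_no_c4 h6 hxu huv hyv.symm hxy.symm (Ne.symm hvx) huy
    have hmid : ∀ c, G.Adj u c → G.Adj c v → False := by
      intro c hc1 hc2
      by_cases hcx : c = x
      · exact nadjxv v hyv hvx (hcx ▸ hc2)
      · by_cases hcy : c = y
        · exact nadjuy u hxu huy (hcy ▸ hc1)
        · exact gb_no_c5 h6 hxu hc1 hc2 hyv.symm hxy.symm
            (Ne.symm hcx) (Ne.symm hvx) hne huy (fun h => hcy h)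
    exact gb_dist_three hconn hne hnadj hmid hxu.symm hxy hyv
  -- finset facts
  have hNyx : ((univ.erase x).erase y).filter (fun v => G.Adj y v)
      = (G.neighborFinset y).erase x := by
    ext v
    simp only [mem_filter, mem_erase, mem_univ, and_true, mem_neighborFinset]
    constructor
    · rintro ⟨⟨h1, h2⟩, h3⟩; exact ⟨h2, h3⟩
    · rintro ⟨h1, h2⟩; exact ⟨⟨h2.ne', h1⟩, h2⟩
  have hNx : (univ.erase x).filter (fun u => G.Adj x u) = G.neighborFinset x := by
    ext u
    simp only [mem_filter, mem_erase, mem_univ, and_true, mem_neighborFinset]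
    exact ⟨fun h => h.2, fun h => ⟨h.ne', h⟩⟩
  have hNy : (univ.erase y).filter (fun v => G.Adj y v) = G.neighborFinset y := by
    ext v
    simp only [mem_filter, mem_erase, mem_univ, and_true, mem_neighborFinset]
    exact ⟨fun h => h.2, fun h => ⟨h.ne', h⟩⟩
  have hcNyx : (((G.neighborFinset y).erase x).card : ℝ) = Dy - 1 := by
    rw [Finset.card_erase_of_mem (by rw [mem_neighborFinset]; exact hxy.symm)]
    rw [G.card_neighborFinset_eq_degree]
    rw [Nat.cast_sub hdy, Nat.cast_one]
  have hcNxy : (((G.neighborFinset x).erase y).card : ℝ) = Dx - 1 := by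
    rw [Finset.card_erase_of_mem (by rw [mem_neighborFinset]; exact hxy)]
    rw [G.card_neighborFinset_eq_degree]
    rw [Nat.cast_sub hdx, Nat.cast_one]
  have hcNx : ((G.neighborFinset x).card : ℝ) = Dx := by
    rw [G.card_neighborFinset_eq_degree]
  have hcNy : ((G.neighborFinset y).card : ℝ) = Dy := by
    rw [G.card_neighborFinset_eq_degree]

  -- the coupling
  set A : V → V → ℝ := fun u v =>
    if u = x then
      (if v = x then ε/Dy else if v = y then 1-2*ε else if G.Adj y v then ε/Dy else 0)
    else if v = y ∧ G.Adj x u then ε/Dx else 0 with hA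
  have hmarg1 : ∀ u : V, ∑ v, A u v = mu G (fun _ _ => (1:ℝ)) α x u := by
    intro u
    rw [hmux u]
    by_cases hu : u = x
    · subst hu
      have e1 : (∑ v, A u v)
          = ε/Dy + (1-2*ε) + ∑ v ∈ (univ.erase u).erase y,
              (if G.Adj y v then ε/Dy else 0) := by
        rw [← gb_sum_ite_two u y hxy.ne (fun _ => ε/Dy) (fun _ => 1-2*ε)
          (fun v => if G.Adj y v then ε/Dy else 0)]
        refine Finset.sum_congr rfl fun v _ => ?_
        simp only [hA]
        simp
      rw [e1, gb_sum_pred, hNyx, Finset.sum_const, nsmul_eq_mul, hcNyx]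
      simp only [if_pos rfl, eq_self_iff_true, ↓reduceIte]
      rw [hεdef]
      field_simp
      ring
    · have e1 : (∑ v, A u v) = ∑ v, (if v = y ∧ G.Adj x u then ε/Dx else 0) := by
        refine Finset.sum_congr rfl fun v _ => ?_
        simp only [hA]
        rw [if_neg hu]
      rw [e1]
      by_cases hadj : G.Adj x u
      · simp only [hadj, and_true]
        rw [Finset.sum_ite_eq' univ y (fun _ => ε/Dx)]
        simp [hu, hadj]
      · simp [hadj, hu]
  have hmarg2 : ∀ v : V, ∑ u, A u v = mu G (fun _ _ => (1:ℝ)) α y v := by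
    intro v
    rw [hmuy v]
    have e1 : (∑ u, A u v)
        = (if v = x then ε/Dy else if v = y then 1-2*ε else if G.Adj y v then ε/Dy else 0)
          + ∑ u ∈ univ.erase x, (if v = y ∧ G.Adj x u then ε/Dx else 0) := by
      rw [← gb_sum_ite_one x
        (fun _ => if v = x then ε/Dy else if v = y then 1-2*ε else if G.Adj y v then ε/Dy else 0)
        (fun u => if v = y ∧ G.Adj x u then ε/Dx else 0)]
      try exact Finset.sum_congr rfl fun u _ => by simp only [hA]
    rw [e1]
    by_cases hv : v = y
    · subst hv
      rw [if_neg hxy.ne', if_pos rfl]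
      have e3 : (∑ u ∈ univ.erase x, (if v = v ∧ G.Adj x u then ε/Dx else 0))
          = ∑ u ∈ univ.erase x, (if G.Adj x u then ε/Dx else 0) :=
        Finset.sum_congr rfl fun u _ => by simp
      rw [e3, gb_sum_pred, hNx, Finset.sum_const, nsmul_eq_mul, hcNx]
      simp only [if_pos rfl, eq_self_iff_true, ↓reduceIte]
      rw [hεdef]
      field_simp
      ring
    · have e3 : (∑ u ∈ univ.erase x, (if v = y ∧ G.Adj x u then ε/Dx else 0)) = 0 :=
        Finset.sum_eq_zero fun u _ => by simp [hv]
      rw [e3, add_zero]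
      by_cases hvx : v = x
      · subst hvx
        simp [hxy.symm, hv]
      · simp [hv, hvx]
  have hIcc : ∀ u v : V, A u v ∈ Set.Icc (0:ℝ) 1 := by
    intro u v
    have h1a : (0:ℝ) ≤ ε/Dy := by positivity
    have h1b : ε/Dy ≤ 1 := by rw [div_le_one (by linarith)]; linarith
    have h2a : (0:ℝ) ≤ ε/Dx := by positivity
    have h2b : ε/Dx ≤ 1 := by rw [div_le_one (by linarith)]; linarith
    simp only [hA, Set.mem_Icc]
    split_ifs <;> constructor <;> first | linarith | norm_num
  have hcoupling : IsCoupling (mu G (fun _ _ => (1:ℝ)) α x) (mu G (fun _ _ => (1:ℝ)) α y) A :=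
    ⟨hIcc, Set.toFinite _,
      fun u => by rw [finsum_eq_sum_of_fintype]; exact hmarg1 u,
      fun v => by rw [finsum_eq_sum_of_fintype]; exact hmarg2 v⟩
  have hcost : cost (fun a b => (G.dist a b : ℝ)) A
      = 1 - 2*ε + (Dy-1)*(ε/Dy*2) + (Dx-1)*(ε/Dx*2) := by
    rw [cost, finsum_eq_sum_of_fintype, Fintype.sum_prod_type]
    have step1 : (∑ u : V, ∑ v : V, A u v * ((G.dist u v : ℕ) : ℝ))
        = ∑ u : V, (if u = x then
            (∑ v : V, ((if v = x then ε/Dy else if v = y then 1-2*ε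
              else if G.Adj y v then ε/Dy else 0) * ((G.dist x v : ℕ) : ℝ)))
          else (∑ v : V, ((if v = y ∧ G.Adj x u then ε/Dx else 0) * ((G.dist u v : ℕ) : ℝ)))) := by
      refine Finset.sum_congr rfl fun u _ => ?_
      by_cases hu : u = x
      · subst hu
        rw [if_pos rfl]
        refine Finset.sum_congr rfl fun v _ => ?_
        simp only [hA]
        simp
      · rw [if_neg hu]
        refine Finset.sum_congr rfl fun v _ => ?_
        simp only [hA]
        rw [if_neg hu]
    rw [step1]
    rw [gb_sum_ite_one x
      (fun _ => (∑ v : V, ((if v = x then ε/Dy else if v = y then 1-2*ε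
          else if G.Adj y v then ε/Dy else 0) * ((G.dist x v : ℕ) : ℝ))))
      (fun u => (∑ v : V, ((if v = y ∧ G.Adj x u then ε/Dx else 0) * ((G.dist u v : ℕ) : ℝ))))]
    have hP1 : (∑ v : V, ((if v = x then ε/Dy else if v = y then 1-2*ε
        else if G.Adj y v then ε/Dy else 0) * ((G.dist x v : ℕ) : ℝ)))
        = 1 - 2*ε + (Dy-1)*(ε/Dy*2) := by
      have e1 : (∑ v : V, ((if v = x then ε/Dy else if v = y then 1-2*ε
          else if G.Adj y v then ε/Dy else 0) * ((G.dist x v : ℕ) : ℝ)))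
          = ∑ v : V, (if v = x then (ε/Dy) * ((G.dist x v : ℕ) : ℝ)
            else if v = y then (1-2*ε) * ((G.dist x v : ℕ) : ℝ)
            else (if G.Adj y v then (ε/Dy) * ((G.dist x v : ℕ) : ℝ) else 0)) :=
        Finset.sum_congr rfl fun v _ => by split_ifs <;> ring
      rw [e1, gb_sum_ite_two x y hxy.ne
        (fun v => (ε/Dy) * ((G.dist x v : ℕ) : ℝ))
        (fun v => (1-2*ε) * ((G.dist x v : ℕ) : ℝ))
        (fun v => if G.Adj y v then (ε/Dy) * ((G.dist x v : ℕ) : ℝ) else 0)]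
      rw [gb_sum_pred, hNyx]
      have e2 : (∑ v ∈ (G.neighborFinset y).erase x, (ε/Dy) * ((G.dist x v : ℕ) : ℝ))
          = ∑ _v ∈ (G.neighborFinset y).erase x, (ε/Dy) * 2 := by
        refine Finset.sum_congr rfl fun v hv => ?_
        obtain ⟨hvx, hvy⟩ := Finset.mem_erase.mp hv
        rw [dxv v (by rwa [mem_neighborFinset] at hvy) hvx]
        norm_num
      rw [e2, Finset.sum_const, nsmul_eq_mul, hcNyx, SimpleGraph.dist_self, dxy]
      push_cast
      ring
    have hP2 : (∑ u ∈ univ.erase x,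
        (∑ v : V, ((if v = y ∧ G.Adj x u then ε/Dx else 0) * ((G.dist u v : ℕ) : ℝ))))
        = (Dx-1)*(ε/Dx*2) := by
      have e1 : ∀ u : V, (∑ v : V, ((if v = y ∧ G.Adj x u then ε/Dx else 0)
          * ((G.dist u v : ℕ) : ℝ)))
          = (if G.Adj x u then (ε/Dx) * ((G.dist u y : ℕ) : ℝ) else 0) := by
        intro u
        by_cases hadj : G.Adj x u
        · rw [if_pos hadj]
          have e0 : ∀ v : V, ((if v = y ∧ G.Adj x u then ε/Dx else 0) * ((G.dist u v : ℕ) : ℝ))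
              = (if v = y then (ε/Dx) * ((G.dist u v : ℕ) : ℝ) else 0) := fun v => by
            by_cases hv : v = y <;> simp [hv, hadj]
          rw [Finset.sum_congr rfl fun v _ => e0 v]
          rw [Finset.sum_ite_eq' univ y (fun v => (ε/Dx) * ((G.dist u v : ℕ) : ℝ))]
          simp
        · rw [if_neg hadj]
          exact Finset.sum_eq_zero fun v _ => by simp [hadj]
      rw [Finset.sum_congr rfl fun u _ => e1 u]
      rw [gb_sum_pred, hNx]
      rw [← Finset.add_sum_erase _ _
        (show y ∈ G.neighborFinset x by rw [mem_neighborFinset]; exact hxy)]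
      have e2 : (∑ u ∈ (G.neighborFinset x).erase y, (ε/Dx) * ((G.dist u y : ℕ) : ℝ))
          = ∑ _u ∈ (G.neighborFinset x).erase y, (ε/Dx) * 2 := by
        refine Finset.sum_congr rfl fun u hu => ?_
        obtain ⟨huy, hux⟩ := Finset.mem_erase.mp hu
        rw [duy u (by rwa [mem_neighborFinset] at hux) huy]
        norm_num
      rw [e2, Finset.sum_const, nsmul_eq_mul, hcNxy, SimpleGraph.dist_self]
      push_cast
      ring
    rw [hP1, hP2]
    try ring
  -- the Lipschitz function
  set f : V → ℝ := fun z => if z = x then 1 else if z = y then 0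
      else if G.Adj x z then 2 else if G.Adj y z then -1 else 0 with hf
  have fx : f x = 1 := by simp [hf]
  have fy : f y = 0 := by simp [hf, hxy.ne']
  have fN : ∀ u, G.Adj x u → u ≠ y → f u = 2 := fun u hu huy => by
    simp [hf, hu.ne', huy, hu]
  have fM : ∀ v, G.Adj y v → v ≠ x → f v = -1 := fun v hv hvx => by
    simp [hf, hvx, hv.ne', nadjxv v hv hvx, hv]
  have key : ∀ u v : V, (u = x ∨ G.Adj x u) → (v = y ∨ G.Adj y v) →
      f u - f v ≤ ((G.dist u v : ℕ) : ℝ) := by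
    intro u v hu hv
    rcases hu with hu | hu
    · rcases hv with hv | hv
      · rw [hu, hv, fx, fy, dxy]; norm_num
      · rw [hu]
        by_cases hvx : v = x
        · rw [hvx, sub_self]; positivity
        · rw [fx, fM v hv hvx, dxv v hv hvx]; norm_num
    · rcases eq_or_ne u y with huy | huy
      · rw [huy]
        rcases hv with hv | hv
        · rw [hv, fy, sub_self]; positivity
        · by_cases hvx : v = x
          · rw [hvx, fy, fx]
            have h0 : (0:ℝ) ≤ ((G.dist y x : ℕ) : ℝ) := by positivity
            linarith
          · rw [fy, fM v hv hvx, dist_eq_one_iff_adj.mpr hv]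
            norm_num
      · rcases hv with hv | hv
        · rw [hv, fN u hu huy, fy, duy u hu huy]; norm_num
        · by_cases hvx : v = x
          · rw [hvx, fN u hu huy, fx, dist_eq_one_iff_adj.mpr hu.symm]
            norm_num
          · rw [fN u hu huy, fM v hv hvx, duv3 u v hu huy hv hvx]
            norm_num
  -- lower bound
  have hlb : ∀ r ∈ {r : ℝ | ∃ B : V → V → ℝ,
      IsCoupling (mu G (fun _ _ => (1:ℝ)) α x) (mu G (fun _ _ => (1:ℝ)) α y) B
        ∧ cost (fun a b => ((G.dist a b : ℕ) : ℝ)) B = r},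
      1 + 2*ε*(1 - 1/Dx - 1/Dy) ≤ r := by
    rintro r ⟨B, hB, rfl⟩
    have hB0 : ∀ u v, 0 ≤ B u v := fun u v => (hB.mem_Icc u v).1
    have hrow : ∀ u, ∑ v, B u v = mu G (fun _ _ => (1:ℝ)) α x u := fun u => by
      rw [← finsum_eq_sum_of_fintype]; exact hB.marginal_fst u
    have hcol : ∀ v, ∑ u, B u v = mu G (fun _ _ => (1:ℝ)) α y v := fun v => by
      rw [← finsum_eq_sum_of_fintype]; exact hB.marginal_snd v
    have hsupp1 : ∀ u v, 0 < B u v → (u = x ∨ G.Adj x u) := by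
      intro u v h
      by_contra hcon
      push_neg at hcon
      have h1 : mu G (fun _ _ => (1:ℝ)) α x u = 0 := by
        rw [hmux u, if_neg hcon.1, if_neg hcon.2]
      have h2 : B u v ≤ ∑ v', B u v' :=
        Finset.single_le_sum (fun i _ => hB0 u i) (mem_univ v)
      rw [hrow u, h1] at h2
      linarith
    have hsupp2 : ∀ u v, 0 < B u v → (v = y ∨ G.Adj y v) := by
      intro u v h
      by_contra hcon
      push_neg at hcon
      have h1 : mu G (fun _ _ => (1:ℝ)) α y v = 0 := by
        rw [hmuy v, if_neg hcon.1, if_neg hcon.2]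
      have h2 : B u v ≤ ∑ u', B u' v :=
        Finset.single_le_sum (fun i _ => hB0 i v) (mem_univ u)
      rw [hcol v, h1] at h2
      linarith
    have hSx : ∑ u, (mu G (fun _ _ => (1:ℝ)) α x u) * f u = α + (Dx-1)*(ε/Dx*2) := by
      have e1 : ∀ u : V, (mu G (fun _ _ => (1:ℝ)) α x u) * f u
          = if u = x then α * f u else (if G.Adj x u then (ε/Dx) * f u else 0) := fun u => by
        rw [hmux u]; split_ifs <;> ring
      rw [Finset.sum_congr rfl fun u _ => e1 u]
      rw [gb_sum_ite_one x (fun u => α * f u) (fun u => if G.Adj x u then (ε/Dx) * f u else 0)]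
      rw [gb_sum_pred, hNx]
      rw [← Finset.add_sum_erase _ _ (show y ∈ G.neighborFinset x by
        rw [mem_neighborFinset]; exact hxy)]
      have e2 : ∑ u ∈ (G.neighborFinset x).erase y, (ε/Dx) * f u
          = ∑ _u ∈ (G.neighborFinset x).erase y, (ε/Dx) * 2 := by
        refine Finset.sum_congr rfl fun u hu => ?_
        obtain ⟨huy, hux⟩ := Finset.mem_erase.mp hu
        rw [fN u (by rwa [mem_neighborFinset] at hux) huy]
      rw [e2, Finset.sum_const, nsmul_eq_mul, hcNxy, fx, fy]
      ring
    have hSy : ∑ v, (mu G (fun _ _ => (1:ℝ)) α y v) * f v = ε/Dy + (Dy-1)*(ε/Dy*(-1)) := by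
      have e1 : ∀ v : V, (mu G (fun _ _ => (1:ℝ)) α y v) * f v
          = if v = y then α * f v else (if G.Adj y v then (ε/Dy) * f v else 0) := fun v => by
        rw [hmuy v]; split_ifs <;> ring
      rw [Finset.sum_congr rfl fun v _ => e1 v]
      rw [gb_sum_ite_one y (fun v => α * f v) (fun v => if G.Adj y v then (ε/Dy) * f v else 0)]
      rw [gb_sum_pred, hNy]
      rw [← Finset.add_sum_erase _ _ (show x ∈ G.neighborFinset y by
        rw [mem_neighborFinset]; exact hxy.symm)]
      have e2 : ∑ v ∈ (G.neighborFinset y).erase x, (ε/Dy) * f v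
          = ∑ _v ∈ (G.neighborFinset y).erase x, (ε/Dy) * (-1) := by
        refine Finset.sum_congr rfl fun v hv => ?_
        obtain ⟨hvx, hvy⟩ := Finset.mem_erase.mp hv
        rw [fM v (by rwa [mem_neighborFinset] at hvy) hvx]
      rw [e2, Finset.sum_const, nsmul_eq_mul, hcNyx, fx, fy]
      ring
    have hlow : (∑ u, ∑ v, B u v * (f u - f v))
        ≤ ∑ u, ∑ v, B u v * ((G.dist u v : ℕ) : ℝ) := by
      refine Finset.sum_le_sum fun u _ => Finset.sum_le_sum fun v _ => ?_
      rcases eq_or_lt_of_le (hB0 u v) with h | h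
      · rw [← h]; simp
      · exact mul_le_mul_of_nonneg_left (key u v (hsupp1 u v h) (hsupp2 u v h)) h.le
    have hexp : (∑ u, ∑ v, B u v * (f u - f v))
        = (∑ u, (mu G (fun _ _ => (1:ℝ)) α x u) * f u)
          - (∑ v, (mu G (fun _ _ => (1:ℝ)) α y v) * f v) := by
      have e1 : (∑ u, ∑ v, B u v * (f u - f v))
          = (∑ u, ∑ v, B u v * f u) - (∑ u, ∑ v, B u v * f v) := by
        rw [← Finset.sum_sub_distrib]
        refine Finset.sum_congr rfl fun u _ => ?_
        rw [← Finset.sum_sub_distrib]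
        refine Finset.sum_congr rfl fun v _ => ?_
        ring
      rw [e1]
      congr 1
      · refine Finset.sum_congr rfl fun u _ => ?_
        rw [← Finset.sum_mul, hrow u]
      · rw [Finset.sum_comm]
        refine Finset.sum_congr rfl fun v _ => ?_
        rw [← Finset.sum_mul, hcol v]
    have hcostB : cost (fun a b => ((G.dist a b : ℕ) : ℝ)) B
        = ∑ u, ∑ v, B u v * ((G.dist u v : ℕ) : ℝ) := by
      rw [cost, finsum_eq_sum_of_fintype, Fintype.sum_prod_type]
    have hfin : α + (Dx-1)*(ε/Dx*2) - (ε/Dy + (Dy-1)*(ε/Dy*(-1)))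
        = 1 + 2*ε*(1 - 1/Dx - 1/Dy) := by
      rw [hεdef]; field_simp; ring
    rw [hcostB]
    rw [hexp, hSx, hSy] at hlow
    linarith
  have hmem : (1 - 2*ε + (Dy-1)*(ε/Dy*2) + (Dx-1)*(ε/Dx*2)) ∈ {r : ℝ | ∃ B : V → V → ℝ,
      IsCoupling (mu G (fun _ _ => (1:ℝ)) α x) (mu G (fun _ _ => (1:ℝ)) α y) B
        ∧ cost (fun a b => ((G.dist a b : ℕ) : ℝ)) B = r} := ⟨A, hcoupling, hcost⟩
  have hval : 1 - 2*ε + (Dy-1)*(ε/Dy*2) + (Dx-1)*(ε/Dx*2) = 1 + 2*ε*(1 - 1/Dx - 1/Dy) := by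
    field_simp; ring
  rw [RicciWeighted.W]
  apply le_antisymm
  · exact hval ▸ (csInf_le ⟨1 + 2*ε*(1 - 1/Dx - 1/Dy), fun r hr => hlb r hr⟩ hmem)
  · exact le_csInf ⟨_, hmem⟩ hlb

private lemma gb_ricci_value (hconn : G.Connected) (h6 : 6 ≤ G.girth) {x y : V}
    (hxy : G.Adj x y) {k : ℝ}
    (hk : IsRicci G (fun a b => ((G.dist a b : ℕ) : ℝ)) (fun _ _ => 1) x y k) :
    k = 2/(G.degree x : ℝ) + 2/(G.degree y : ℝ) - 2 := by
  have hdx : 0 < G.degree x := G.degree_pos_iff_exists_adj x |>.mpr ⟨y, hxy⟩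
  have hdy : 0 < G.degree y := G.degree_pos_iff_exists_adj y |>.mpr ⟨x, hxy.symm⟩
  have hDx1 : 1 ≤ (G.degree x : ℝ) := by exact_mod_cast hdx
  have hDy1 : 1 ≤ (G.degree y : ℝ) := by exact_mod_cast hdy
  have hdxy : G.dist x y = 1 := SimpleGraph.dist_eq_one_iff_adj.mpr hxy
  have hmem : Set.Ioo (1/2 : ℝ) 1 ∈ nhdsWithin (1:ℝ) (Set.Iio 1) := by
    rw [← Set.Ioi_inter_Iio]
    exact Filter.inter_mem (mem_nhdsWithin_of_mem_nhds (Ioi_mem_nhds (by norm_num)))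
      self_mem_nhdsWithin
  have heq : (fun _ : ℝ => 2/(G.degree x : ℝ) + 2/(G.degree y : ℝ) - 2)
      =ᶠ[nhdsWithin (1:ℝ) (Set.Iio 1)]
      (fun α : ℝ => kappaAlpha G (fun a b => ((G.dist a b : ℕ) : ℝ)) (fun _ _ => 1) α x y
        / (1 - α)) := by
    refine Filter.eventuallyEq_of_mem hmem fun α hα => ?_
    have hα1 : 1 - α ≠ 0 := by have := hα.2; intro h; simp only [Set.mem_Ioo] at hα; linarith
    rw [kappaAlpha, gb_W_eq hconn h6 hxy hα]
    simp only [hdxy, Nat.cast_one, div_one]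
    field_simp
    ring
  have htend : Filter.Tendsto
      (fun α : ℝ => kappaAlpha G (fun a b => ((G.dist a b : ℕ) : ℝ)) (fun _ _ => 1) α x y
        / (1 - α))
      (nhdsWithin (1:ℝ) (Set.Iio 1)) (nhds (2/(G.degree x : ℝ) + 2/(G.degree y : ℝ) - 2)) :=
    Filter.Tendsto.congr' heq tendsto_const_nhds
  exact tendsto_nhds_unique hk htend

end GBW

open SimpleGraph Finset in
open RicciWeighted in
/-- **Gauss–Bonnet.** For a finite connected simple graph `G` with girth
at least `6`, equipped with uniform edge lengths `d ≡ 1` (i.e. `d` is the usual graph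
distance) and uniform weights `w ≡ 1`, the total Lin–Lu–Yau curvature equals the Euler
characteristic: `K(G) = χ(G) = 2 − 2g(G)` where `g(G) = |E| − |V| + 1`; equivalently
`K(G) = 2|V| − 2|E|`. -/
theorem gauss_bonnet_of_girth_ge_six
    {V : Type*} [DecidableEq V] [Fintype V] (G : SimpleGraph V) [DecidableRel G.Adj]
    (hconn : G.Connected)
    (hgirth : 6 ≤ G.girth)
    (κ : V → V → ℝ) (hκ_symm : ∀ x y : V, κ x y = κ y x)
    (hκ : ∀ x y : V, G.Adj x y →
      IsRicci G (fun a b => (G.dist a b : ℝ)) (fun _ _ => 1) x y (κ x y)) :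
    (∑ e ∈ G.edgeFinset, Sym2.lift ⟨κ, hκ_symm⟩ e) =
        2 - 2 * ((G.edgeFinset.card : ℝ) - Fintype.card V + 1) ∧
      (∑ e ∈ G.edgeFinset, Sym2.lift ⟨κ, hκ_symm⟩ e) =
        2 * (Fintype.card V : ℝ) - 2 * G.edgeFinset.card := by
  have hhasedge : ∃ a b : V, G.Adj a b := by
    have hncyc : ¬ G.IsAcyclic := by
      intro h
      have h0 : G.girth = 0 := h.girth_eq_zero
      omega
    obtain ⟨a, w, hw, -⟩ := (SimpleGraph.exists_egirth_eq_length).mpr hncyc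
    cases w with
    | nil => exact absurd hw (by simp [Walk.isCycle_def])
    | cons h q => exact ⟨_, _, h⟩
  have hdegpos : ∀ v : V, 0 < G.degree v := by
    intro v
    obtain ⟨a, b, hab⟩ := hhasedge
    rcases eq_or_ne v a with rfl | hva
    · exact (G.degree_pos_iff_exists_adj v).mpr ⟨b, hab⟩
    · obtain ⟨p⟩ := hconn v a
      cases p with
      | nil => exact absurd rfl hva
      | cons h q => exact (G.degree_pos_iff_exists_adj v).mpr ⟨_, h⟩
  have hκval : ∀ x y : V, G.Adj x y → κ x y = 2/(G.degree x:ℝ) + 2/(G.degree y:ℝ) - 2 :=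
    fun x y hxy => gb_ricci_value hconn hgirth hxy (hκ x y hxy)
  have hsum : (∑ e ∈ G.edgeFinset, Sym2.lift ⟨κ, hκ_symm⟩ e)
      = 2 * (Fintype.card V : ℝ) - 2 * G.edgeFinset.card := by
    have step1 : (∑ e ∈ G.edgeFinset, Sym2.lift ⟨κ, hκ_symm⟩ e)
        = ∑ e ∈ G.edgeFinset, ((∑ v : V, if v ∈ e then 2/(G.degree v:ℝ) else 0) - 2) := by
      refine Finset.sum_congr rfl fun e he => ?_
      induction e using Sym2.ind with
      | _ a b =>
        have hab : G.Adj a b := by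
          rwa [SimpleGraph.mem_edgeFinset, SimpleGraph.mem_edgeSet] at he
        rw [Sym2.lift_mk]
        show κ a b = _
        rw [hκval a b hab]
        have e2 : (∑ v : V, if v ∈ (s(a,b) : Sym2 V) then 2/(G.degree v:ℝ) else 0)
            = 2/(G.degree a:ℝ) + 2/(G.degree b:ℝ) := by
          have e1 : ∀ v : V, (if v ∈ (s(a,b) : Sym2 V) then 2/(G.degree v:ℝ) else 0)
              = if v = a then 2/(G.degree v:ℝ) else if v = b then 2/(G.degree v:ℝ) else 0 := by
            intro v
            simp only [Sym2.mem_iff]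
            by_cases h1 : v = a
            · simp [h1]
            · by_cases h2 : v = b <;> simp [h1, h2]
          rw [Finset.sum_congr rfl fun v _ => e1 v]
          rw [gb_sum_ite_two a b hab.ne (fun v => 2/(G.degree v:ℝ))
            (fun v => 2/(G.degree v:ℝ)) (fun _ => 0)]
          try simp
        rw [e2]
        try ring
    rw [step1, Finset.sum_sub_distrib, Finset.sum_const, Finset.sum_comm]
    have e3 : ∀ v : V, (∑ e ∈ G.edgeFinset, if v ∈ e then 2/(G.degree v:ℝ) else 0)
        = 2 := by
      intro v
      rw [gb_sum_pred (fun e => v ∈ e) (fun _ => 2/(G.degree v:ℝ))]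
      have e4 : ({e ∈ G.edgeFinset | v ∈ e} : Finset (Sym2 V)) = G.incidenceFinset v :=
        (G.incidenceFinset_eq_filter v).symm
      rw [e4, Finset.sum_const, G.card_incidenceFinset_eq_degree, nsmul_eq_mul]
      rw [mul_div_cancel₀]
      exact_mod_cast (hdegpos v).ne'
    rw [Finset.sum_congr rfl fun v _ => e3 v, Finset.sum_const, nsmul_eq_mul,
      Finset.card_univ, nsmul_eq_mul]
    ring
  exact ⟨by rw [hsum]; ring, hsum⟩
end

section
/- Let G = (V, E, d, w) be a locally finite weighted graph, where d(x,y) denotes the shortest weighted distance. For any two distinct vertices x, y ∈ V, the Ricci curvature satisfies κ(x,y) = inf { ∇_{xy} Δf : f ∈ Lip(1), ∇_{yx} f = 1 }, where ∇_{xy} f = (f(x) − f(y))/d(x,y) and Δf(x) = (1/D_x) Σ_{z∼x} w_{xz}(f(z) − f(x)). -/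
open Filter Finset
open scoped Classical

namespace RicciWeighted

/-- The graph Laplacian `Δf(x) = (1/D_x) ∑_{z ∼ x} w_{xz} (f z − f x)`. -/
noncomputable def laplacian {V : Type*} (G : SimpleGraph V)
    [∀ v : V, Fintype (G.neighborSet v)] (w : V → V → ℝ) (f : V → ℝ) (x : V) : ℝ :=
  (1 / deg G w x) * ∑ z ∈ G.neighborFinset x, w x z * (f z - f x)

end RicciWeighted

namespace RicciWeighted
variable {V : Type*}

/-- cost of a path given as a list of vertices -/
def pathCost (c : V → V → ℝ) : List V → ℝ
  | [] => 0
  | [_] => 0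
  | a :: b :: l => c a b + pathCost c (b :: l)

@[simp] lemma pathCost_nil (c : V → V → ℝ) : pathCost c [] = 0 := rfl
@[simp] lemma pathCost_single (c : V → V → ℝ) (a : V) : pathCost c [a] = 0 := rfl
lemma pathCost_cons_cons (c : V → V → ℝ) (a b : V) (l : List V) :
    pathCost c (a :: b :: l) = c a b + pathCost c (b :: l) := rfl

lemma exists_expansion (c : V → V → ℝ) (s : V) (l : List V) :
    ∃ m : List V, m.head? = l.head? ∧ m.getLast? = l.getLast? ∧
      (∀ z ∈ m, z ∈ l ∨ z = s) ∧
      pathCost c m ≤ pathCost (fun u v => min (c u v) (c u s + c s v)) l := by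
  induction l with
  | nil => exact ⟨[], rfl, rfl, by simp, le_refl 0⟩
  | cons a t ih =>
    rcases t with _ | ⟨b, t'⟩
    · exact ⟨[a], rfl, rfl, by simp, le_refl 0⟩
    · obtain ⟨m, hhead, hlast, hmem, hcost⟩ := ih
      rcases m with _ | ⟨b', m'⟩
      · simp at hhead
      rw [show b' = b from by simpa using hhead] at hlast hmem hcost
      by_cases h : c a b ≤ c a s + c s b
      · refine ⟨a :: b :: m', rfl, ?_, ?_, ?_⟩
        · rw [List.getLast?_cons_cons, hlast, List.getLast?_cons_cons]
        · intro z hz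
          rcases List.mem_cons.1 hz with rfl | hz
          · exact Or.inl List.mem_cons_self
          · rcases hmem z hz with h' | h'
            · exact Or.inl (List.mem_cons_of_mem _ h')
            · exact Or.inr h'
        · rw [pathCost_cons_cons, pathCost_cons_cons]
          have hmin : min (c a b) (c a s + c s b) = c a b := min_eq_left h
          simp only [hmin]
          linarith [hcost]
      · refine ⟨a :: s :: b :: m', rfl, ?_, ?_, ?_⟩
        · rw [List.getLast?_cons_cons, List.getLast?_cons_cons, hlast,
            List.getLast?_cons_cons]
        · intro z hz
          rcases List.mem_cons.1 hz with rfl | hz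
          · exact Or.inl List.mem_cons_self
          rcases List.mem_cons.1 hz with rfl | hz
          · exact Or.inr rfl
          rcases hmem z hz with h' | h'
          · exact Or.inl (List.mem_cons_of_mem _ h')
          · exact Or.inr h'
        · rw [pathCost_cons_cons, pathCost_cons_cons, pathCost_cons_cons]
          have hmin : min (c a b) (c a s + c s b) = c a s + c s b :=
            min_eq_right (le_of_not_ge h)
          simp only [hmin]
          linarith [hcost]

/-- Potential for a conservative cost function on a finite set. -/
lemma exists_potential (S : Finset V) :
    ∀ c : V → V → ℝ,
    (∀ l : List V, (∀ z ∈ l, z ∈ S) → l.head? = l.getLast? → 0 ≤ pathCost c l) →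
    ∃ p : V → ℝ, ∀ a ∈ S, ∀ b ∈ S, p b ≤ p a + c a b := by
  induction S using Finset.induction_on with
  | empty => exact fun c _ => ⟨0, by simp⟩
  | @insert s S₀ hs ih =>
    intro c hcons
    have hcons' : ∀ l : List V, (∀ z ∈ l, z ∈ S₀) → l.head? = l.getLast? →
        0 ≤ pathCost (fun u v => min (c u v) (c u s + c s v)) l := by
      intro l hl hcl
      obtain ⟨m, hh, hlast, hmem, hcost⟩ := exists_expansion c s l
      refine le_trans (hcons m ?_ ?_) hcost
      · intro z hz
        rcases hmem z hz with h' | rfl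
        · exact Finset.mem_insert_of_mem (hl z h')
        · exact Finset.mem_insert_self _ _
      · rw [hh, hlast, hcl]
    obtain ⟨p₀, hp₀⟩ := ih _ hcons'
    have hss : 0 ≤ c s s := by
      have := hcons [s, s] (by simp) (by simp)
      simpa [pathCost] using this
    rcases S₀.eq_empty_or_nonempty with rfl | hne
    · refine ⟨fun _ => 0, ?_⟩
      intro a ha b hb
      simp only [Finset.mem_insert, Finset.notMem_empty, or_false] at ha hb
      subst ha; subst hb; simpa using hss
    · refine ⟨fun u => if u = s then S₀.inf' hne (fun a => p₀ a + c a s) else p₀ u, ?_⟩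
      intro a ha b hb
      rcases Finset.mem_insert.1 ha with rfl | ha₀
      · rcases Finset.mem_insert.1 hb with rfl | hb₀
        · simpa using hss
        · have hbs : b ≠ a := fun h => hs (h ▸ hb₀)
          dsimp only
          rw [if_neg hbs, if_pos rfl]
          obtain ⟨a₀, ha₀m, ha₀e⟩ := S₀.exists_mem_eq_inf' hne (fun z => p₀ z + c z a)
          rw [ha₀e]
          have h1 := hp₀ a₀ ha₀m b hb₀
          have h2 : min (c a₀ b) (c a₀ a + c a b) ≤ c a₀ a + c a b := min_le_right _ _
          have := le_trans h1 (by linarith : p₀ a₀ + min (c a₀ b) (c a₀ a + c a b) ≤ p₀ a₀ + (c a₀ a + c a b))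
          linarith
      · rcases Finset.mem_insert.1 hb with rfl | hb₀
        · have has : a ≠ b := fun h => hs (h ▸ ha₀)
          dsimp only
          rw [if_pos rfl, if_neg has]
          exact Finset.inf'_le _ ha₀
        · have has : a ≠ s := fun h => hs (h ▸ ha₀)
          have hbs : b ≠ s := fun h => hs (h ▸ hb₀)
          dsimp only
          rw [if_neg has, if_neg hbs]
          have h1 := hp₀ a ha₀ b hb₀
          have h2 : min (c a b) (c a s + c s b) ≤ c a b := min_le_left _ _
          linarith
end RicciWeighted
namespace RicciWeighted
variable {V : Type*}

section Metric
variable {G : SimpleGraph V} {d : V → V → ℝ}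

lemma walkLength_nonneg (hd_pos : ∀ x y : V, G.Adj x y → 0 < d x y) {x y : V}
    (p : G.Walk x y) : 0 ≤ walkLength G d p := by
  apply List.sum_nonneg
  intro r hr
  obtain ⟨e, he, rfl⟩ := List.mem_map.1 hr
  exact (hd_pos _ _ e.adj).le

lemma walkLength_append {x y z : V} (p : G.Walk x y) (q : G.Walk y z) :
    walkLength G d (p.append q) = walkLength G d p + walkLength G d q := by
  unfold walkLength
  rw [SimpleGraph.Walk.darts_append, List.map_append, List.sum_append]

lemma dist_le_walkLength (hshort : IsShortestDist G d) {x y : V} (p : G.Walk x y) :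
    d x y ≤ walkLength G d p :=
  (hshort x y).1 ⟨p, rfl⟩

lemma dist_nonneg' (hshort : IsShortestDist G d)
    (hd_pos : ∀ x y : V, G.Adj x y → 0 < d x y) (x y : V) : 0 ≤ d x y :=
  (hshort x y).2 fun _ ⟨p, hp⟩ => hp ▸ walkLength_nonneg hd_pos p

lemma dist_self (hshort : IsShortestDist G d)
    (hd_pos : ∀ x y : V, G.Adj x y → 0 < d x y) (x : V) : d x x = 0 :=
  le_antisymm (by simpa [walkLength] using dist_le_walkLength hshort (SimpleGraph.Walk.nil' x))
    (dist_nonneg' hshort hd_pos x x)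

lemma dist_triangle' (hshort : IsShortestDist G d) (x y z : V) :
    d x z ≤ d x y + d y z := by
  have h1 : ∀ q : G.Walk y z, d x z - walkLength G d q ≤ d x y := by
    intro q
    refine (hshort x y).2 fun r ⟨p, hp⟩ => ?_
    have := dist_le_walkLength hshort (p.append q)
    rw [walkLength_append] at this
    rw [← hp]; linarith
  have h2 : d x z - d x y ≤ d y z := by
    refine (hshort y z).2 fun r ⟨q, hq⟩ => ?_
    have := h1 q
    rw [hq] at this; linarith
  linarith

lemma neighborFinset_nonempty' [∀ v : V, Fintype (G.neighborSet v)]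
    (hconn : G.Connected) {x y : V} (hxy : x ≠ y) :
    (G.neighborFinset x).Nonempty := by
  obtain ⟨p⟩ := hconn.preconnected x y
  cases p with
  | nil => exact absurd rfl hxy
  | cons h q => exact ⟨_, (SimpleGraph.mem_neighborFinset _ _ _).2 h⟩

lemma dist_pos [∀ v : V, Fintype (G.neighborSet v)] (hconn : G.Connected)
    (hshort : IsShortestDist G d) (hd_pos : ∀ x y : V, G.Adj x y → 0 < d x y)
    {x y : V} (hxy : x ≠ y) : 0 < d x y := by
  have hne := neighborFinset_nonempty' hconn hxy
  set c := (G.neighborFinset x).inf' hne (fun z => d x z) with hc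
  have hcpos : 0 < c := by
    rw [hc, Finset.lt_inf'_iff]
    intro b hb
    exact hd_pos x b ((SimpleGraph.mem_neighborFinset _ _ _).1 hb)
  refine lt_of_lt_of_le hcpos ?_
  refine (hshort x y).2 fun r ⟨p, hp⟩ => ?_
  cases p with
  | nil => exact absurd rfl hxy
  | @cons _ b _ h q =>
    have h1 : walkLength G d (SimpleGraph.Walk.cons h q) = d x b + walkLength G d q := by
      unfold walkLength
      rw [SimpleGraph.Walk.darts_cons, List.map_cons, List.sum_cons]
    have h2 : c ≤ d x b :=
      Finset.inf'_le _ ((SimpleGraph.mem_neighborFinset _ _ _).2 h)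
    have h3 := walkLength_nonneg hd_pos q
    rw [← hp, h1]; linarith
end Metric
end RicciWeighted
namespace RicciWeighted
variable {V : Type*}

section Mu
variable {G : SimpleGraph V} [∀ v : V, Fintype (G.neighborSet v)] {w : V → V → ℝ}

lemma deg_pos (hw_pos : ∀ x y : V, G.Adj x y → 0 < w x y) {x : V}
    (hne : (G.neighborFinset x).Nonempty) : 0 < deg G w x :=
  Finset.sum_pos (fun z hz => hw_pos x z ((SimpleGraph.mem_neighborFinset _ _ _).1 hz)) hne

lemma weight_div_deg_le_one (hw_pos : ∀ x y : V, G.Adj x y → 0 < w x y) {x z : V}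
    (hz : G.Adj x z) : w x z / deg G w x ≤ 1 := by
  have hmem : z ∈ G.neighborFinset x := (SimpleGraph.mem_neighborFinset _ _ _).2 hz
  have h1 : w x z ≤ deg G w x :=
    Finset.single_le_sum (f := fun y => w x y)
      (fun i hi => (hw_pos x i ((SimpleGraph.mem_neighborFinset _ _ _).1 hi)).le) hmem
  rw [div_le_one (deg_pos hw_pos ⟨z, hmem⟩)]
  exact h1

lemma mu_nonneg (hw_pos : ∀ x y : V, G.Adj x y → 0 < w x y) {α : ℝ}
    (h0 : 0 ≤ α) (h1 : α ≤ 1) (x z : V) : 0 ≤ mu G w α x z := by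
  unfold mu
  split_ifs with hz hadj
  · exact h0
  · have hd := deg_pos hw_pos ⟨z, (SimpleGraph.mem_neighborFinset _ _ _).2 hadj⟩
    exact div_nonneg (mul_nonneg (by linarith) (hw_pos x z hadj).le) hd.le
  · exact le_refl 0

lemma mu_le_one (hw_pos : ∀ x y : V, G.Adj x y → 0 < w x y) {α : ℝ}
    (h0 : 0 ≤ α) (h1 : α ≤ 1) (x z : V) : mu G w α x z ≤ 1 := by
  unfold mu
  split_ifs with hz hadj
  · exact h1
  · have := weight_div_deg_le_one hw_pos hadj
    have hd := deg_pos hw_pos ⟨z, (SimpleGraph.mem_neighborFinset _ _ _).2 hadj⟩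
    have hww := (hw_pos x z hadj).le
    rw [mul_div_assoc]
    nlinarith [div_nonneg hww hd.le]
  · norm_num

lemma mu_support_subset (α : ℝ) (x : V) :
    Function.support (mu G w α x) ⊆ ↑(insert x (G.neighborFinset x)) := by
  intro z hz
  simp only [Function.mem_support, mu] at hz
  by_cases h1 : z = x
  · simp [h1]
  · by_cases h2 : G.Adj x z
    · simp [(SimpleGraph.mem_neighborFinset _ _ _).2 h2, h2]
    · simp [h1, h2] at hz

lemma sum_mu_mul {U : Finset V} (hU : insert x (G.neighborFinset x) ⊆ U)
    (hw_pos : ∀ x y : V, G.Adj x y → 0 < w x y)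
    (hne : (G.neighborFinset x).Nonempty) (α : ℝ) (f : V → ℝ) :
    ∑ z ∈ U, mu G w α x z * f z = f x + (1 - α) * laplacian G w f x := by
  have hD := deg_pos hw_pos hne
  have hsub : ∀ z ∈ U, z ∉ insert x (G.neighborFinset x) → mu G w α x z * f z = 0 := by
    intro z _ hz
    have : mu G w α x z = 0 := by
      by_contra h
      exact hz (mu_support_subset α x h)
    rw [this, zero_mul]
  rw [← Finset.sum_subset hU hsub]
  have hxnot : x ∉ G.neighborFinset x := by simp
  rw [Finset.sum_insert hxnot]
  have hx : mu G w α x x = α := by simp [mu]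
  have hrest : ∀ z ∈ G.neighborFinset x, mu G w α x z * f z
      = (1 - α) / deg G w x * (w x z * f z) := by
    intro z hz
    have hadj := (SimpleGraph.mem_neighborFinset _ _ _).1 hz
    have hzx : z ≠ x := fun h => (G.irrefl (h ▸ hadj))
    simp only [mu, if_neg hzx, if_pos hadj]
    field_simp
  rw [Finset.sum_congr rfl hrest, ← Finset.mul_sum, hx]
  unfold laplacian
  have hexp : ∑ z ∈ G.neighborFinset x, w x z * (f z - f x)
      = (∑ z ∈ G.neighborFinset x, w x z * f z) - deg G w x * f x := by
    rw [Finset.sum_congr rfl (fun z _ => mul_sub (w x z) (f z) (f x)),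
      Finset.sum_sub_distrib, ← Finset.sum_mul]
    rfl
  rw [hexp]
  field_simp
  ring

lemma sum_mu (hw_pos : ∀ x y : V, G.Adj x y → 0 < w x y) {x : V}
    (hne : (G.neighborFinset x).Nonempty) (α : ℝ) {U : Finset V}
    (hU : insert x (G.neighborFinset x) ⊆ U) :
    ∑ z ∈ U, mu G w α x z = 1 := by
  have := sum_mu_mul (x := x) hU hw_pos hne α (fun _ => 1)
  simpa [laplacian] using this

lemma finsum_mu (hw_pos : ∀ x y : V, G.Adj x y → 0 < w x y) {x : V}
    (hne : (G.neighborFinset x).Nonempty) (α : ℝ) :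
    ∑ᶠ z, mu G w α x z = 1 := by
  rw [finsum_eq_sum_of_support_subset _ (mu_support_subset α x)]
  exact sum_mu hw_pos hne α (le_refl _)

end Mu
end RicciWeighted
namespace RicciWeighted
variable {V : Type*}

section Coupling
variable {μ1 μ2 : V → ℝ} {A : V → V → ℝ}

lemma IsCoupling.nonneg (hA : IsCoupling μ1 μ2 A) (u v : V) : 0 ≤ A u v :=
  (hA.mem_Icc u v).1

lemma row_support_finite (hA : IsCoupling μ1 μ2 A) (u : V) :
    (Function.support (A u)).Finite := by
  have : Function.support (A u) ⊆ (fun v => ((u, v) : V × V)) ⁻¹'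
      (Function.support fun p : V × V => A p.1 p.2) := fun v hv => hv
  exact Set.Finite.subset (Set.Finite.preimage
    (Set.injOn_of_injective (fun a b h => by simpa using h)) hA.finite_support) this

lemma col_support_finite (hA : IsCoupling μ1 μ2 A) (v : V) :
    (Function.support fun u => A u v).Finite := by
  have : (Function.support fun u => A u v) ⊆ (fun u => ((u, v) : V × V)) ⁻¹'
      (Function.support fun p : V × V => A p.1 p.2) := fun u hu => hu
  exact Set.Finite.subset (Set.Finite.preimage
    (Set.injOn_of_injective (fun a b h => by simpa using h)) hA.finite_support) this

lemma row_eq_zero (hA : IsCoupling μ1 μ2 A) {u : V} (hu : μ1 u = 0) (v : V) :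
    A u v = 0 := by
  have hsum := hA.marginal_fst u
  rw [finsum_eq_sum _ (row_support_finite hA u), hu] at hsum
  by_cases hv : v ∈ (row_support_finite hA u).toFinset
  · exact (Finset.sum_eq_zero_iff_of_nonneg fun i _ => hA.nonneg u i).1 hsum v hv
  · by_contra h
    exact hv ((row_support_finite hA u).mem_toFinset.2 h)

lemma col_eq_zero (hA : IsCoupling μ1 μ2 A) {v : V} (hv : μ2 v = 0) (u : V) :
    A u v = 0 := by
  have hsum := hA.marginal_snd v
  rw [finsum_eq_sum _ (col_support_finite hA v), hv] at hsum
  by_cases hu : u ∈ (col_support_finite hA v).toFinset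
  · exact (Finset.sum_eq_zero_iff_of_nonneg fun i _ => hA.nonneg i v).1 hsum u hu
  · by_contra h
    exact hu ((col_support_finite hA v).mem_toFinset.2 h)

lemma entry_le_row (hA : IsCoupling μ1 μ2 A) {U : Finset V} {u : V}
    (hU : ∀ v, A u v ≠ 0 → v ∈ U) {v : V} (hv : v ∈ U) : A u v ≤ μ1 u := by
  have hsum : ∑ z ∈ U, A u z = μ1 u := by
    rw [← hA.marginal_fst u]
    exact (finsum_eq_sum_of_support_subset _ (fun z hz => hU z hz)).symm
  rw [← hsum]
  exact Finset.single_le_sum (fun i _ => hA.nonneg u i) hv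

lemma entry_le_col (hA : IsCoupling μ1 μ2 A) {U : Finset V} {v : V}
    (hU : ∀ u, A u v ≠ 0 → u ∈ U) {u : V} (hu : u ∈ U) : A u v ≤ μ2 v := by
  have hsum : ∑ z ∈ U, A z v = μ2 v := by
    rw [← hA.marginal_snd v]
    exact (finsum_eq_sum_of_support_subset _ (fun z hz => hU z hz)).symm
  rw [← hsum]
  exact Finset.single_le_sum (fun i _ => hA.nonneg i v) hu

/-- the product coupling -/
lemma isCoupling_prod (h1f : (Function.support μ1).Finite)
    (h2f : (Function.support μ2).Finite)
    (h1n : ∀ u, 0 ≤ μ1 u) (h2n : ∀ u, 0 ≤ μ2 u)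
    (h1l : ∀ u, μ1 u ≤ 1) (h2l : ∀ u, μ2 u ≤ 1)
    (h1s : ∑ᶠ u, μ1 u = 1) (h2s : ∑ᶠ u, μ2 u = 1) :
    IsCoupling μ1 μ2 (fun u v => μ1 u * μ2 v) := by
  constructor
  · intro u v
    constructor
    · exact mul_nonneg (h1n u) (h2n v)
    · calc μ1 u * μ2 v ≤ 1 * 1 := by
            apply mul_le_mul (h1l u) (h2l v) (h2n v) zero_le_one
        _ = 1 := one_mul 1
  · apply Set.Finite.subset (Set.Finite.prod h1f h2f)
    intro p hp
    simp only [Function.mem_support] at hp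
    exact ⟨left_ne_zero_of_mul hp, right_ne_zero_of_mul hp⟩
  · intro u
    have h : ∑ᶠ v, μ1 u * μ2 v = μ1 u * ∑ᶠ v, μ2 v := by
      simp only [← smul_eq_mul]
      rw [smul_finsum]
    rw [h, h2s, mul_one]
  · intro v
    rw [← finsum_mul μ1 (μ2 v), h1s, one_mul]

end Coupling
end RicciWeighted
namespace RicciWeighted
variable {V : Type*}

section Optimal
variable {μ1 μ2 : V → ℝ} {A : V → V → ℝ} {U : Finset V} {d : V → V → ℝ}

lemma marginal_sum_row (hA : IsCoupling μ1 μ2 A)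
    (h2 : Function.support μ2 ⊆ ↑U) (u : V) : ∑ v ∈ U, A u v = μ1 u := by
  rw [← hA.marginal_fst u]
  refine (finsum_eq_sum_of_support_subset _ ?_).symm
  intro v hv
  by_contra h
  have : μ2 v = 0 := by
    by_contra h'
    exact h (h2 h')
  exact hv (col_eq_zero hA this u)

lemma marginal_sum_col (hA : IsCoupling μ1 μ2 A)
    (h1 : Function.support μ1 ⊆ ↑U) (v : V) : ∑ u ∈ U, A u v = μ2 v := by
  rw [← hA.marginal_snd v]
  refine (finsum_eq_sum_of_support_subset _ ?_).symm
  intro u hu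
  by_contra h
  have : μ1 u = 0 := by
    by_contra h'
    exact h (h1 h')
  exact hu (row_eq_zero hA this v)

lemma pair_support_subset (hA : IsCoupling μ1 μ2 A)
    (h1 : Function.support μ1 ⊆ ↑U) (h2 : Function.support μ2 ⊆ ↑U) :
    (Function.support fun p : V × V => A p.1 p.2) ⊆ ↑(U ×ˢ U) := by
  intro p hp
  rw [Function.mem_support] at hp
  rw [Finset.coe_product]
  constructor
  · by_contra h
    have : μ1 p.1 = 0 := by
      by_contra h'
      exact h (h1 h')
    exact hp (row_eq_zero hA this p.2)
  · by_contra h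
    have : μ2 p.2 = 0 := by
      by_contra h'
      exact h (h2 h')
    exact hp (col_eq_zero hA this p.1)

lemma cost_eq_sum (hA : IsCoupling μ1 μ2 A)
    (h1 : Function.support μ1 ⊆ ↑U) (h2 : Function.support μ2 ⊆ ↑U) :
    cost d A = ∑ p ∈ U ×ˢ U, A p.1 p.2 * d p.1 p.2 := by
  unfold cost
  refine finsum_eq_sum_of_support_subset _ ?_
  intro p hp
  apply pair_support_subset hA h1 h2
  rw [Function.mem_support] at hp ⊢
  exact fun h => hp (by rw [h, zero_mul])

lemma exists_optimal_coupling (μ1 μ2 : V → ℝ) (d : V → V → ℝ) (U : Finset V)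
    (h1 : Function.support μ1 ⊆ ↑U) (h2 : Function.support μ2 ⊆ ↑U)
    (hex : ∃ A, IsCoupling μ1 μ2 A) :
    ∃ A, IsCoupling μ1 μ2 A ∧ ∀ B, IsCoupling μ1 μ2 B → cost d A ≤ cost d B := by
  classical
  set K1 : Set (V × V → ℝ) := {B | ∀ p, B p ∈ Set.Icc (0:ℝ) 1} with hK1
  set K2 : Set (V × V → ℝ) := {B | ∀ p : V × V, (p.1 ∉ U ∨ p.2 ∉ U) → B p = 0} with hK2
  set K3 : Set (V × V → ℝ) := {B | ∀ u, ∑ v ∈ U, B (u, v) = μ1 u} with hK3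
  set K4 : Set (V × V → ℝ) := {B | ∀ v, ∑ u ∈ U, B (u, v) = μ2 v} with hK4
  set K := K1 ∩ K2 ∩ (K3 ∩ K4) with hKdef
  have mem_K_of_coupling : ∀ A, IsCoupling μ1 μ2 A → (fun p : V × V => A p.1 p.2) ∈ K := by
    intro A hA
    refine ⟨⟨fun p => hA.mem_Icc p.1 p.2, ?_⟩, marginal_sum_row hA h2, marginal_sum_col hA h1⟩
    rintro ⟨u, v⟩ (h | h)
    · refine row_eq_zero hA ?_ v
      by_contra h'
      exact h (h1 h')
    · refine col_eq_zero hA ?_ u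
      by_contra h'
      exact h (h2 h')
  have coupling_of_mem_K : ∀ B ∈ K, IsCoupling μ1 μ2 (fun u v => B (u, v)) := by
    rintro B ⟨⟨hIcc, hsupp⟩, hrow, hcol⟩
    constructor
    · exact fun u v => hIcc (u, v)
    · refine Set.Finite.subset (U ×ˢ U).finite_toSet ?_
      intro p hp
      rw [Function.mem_support] at hp
      rw [Finset.coe_product]
      constructor
      · by_contra h; exact hp (hsupp p (Or.inl h))
      · by_contra h; exact hp (hsupp p (Or.inr h))
    · intro u
      rw [finsum_eq_sum_of_support_subset _ (s := U)
        (fun v hv => by by_contra h; exact hv (hsupp (u, v) (Or.inr h)))]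
      exact hrow u
    · intro v
      rw [finsum_eq_sum_of_support_subset _ (s := U)
        (fun u hu => by by_contra h; exact hu (hsupp (u, v) (Or.inl h)))]
      exact hcol v
  have hKne : K.Nonempty := by
    obtain ⟨A, hA⟩ := hex
    exact ⟨_, mem_K_of_coupling A hA⟩
  have hKsub : K ⊆ Set.pi Set.univ
      (fun p : V × V => if p.1 ∈ U ∧ p.2 ∈ U then Set.Icc (0:ℝ) 1 else {0}) := by
    rintro B ⟨⟨hIcc, hsupp⟩, -, -⟩ p _
    dsimp only
    by_cases h : p.1 ∈ U ∧ p.2 ∈ U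
    · rw [if_pos h]; exact hIcc p
    · rw [if_neg h]
      rw [not_and_or] at h
      exact hsupp p h
  have hPcomp : IsCompact (Set.pi Set.univ
      (fun p : V × V => if p.1 ∈ U ∧ p.2 ∈ U then Set.Icc (0:ℝ) 1 else {0})) := by
    apply isCompact_univ_pi
    intro p
    by_cases h : p.1 ∈ U ∧ p.2 ∈ U
    · rw [if_pos h]; exact isCompact_Icc
    · rw [if_neg h]; exact isCompact_singleton
  have hK1c : IsClosed K1 := by
    rw [hK1]
    have : K1 = ⋂ p : V × V, (fun B : V × V → ℝ => B p) ⁻¹' Set.Icc (0:ℝ) 1 := by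
      ext B; simp [hK1, Set.mem_iInter]
    rw [← hK1, this]
    exact isClosed_iInter fun p => IsClosed.preimage (continuous_apply p) isClosed_Icc
  have hK2c : IsClosed K2 := by
    have : K2 = ⋂ p ∈ {p : V × V | p.1 ∉ U ∨ p.2 ∉ U},
        (fun B : V × V → ℝ => B p) ⁻¹' {0} := by
      ext B; simp [hK2, Set.mem_iInter₂]
    rw [this]
    exact isClosed_biInter fun p _ =>
      IsClosed.preimage (continuous_apply p) isClosed_singleton
  have hK3c : IsClosed K3 := by
    have : K3 = ⋂ u : V, (fun B : V × V → ℝ => ∑ v ∈ U, B (u, v)) ⁻¹' {μ1 u} := by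
      ext B; simp [hK3, Set.mem_iInter]
    rw [this]
    refine isClosed_iInter fun u => IsClosed.preimage ?_ isClosed_singleton
    exact continuous_finset_sum _ fun v _ => continuous_apply (u, v)
  have hK4c : IsClosed K4 := by
    have : K4 = ⋂ v : V, (fun B : V × V → ℝ => ∑ u ∈ U, B (u, v)) ⁻¹' {μ2 v} := by
      ext B; simp [hK4, Set.mem_iInter]
    rw [this]
    refine isClosed_iInter fun v => IsClosed.preimage ?_ isClosed_singleton
    exact continuous_finset_sum _ fun u _ => continuous_apply (u, v)
  have hKcomp : IsCompact K :=
    hPcomp.of_isClosed_subset ((hK1c.inter hK2c).inter (hK3c.inter hK4c)) hKsub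
  set φ : (V × V → ℝ) → ℝ := fun B => ∑ p ∈ U ×ˢ U, B p * d p.1 p.2 with hφ
  have hφc : Continuous φ :=
    continuous_finset_sum _ fun p _ => (continuous_apply p).mul continuous_const
  obtain ⟨Bm, hBmK, hmin⟩ := hKcomp.exists_isMinOn hKne hφc.continuousOn
  refine ⟨fun u v => Bm (u, v), coupling_of_mem_K Bm hBmK, ?_⟩
  intro B hB
  have hc1 : cost d (fun u v => Bm (u, v)) = φ Bm := by
    rw [cost_eq_sum (coupling_of_mem_K Bm hBmK) h1 h2, hφ]
  have hc2 : cost d B = φ (fun p : V × V => B p.1 p.2) := by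
    rw [cost_eq_sum hB h1 h2, hφ]
  rw [hc1, hc2]
  exact hmin (mem_K_of_coupling B hB)

end Optimal
end RicciWeighted
namespace RicciWeighted
variable {V : Type*}

section ListHelpers
variable {β : Type*}

lemma list_sum_map_sub (L : List β) (f g : β → ℝ) :
    (L.map fun e => f e - g e).sum = (L.map f).sum - (L.map g).sum := by
  induction L with
  | nil => simp
  | cons a t ih => simp [ih]; ring

lemma list_sum_swap (L : List β) (g : β → V → ℝ) (s : Finset V) :
    ∑ q ∈ s, (L.map fun e => g e q).sum = (L.map fun e => ∑ q ∈ s, g e q).sum := by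
  induction L with
  | nil => simp
  | cons a t ih => simp [Finset.sum_add_distrib, ih]

lemma list_sum_swap' {γ : Type*} (L : List β) (g : β → γ → ℝ) (s : Finset γ) :
    ∑ q ∈ s, (L.map fun e => g e q).sum = (L.map fun e => ∑ q ∈ s, g e q).sum := by
  induction L with
  | nil => simp
  | cons a t ih => simp [Finset.sum_add_distrib, ih]

lemma list_sum_ge_neg_length (L : List β) (f : β → ℝ) (hf : ∀ e ∈ L, -1 ≤ f e) :
    -(L.length : ℝ) ≤ (L.map f).sum := by
  induction L with
  | nil => simp
  | cons a t ih =>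
    simp only [List.map_cons, List.sum_cons, List.length_cons]
    have h1 := hf a List.mem_cons_self
    have h2 := ih (fun e he => hf e (List.mem_cons_of_mem a he))
    push_cast
    linarith

lemma pathCost_eq_zip (c : V → V → ℝ) :
    ∀ (m : List V) (a b : V), pathCost c (a :: (m ++ [b]))
      = (((a :: m).zip (m ++ [b])).map fun e => c e.1 e.2).sum := by
  intro m
  induction m with
  | nil => intro a b; simp [pathCost_cons_cons]
  | cons h t ih =>
    intro a b
    have h2 : (a :: h :: t).zip (h :: (t ++ [b])) = (a, h) :: ((h :: t).zip (t ++ [b])) := rfl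
    rw [List.cons_append, pathCost_cons_cons, h2, List.map_cons, List.sum_cons, ih]

end ListHelpers
end RicciWeighted
namespace RicciWeighted
variable {V : Type*}

section Tight
variable {μ1 μ2 : V → ℝ} {U : Finset V} {d : V → V → ℝ}

lemma exists_tight_potential
    (d : V → V → ℝ) (hd_symm : ∀ a b : V, d a b = d b a)
    (htri : ∀ a b c' : V, d a c' ≤ d a b + d b c')
    (hd0 : ∀ a : V, d a a = 0)
    (μ1 μ2 : V → ℝ) (U : Finset V)
    (h1 : Function.support μ1 ⊆ ↑U) (h2 : Function.support μ2 ⊆ ↑U)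
    (hμ1le : ∀ u, μ1 u ≤ 1)
    (hpos : ∃ u, 0 < μ1 u)
    (A : V → V → ℝ) (hA : IsCoupling μ1 μ2 A)
    (hopt : ∀ B, IsCoupling μ1 μ2 B → cost d A ≤ cost d B) :
    ∃ f : V → ℝ, (∀ a b : V, f a - f b ≤ d a b) ∧
      (∀ u v : V, 0 < A u v → f v - f u = d u v) := by
  classical
  set S : Finset V := U.filter (fun u => 0 < μ1 u) with hS
  have hSmem : ∀ u, u ∈ S ↔ (u ∈ U ∧ 0 < μ1 u) := fun u => Finset.mem_filter
  have hSne : S.Nonempty := by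
    obtain ⟨u, hu⟩ := hpos
    exact ⟨u, (hSmem u).2 ⟨h1 (by simp [Function.mem_support]; positivity), hu⟩⟩
  set colS : V → Finset V := fun b => U.filter (fun v => 0 < A b v) with hcolS
  have hcolmem : ∀ b v, v ∈ colS b ↔ (v ∈ U ∧ 0 < A b v) := fun b v => Finset.mem_filter
  have hcolne : ∀ b ∈ S, (colS b).Nonempty := by
    intro b hb
    have hsum : ∑ v ∈ U, A b v = μ1 b := marginal_sum_row hA h2 b
    have hbpos : 0 < μ1 b := ((hSmem b).1 hb).2
    have : ∃ v ∈ U, A b v ≠ 0 := by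
      apply Finset.exists_ne_zero_of_sum_ne_zero
      rw [hsum]; exact ne_of_gt hbpos
    obtain ⟨v, hvU, hv⟩ := this
    exact ⟨v, (hcolmem b v).2 ⟨hvU, lt_of_le_of_ne (hA.nonneg b v) (Ne.symm hv)⟩⟩
  set c : V → V → ℝ := fun a b =>
    if hb : (colS b).Nonempty then (colS b).inf' hb (fun v => d a v - d b v) else 0 with hc
  have hcle : ∀ a b v, v ∈ colS b → c a b ≤ d a v - d b v := by
    intro a b v hv
    rw [hc]; dsimp only
    rw [dif_pos ⟨v, hv⟩]
    exact Finset.inf'_le _ hv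
  have hcex : ∀ a b, b ∈ S → ∃ v, v ∈ colS b ∧ c a b = d a v - d b v := by
    intro a b hb
    obtain ⟨v, hvm, hve⟩ := Finset.exists_mem_eq_inf' (hcolne b hb) (fun v => d a v - d b v)
    refine ⟨v, hvm, ?_⟩
    rw [hc]; dsimp only
    rw [dif_pos (hcolne b hb)]
    exact hve
  -- the selection function
  set vsel : V → V → V := fun a' b' =>
    if hb : ∃ v, v ∈ colS b' ∧ c a' b' = d a' v - d b' v then hb.choose else a' with hvsel
  have hvs : ∀ a' b', b' ∈ S → vsel a' b' ∈ colS b' ∧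
      c a' b' = d a' (vsel a' b') - d b' (vsel a' b') := by
    intro a' b' hb
    have hex := hcex a' b' hb
    rw [hvsel]; dsimp only
    rw [dif_pos hex]
    exact hex.choose_spec
  -- conservativity
  have hcons : ∀ l : List V, (∀ z ∈ l, z ∈ S) → l.head? = l.getLast? →
      0 ≤ pathCost c l := by
    intro l hl hhl
    cases l with
    | nil => simp
    | cons a t =>
      rcases t.eq_nil_or_concat with rfl | ⟨m, b, rfl⟩
      · simp
      · simp only [List.concat_eq_append] at hl hhl ⊢
        have hba : b = a := by
          have h1' : (a :: (m ++ [b])).head? = some a := rfl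
          have h2' : (a :: (m ++ [b])).getLast? = some b := by
            rw [← List.cons_append, List.getLast?_concat]
          rw [h1', h2'] at hhl
          exact (Option.some_inj.1 hhl).symm
        subst hba
        by_contra hneg
        push_neg at hneg
        set arcs : List (V × V) := (b :: m).zip (m ++ [b]) with harcs
        have hlen : (b :: m).length = (m ++ [b]).length := by simp
        have harcs_len : arcs.length = m.length + 1 := by
          rw [harcs, List.length_zip]
          simp
        have hmem1 : ∀ e ∈ arcs, e.1 ∈ S := by
          rintro ⟨e1, e2⟩ he
          have hz := List.of_mem_zip he
          apply hl
          rcases List.mem_cons.1 hz.1 with rfl | h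
          · exact List.mem_cons_self
          · exact List.mem_cons_of_mem _ (List.mem_append_left _ h)
        have hmem2 : ∀ e ∈ arcs, e.2 ∈ S := by
          rintro ⟨e1, e2⟩ he
          have hz := List.of_mem_zip he
          exact hl _ (List.mem_cons_of_mem _ hz.2)
        have hvsM : ∀ e ∈ arcs, vsel e.1 e.2 ∈ colS e.2 ∧
            c e.1 e.2 = d e.1 (vsel e.1 e.2) - d e.2 (vsel e.1 e.2) :=
          fun e he => hvs e.1 e.2 (hmem2 e he)
        have harcs_ne : arcs ≠ [] := by
          intro h
          rw [h] at harcs_len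
          simp at harcs_len
        have hFne : arcs.toFinset.Nonempty := (List.toFinset_nonempty_iff _).2 harcs_ne
        set mmin := arcs.toFinset.inf' hFne (fun e => A e.2 (vsel e.1 e.2)) with hmmin
        have hmminpos : 0 < mmin := by
          rw [hmmin, Finset.lt_inf'_iff]
          intro e he
          exact ((hcolmem _ _).1 (hvsM e (List.mem_toFinset.1 he)).1).2
        set treal : ℝ := (arcs.length : ℝ) with htreal
        have htnn : 0 ≤ treal := Nat.cast_nonneg _
        set ε : ℝ := mmin / (2 * (treal + 1)) with hε
        have hεpos : 0 < ε := by
          rw [hε]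
          positivity
        have hεsmall : ε * treal < mmin := by
          rw [hε, div_mul_eq_mul_div, div_lt_iff₀ (by positivity)]
          nlinarith
        set mod : V → V → ℝ := fun pu pv => (arcs.map fun e =>
          (if pu = e.1 ∧ pv = vsel e.1 e.2 then (1:ℝ) else 0)
          - (if pu = e.2 ∧ pv = vsel e.1 e.2 then (1:ℝ) else 0)).sum with hmod
        set A' : V → V → ℝ := fun pu pv => A pu pv + ε * mod pu pv with hA'def
        have hSU : ∀ z ∈ S, z ∈ U := fun z hz => ((hSmem z).1 hz).1
        have hcolU : ∀ b v, v ∈ colS b → v ∈ U := fun b v hv => ((hcolmem b v).1 hv).1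
        have h_off : ∀ pu pv, (pu ∉ U ∨ pv ∉ U) → A' pu pv = A pu pv := by
          intro pu pv h
          have hz : mod pu pv = 0 := by
            rw [hmod]
            apply List.sum_eq_zero
            intro r hr
            obtain ⟨e, he, rfl⟩ := List.mem_map.1 hr
            have hnc1 : ¬(pu = e.1 ∧ pv = vsel e.1 e.2) := by
              rintro ⟨rfl, rfl⟩
              rcases h with h | h
              · exact h (hSU _ (hmem1 e he))
              · exact h (hcolU _ _ (hvsM e he).1)
            have hnc2 : ¬(pu = e.2 ∧ pv = vsel e.1 e.2) := by
              rintro ⟨rfl, rfl⟩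
              rcases h with h | h
              · exact h (hSU _ (hmem2 e he))
              · exact h (hcolU _ _ (hvsM e he).1)
            rw [if_neg hnc1, if_neg hnc2, sub_zero]
          rw [hA'def]
          dsimp only
          rw [hz, mul_zero, add_zero]
        have hrow : ∀ pu, ∑ pv ∈ U, A' pu pv = μ1 pu := by
          intro pu
          rw [hA'def]
          dsimp only
          rw [Finset.sum_add_distrib, marginal_sum_row hA h2, ← Finset.mul_sum]
          have hswap : ∑ pv ∈ U, mod pu pv = (arcs.map fun e =>
              ∑ pv ∈ U, ((if pu = e.1 ∧ pv = vsel e.1 e.2 then (1:ℝ) else 0)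
              - (if pu = e.2 ∧ pv = vsel e.1 e.2 then (1:ℝ) else 0))).sum := by
            rw [hmod]
            exact list_sum_swap' arcs _ U
          have heach : ∀ e ∈ arcs,
              (∑ pv ∈ U, ((if pu = e.1 ∧ pv = vsel e.1 e.2 then (1:ℝ) else 0)
              - (if pu = e.2 ∧ pv = vsel e.1 e.2 then (1:ℝ) else 0)))
              = (if pu = e.1 then (1:ℝ) else 0) - (if pu = e.2 then (1:ℝ) else 0) := by
            intro e he
            have hw : vsel e.1 e.2 ∈ U := hcolU _ _ (hvsM e he).1
            rw [Finset.sum_sub_distrib]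
            congr 1
            · by_cases h : pu = e.1
              · simp only [h, eq_self_iff_true, true_and, if_true]
                rw [Finset.sum_ite_eq' U (vsel e.1 e.2) (fun _ => (1:ℝ)), if_pos hw]
              · simp [h]
            · by_cases h : pu = e.2
              · simp only [h, eq_self_iff_true, true_and, if_true]
                rw [Finset.sum_ite_eq' U (vsel e.1 e.2) (fun _ => (1:ℝ)), if_pos hw]
              · simp [h]
          rw [hswap, List.map_congr_left heach, list_sum_map_sub]
          have hfst : (arcs.map fun e => if pu = e.1 then (1:ℝ) else 0)
              = (b :: m).map (fun z => if pu = z then (1:ℝ) else 0) := by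
            rw [show (fun e : V × V => if pu = e.1 then (1:ℝ) else 0)
              = (fun z => if pu = z then (1:ℝ) else 0) ∘ Prod.fst from rfl]
            rw [← List.map_map, harcs, List.map_fst_zip (le_of_eq hlen)]
          have hsnd : (arcs.map fun e => if pu = e.2 then (1:ℝ) else 0)
              = (m ++ [b]).map (fun z => if pu = z then (1:ℝ) else 0) := by
            rw [show (fun e : V × V => if pu = e.2 then (1:ℝ) else 0)
              = (fun z => if pu = z then (1:ℝ) else 0) ∘ Prod.snd from rfl]
            rw [← List.map_map, harcs, List.map_snd_zip (le_of_eq hlen.symm)]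
          rw [hfst, hsnd]
          have hperm : (b :: m).Perm (m ++ [b]) := (List.perm_append_singleton b m).symm
          rw [List.Perm.sum_eq (hperm.map _)]
          ring
        have hcol : ∀ pv, ∑ pu ∈ U, A' pu pv = μ2 pv := by
          intro pv
          rw [hA'def]
          dsimp only
          rw [Finset.sum_add_distrib, marginal_sum_col hA h1, ← Finset.mul_sum]
          have hswap : ∑ pu ∈ U, mod pu pv = (arcs.map fun e =>
              ∑ pu ∈ U, ((if pu = e.1 ∧ pv = vsel e.1 e.2 then (1:ℝ) else 0)
              - (if pu = e.2 ∧ pv = vsel e.1 e.2 then (1:ℝ) else 0))).sum := by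
            rw [hmod]
            exact list_sum_swap' arcs _ U
          have hz : (arcs.map fun e =>
              ∑ pu ∈ U, ((if pu = e.1 ∧ pv = vsel e.1 e.2 then (1:ℝ) else 0)
              - (if pu = e.2 ∧ pv = vsel e.1 e.2 then (1:ℝ) else 0))).sum = 0 := by
            apply List.sum_eq_zero
            intro r hr
            obtain ⟨e, he, rfl⟩ := List.mem_map.1 hr
            have he1U : e.1 ∈ U := hSU _ (hmem1 e he)
            have he2U : e.2 ∈ U := hSU _ (hmem2 e he)
            rw [Finset.sum_sub_distrib]
            by_cases h : pv = vsel e.1 e.2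
            · have hs1 : ∑ pu ∈ U, (if pu = e.1 ∧ pv = vsel e.1 e.2 then (1:ℝ) else 0) = 1 := by
                simp only [h, eq_self_iff_true, and_true]
                rw [Finset.sum_ite_eq' U e.1 (fun _ => (1:ℝ)), if_pos he1U]
              have hs2 : ∑ pu ∈ U, (if pu = e.2 ∧ pv = vsel e.1 e.2 then (1:ℝ) else 0) = 1 := by
                simp only [h, eq_self_iff_true, and_true]
                rw [Finset.sum_ite_eq' U e.2 (fun _ => (1:ℝ)), if_pos he2U]
              rw [hs1, hs2, sub_self]
            · simp [h]
          rw [hswap, hz, mul_zero, add_zero]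
        have hnn : ∀ pu pv, 0 ≤ A' pu pv := by
          intro pu pv
          rw [hA'def]
          dsimp only
          by_cases hcase : ∀ e ∈ arcs, ¬(pu = e.2 ∧ pv = vsel e.1 e.2)
          · have hmodnn : 0 ≤ mod pu pv := by
              rw [hmod]
              apply List.sum_nonneg
              intro r hr
              obtain ⟨e, he, rfl⟩ := List.mem_map.1 hr
              rw [if_neg (hcase e he), sub_zero]
              split_ifs <;> norm_num
            have h0 := hA.nonneg pu pv
            nlinarith [mul_nonneg hεpos.le hmodnn]
          · push_neg at hcase
            obtain ⟨e₀, he₀, h₀1, h₀2⟩ := hcase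
            have hApu : mmin ≤ A pu pv := by
              rw [h₀1, h₀2, hmmin]
              exact Finset.inf'_le _ (List.mem_toFinset.2 he₀)
            have hsum_ge : -treal ≤ mod pu pv := by
              rw [hmod, htreal]
              apply list_sum_ge_neg_length
              intro e he
              split_ifs <;> norm_num
            have h3 : ε * (-treal) ≤ ε * mod pu pv :=
              mul_le_mul_of_nonneg_left hsum_ge hεpos.le
            nlinarith
        have hle1 : ∀ pu pv, A' pu pv ≤ 1 := by
          intro pu pv
          by_cases hv : pv ∈ U
          · have h' : A' pu pv ≤ ∑ z ∈ U, A' pu z :=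
              Finset.single_le_sum (fun i _ => hnn pu i) hv
            rw [hrow pu] at h'
            exact le_trans h' (hμ1le pu)
          · rw [h_off pu pv (Or.inr hv)]
            exact (hA.mem_Icc pu pv).2
        have hfin : (Function.support fun p : V × V => A' p.1 p.2).Finite := by
          apply Set.Finite.subset (hA.finite_support.union (U ×ˢ U).finite_toSet)
          intro p hp
          by_cases hU' : p.1 ∈ U ∧ p.2 ∈ U
          · exact Or.inr (Finset.mem_coe.2 (Finset.mem_product.2 hU'))
          · left
            rw [not_and_or] at hU'
            rw [Function.mem_support] at hp ⊢
            rw [h_off p.1 p.2 hU'] at hp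
            exact hp
        have hrowsupp : ∀ pu pv, A' pu pv ≠ 0 → pv ∈ U := by
          intro pu pv h
          by_contra hv
          refine h ?_
          rw [h_off pu pv (Or.inr hv)]
          refine col_eq_zero hA ?_ pu
          by_contra h'
          exact hv (h2 h')
        have hcolsupp : ∀ pu pv, A' pu pv ≠ 0 → pu ∈ U := by
          intro pu pv h
          by_contra hu
          refine h ?_
          rw [h_off pu pv (Or.inl hu)]
          refine row_eq_zero hA ?_ pv
          by_contra h'
          exact hu (h1 h')
        have hA'c : IsCoupling μ1 μ2 A' := by
          refine ⟨fun u v => ⟨hnn u v, hle1 u v⟩, hfin, ?_, ?_⟩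
          · intro u
            rw [finsum_eq_sum_of_support_subset _ (s := U) (fun v hv => hrowsupp u v hv)]
            exact hrow u
          · intro v
            rw [finsum_eq_sum_of_support_subset _ (s := U) (fun u hu => hcolsupp u v hu)]
            exact hcol v
        have hcost : cost d A' = cost d A + ε * pathCost c (b :: (m ++ [b])) := by
          rw [cost_eq_sum hA'c h1 h2, cost_eq_sum hA h1 h2]
          have hsplit : ∀ p ∈ U ×ˢ U, A' p.1 p.2 * d p.1 p.2
              = A p.1 p.2 * d p.1 p.2 + ε * (mod p.1 p.2 * d p.1 p.2) := by
            intro p _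
            rw [hA'def]
            ring
          rw [Finset.sum_congr rfl hsplit, Finset.sum_add_distrib, ← Finset.mul_sum]
          congr 1
          congr 1
          have hexp : ∀ p : V × V, mod p.1 p.2 * d p.1 p.2 = (arcs.map fun e =>
              ((if p = (e.1, vsel e.1 e.2) then (1:ℝ) else 0)
              - (if p = (e.2, vsel e.1 e.2) then (1:ℝ) else 0)) * d p.1 p.2).sum := by
            intro p
            rw [hmod]
            dsimp only
            rw [List.sum_map_mul_right]
            congr 1
            refine congrArg List.sum (List.map_congr_left ?_)
            intro e _
            congr 1
            · congr 1
              rw [show (p.1 = e.1 ∧ p.2 = vsel e.1 e.2) = (p = (e.1, vsel e.1 e.2))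
                from propext (Iff.symm Prod.ext_iff)]
            · congr 1
              rw [show (p.1 = e.2 ∧ p.2 = vsel e.1 e.2) = (p = (e.2, vsel e.1 e.2))
                from propext (Iff.symm Prod.ext_iff)]
          rw [Finset.sum_congr rfl (fun p _ => hexp p), list_sum_swap' arcs _ (U ×ˢ U),
            pathCost_eq_zip]
          refine congrArg List.sum (List.map_congr_left ?_)
          intro e he
          have hq1 : (e.1, vsel e.1 e.2) ∈ U ×ˢ U :=
            Finset.mem_product.2 ⟨hSU _ (hmem1 e he), hcolU _ _ (hvsM e he).1⟩
          have hq2 : (e.2, vsel e.1 e.2) ∈ U ×ˢ U :=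
            Finset.mem_product.2 ⟨hSU _ (hmem2 e he), hcolU _ _ (hvsM e he).1⟩
          have hsplit2 : ∀ p ∈ U ×ˢ U,
              ((if p = (e.1, vsel e.1 e.2) then (1:ℝ) else 0)
              - (if p = (e.2, vsel e.1 e.2) then (1:ℝ) else 0)) * d p.1 p.2
              = (if p = (e.1, vsel e.1 e.2) then d p.1 p.2 else 0)
              - (if p = (e.2, vsel e.1 e.2) then d p.1 p.2 else 0) := by
            intro p _
            split_ifs <;> ring
          rw [Finset.sum_congr rfl hsplit2, Finset.sum_sub_distrib,
            Finset.sum_ite_eq' (U ×ˢ U) ((e.1, vsel e.1 e.2)) (fun p => d p.1 p.2),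
            Finset.sum_ite_eq' (U ×ˢ U) ((e.2, vsel e.1 e.2)) (fun p => d p.1 p.2),
            if_pos hq1, if_pos hq2]
          exact ((hvsM e he).2).symm
        have hge := hopt A' hA'c
        rw [hcost] at hge
        nlinarith [mul_neg_of_pos_of_neg hεpos hneg]
  obtain ⟨p, hp⟩ := exists_potential S c hcons
  refine ⟨fun z => S.inf' hSne (fun u => p u + d u z), ?_, ?_⟩
  · intro a b
    dsimp only
    obtain ⟨u0, hu0m, hu0e⟩ := Finset.exists_mem_eq_inf' hSne (fun u => p u + d u b)
    have h1' : S.inf' hSne (fun u => p u + d u a) ≤ p u0 + d u0 a := Finset.inf'_le _ hu0m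
    have h2' : d u0 a ≤ d u0 b + d b a := htri u0 b a
    have h3' : d b a = d a b := hd_symm b a
    rw [hu0e]
    linarith
  · intro u v hAuv
    dsimp only
    have hvU : v ∈ U := by
      apply h2
      intro h
      exact absurd (col_eq_zero hA h u) (ne_of_gt hAuv)
    have huU : u ∈ U := by
      apply h1
      intro h
      exact absurd (row_eq_zero hA h v) (ne_of_gt hAuv)
    have hrowU : ∀ v', A u v' ≠ 0 → v' ∈ U := by
      intro v' hv'
      apply h2
      intro h
      exact absurd (col_eq_zero hA h u) hv'
    have huS : u ∈ S := by
      refine (hSmem u).2 ⟨huU, lt_of_lt_of_le hAuv ?_⟩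
      exact entry_le_row hA hrowU hvU
    have hvcol : v ∈ colS u := (hcolmem u v).2 ⟨hvU, hAuv⟩
    apply le_antisymm
    · obtain ⟨u0, hu0m, hu0e⟩ := Finset.exists_mem_eq_inf' hSne (fun z' => p z' + d z' u)
      have h1' : S.inf' hSne (fun z' => p z' + d z' v) ≤ p u0 + d u0 v := Finset.inf'_le _ hu0m
      have h2' : d u0 v ≤ d u0 u + d u v := htri u0 u v
      rw [hu0e]
      linarith
    · obtain ⟨a0, ha0m, ha0e⟩ := Finset.exists_mem_eq_inf' hSne (fun z' => p z' + d z' v)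
      have hfu_le : S.inf' hSne (fun z' => p z' + d z' u) ≤ p u := by
        have h' : S.inf' hSne (fun z' => p z' + d z' u) ≤ p u + d u u :=
          Finset.inf'_le _ huS
        rw [hd0 u] at h'
        simpa using h'
      have hpu : p u ≤ p a0 + c a0 u := hp a0 ha0m u huS
      have hcu : c a0 u ≤ d a0 v - d u v := hcle a0 u v hvcol
      rw [ha0e]
      linarith


end Tight
end RicciWeighted
open RicciWeighted in
/-- **Curvature via the Laplacian.** For a locally finite weighted graph
`G = (V,E,d,w)` and distinct vertices `x, y`, the Ricci curvature satisfies
`κ(x,y) = inf { ∇_{xy} Δf : f ∈ Lip(1), ∇_{yx} f = 1 }`,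
where `∇_{xy} f = (f x − f y)/d(x,y)`. -/
theorem curvature_eq_inf_laplacian
    {V : Type*} (G : SimpleGraph V) [∀ v : V, Fintype (G.neighborSet v)]
    (hconn : G.Connected)
    (d w : V → V → ℝ)
    (hd_symm : ∀ x y : V, d x y = d y x)
    (hd_pos : ∀ x y : V, G.Adj x y → 0 < d x y)
    (hshort : IsShortestDist G d)
    (hw_symm : ∀ x y : V, w x y = w y x)
    (hw_pos : ∀ x y : V, G.Adj x y → 0 < w x y)
    (x y : V) (hxy : x ≠ y)
    (k : ℝ) (hk : IsRicci G d w x y k) :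
    IsGLB {r : ℝ | ∃ f : V → ℝ, Lip1 d f ∧ (f y - f x) / d y x = 1 ∧
        (laplacian G w f x - laplacian G w f y) / d x y = r}
      k := by
  classical
  have hNx : (G.neighborFinset x).Nonempty := neighborFinset_nonempty' hconn hxy
  have hNy : (G.neighborFinset y).Nonempty := neighborFinset_nonempty' hconn (Ne.symm hxy)
  have hdxy : 0 < d x y := dist_pos hconn hshort hd_pos hxy
  have htri : ∀ a b c' : V, d a c' ≤ d a b + d b c' := dist_triangle' hshort
  have hd0 : ∀ a : V, d a a = 0 := dist_self hshort hd_pos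
  have hdnn : ∀ a b : V, 0 ≤ d a b := dist_nonneg' hshort hd_pos
  set T : Finset V := (insert x (G.neighborFinset x)) ∪ (insert y (G.neighborFinset y))
    with hT
  have hTx : insert x (G.neighborFinset x) ⊆ T := Finset.subset_union_left
  have hTy : insert y (G.neighborFinset y) ⊆ T := Finset.subset_union_right
  have hxT : x ∈ T := hTx (Finset.mem_insert_self _ _)
  have hyT : y ∈ T := hTy (Finset.mem_insert_self _ _)
  have hsuppx : ∀ α : ℝ, Function.support (mu G w α x) ⊆ ↑T :=
    fun α => subset_trans (mu_support_subset α x) (Finset.coe_subset.2 hTx)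
  have hsuppy : ∀ α : ℝ, Function.support (mu G w α y) ⊆ ↑T :=
    fun α => subset_trans (mu_support_subset α y) (Finset.coe_subset.2 hTy)
  have hmuxx : ∀ α : ℝ, mu G w α x x = α := fun α => by simp [mu]
  have hmuyy : ∀ α : ℝ, mu G w α y y = α := fun α => by simp [mu]
  -- existence of couplings
  have hex : ∀ α : ℝ, 0 ≤ α → α ≤ 1 → ∃ A, IsCoupling (mu G w α x) (mu G w α y) A := by
    intro α h0 h1
    refine ⟨_, isCoupling_prod ((T.finite_toSet).subset (hsuppx α))
      ((T.finite_toSet).subset (hsuppy α))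
      (mu_nonneg hw_pos h0 h1 x) (mu_nonneg hw_pos h0 h1 y)
      (mu_le_one hw_pos h0 h1 x) (mu_le_one hw_pos h0 h1 y)
      (finsum_mu hw_pos hNx α) (finsum_mu hw_pos hNy α)⟩
  -- the fundamental sum computation
  have hsum_eq : ∀ (α : ℝ) (A : V → V → ℝ),
      IsCoupling (mu G w α x) (mu G w α y) A → ∀ f : V → ℝ,
      ∑ p ∈ T ×ˢ T, A p.1 p.2 * (f p.2 - f p.1)
        = (f y + (1 - α) * laplacian G w f y) - (f x + (1 - α) * laplacian G w f x) := by
    intro α A hA f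
    have hsplit : ∀ p ∈ T ×ˢ T, A p.1 p.2 * (f p.2 - f p.1)
        = A p.1 p.2 * f p.2 - A p.1 p.2 * f p.1 := fun p _ => by ring
    rw [Finset.sum_congr rfl hsplit, Finset.sum_sub_distrib]
    have e1 : ∑ p ∈ T ×ˢ T, A p.1 p.2 * f p.2
        = f y + (1 - α) * laplacian G w f y := by
      rw [Finset.sum_product]
      rw [Finset.sum_comm]
      have : ∀ v ∈ T, ∑ u ∈ T, A u v * f v = mu G w α y v * f v := by
        intro v _
        rw [← Finset.sum_mul, marginal_sum_col hA (hsuppx α) v]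
      rw [Finset.sum_congr rfl this]
      exact sum_mu_mul hTy hw_pos hNy α f
    have e2 : ∑ p ∈ T ×ˢ T, A p.1 p.2 * f p.1
        = f x + (1 - α) * laplacian G w f x := by
      rw [Finset.sum_product]
      have : ∀ u ∈ T, ∑ v ∈ T, A u v * f u = mu G w α x u * f u := by
        intro u _
        rw [← Finset.sum_mul, marginal_sum_row hA (hsuppy α) u]
      rw [Finset.sum_congr rfl this]
      exact sum_mu_mul hTx hw_pos hNx α f
    rw [e1, e2]
  -- weak duality
  have hwd : ∀ (α : ℝ) (A : V → V → ℝ),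
      IsCoupling (mu G w α x) (mu G w α y) A → ∀ f : V → ℝ, Lip1 d f →
      (f y + (1 - α) * laplacian G w f y) - (f x + (1 - α) * laplacian G w f x)
        ≤ cost d A := by
    intro α A hA f hf
    rw [cost_eq_sum hA (hsuppx α) (hsuppy α), ← hsum_eq α A hA f]
    apply Finset.sum_le_sum
    intro p _
    apply mul_le_mul_of_nonneg_left _ (hA.nonneg p.1 p.2)
    calc f p.2 - f p.1 ≤ d p.2 p.1 := hf p.2 p.1
      _ = d p.1 p.2 := hd_symm _ _
  -- cost is nonnegative
  have hcost_nn : ∀ (α : ℝ) (A : V → V → ℝ),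
      IsCoupling (mu G w α x) (mu G w α y) A → 0 ≤ cost d A := by
    intro α A hA
    rw [cost_eq_sum hA (hsuppx α) (hsuppy α)]
    exact Finset.sum_nonneg fun p _ => mul_nonneg (hA.nonneg p.1 p.2) (hdnn _ _)
  have hbdd : ∀ α : ℝ, BddBelow {r : ℝ | ∃ A, IsCoupling (mu G w α x) (mu G w α y) A
      ∧ cost d A = r} := by
    intro α
    exact ⟨0, fun r ⟨A, hA, hr⟩ => hr ▸ hcost_nn α A hA⟩
  have hWge : ∀ (α : ℝ), 0 ≤ α → α ≤ 1 → ∀ f : V → ℝ, Lip1 d f →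
      (f y + (1 - α) * laplacian G w f y) - (f x + (1 - α) * laplacian G w f x)
        ≤ W d (mu G w α x) (mu G w α y) := by
    intro α h0 h1 f hf
    apply le_csInf
    · obtain ⟨A, hA⟩ := hex α h0 h1
      exact ⟨cost d A, A, hA, rfl⟩
    · rintro r ⟨A, hA, rfl⟩
      exact hwd α A hA f hf
  constructor
  · -- k is a lower bound
    rintro r ⟨f, hf, hfyx, rfl⟩
    have hdyx : d y x ≠ 0 := by rw [← hd_symm]; exact ne_of_gt hdxy
    have hfyx' : f y - f x = d x y := by
      rw [hd_symm x y]
      field_simp at hfyx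
      linarith [hfyx]
    have hev : ∀ α ∈ Set.Ioo (0:ℝ) 1, kappaAlpha G d w α x y / (1 - α)
        ≤ (laplacian G w f x - laplacian G w f y) / d x y := by
      intro α hα
      have h1α : 0 < 1 - α := by linarith [hα.2]
      have hW := hWge α hα.1.le hα.2.le f hf
      rw [show (f y + (1 - α) * laplacian G w f y) - (f x + (1 - α) * laplacian G w f x)
        = d x y + (1 - α) * (laplacian G w f y - laplacian G w f x) by
          rw [← hfyx']; ring] at hW
      unfold kappaAlpha
      rw [div_le_div_iff₀ h1α hdxy]
      have h2 : d x y - W d (mu G w α x) (mu G w α y)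
          ≤ (1 - α) * (laplacian G w f x - laplacian G w f y) := by linarith
      have h3 : (1 - W d (mu G w α x) (mu G w α y) / d x y) * d x y
          = d x y - W d (mu G w α x) (mu G w α y) := by
        field_simp
      calc (1 - W d (mu G w α x) (mu G w α y) / d x y) * d x y
          = d x y - W d (mu G w α x) (mu G w α y) := h3
        _ ≤ (1 - α) * (laplacian G w f x - laplacian G w f y) := h2
        _ = (laplacian G w f x - laplacian G w f y) * (1 - α) := by ring
    have hmem : Set.Ioo (0:ℝ) 1 ∈ nhdsWithin (1:ℝ) (Set.Iio 1) :=
      Ioo_mem_nhdsLT_of_mem (by constructor <;> norm_num)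
    exact le_of_tendsto hk (Filter.eventually_of_mem hmem hev)
  · -- k is the greatest lower bound
    intro b hb
    have hev : ∀ α ∈ Set.Ioo (1/2 : ℝ) 1, b ≤ kappaAlpha G d w α x y / (1 - α) := by
      intro α hα
      have h0 : (0:ℝ) ≤ α := by linarith [hα.1]
      have h1 : α ≤ 1 := hα.2.le
      have h1α : 0 < 1 - α := by linarith [hα.2]
      obtain ⟨A, hA, hopt⟩ := exists_optimal_coupling (mu G w α x) (mu G w α y) d T
        (hsuppx α) (hsuppy α) (hex α h0 h1)
      -- A x y > 0
      have hAxy : 0 < A x y := by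
        have hrow : ∑ v ∈ T, A x v = α := by
          rw [marginal_sum_row hA (hsuppy α) x, hmuxx α]
        have hcoly : ∀ v ∈ T.erase y, A x v ≤ mu G w α y v := by
          intro v _
          refine entry_le_col hA ?_ hxT
          intro u hu
          by_contra huT
          have : mu G w α x u = 0 := by
            by_contra h'
            exact huT (Finset.mem_coe.1 (hsuppx α h'))
          exact hu (row_eq_zero hA this v)
        have hmuy_sum : ∑ v ∈ T, mu G w α y v = 1 := sum_mu hw_pos hNy α hTy
        have hsum_erase : ∑ v ∈ T.erase y, mu G w α y v = 1 - α := by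
          have := Finset.add_sum_erase T (mu G w α y) hyT
          rw [hmuyy α] at this
          linarith [hmuy_sum, this]
        have hrow_erase : A x y + ∑ v ∈ T.erase y, A x v = α := by
          rw [Finset.add_sum_erase T (A x) hyT]
          exact hrow
        have hle : ∑ v ∈ T.erase y, A x v ≤ 1 - α := by
          rw [← hsum_erase]
          exact Finset.sum_le_sum hcoly
        have : 2 * α - 1 ≤ A x y := by linarith
        linarith [hα.1, this]
      -- tight potential
      obtain ⟨f, hfLip, hftight⟩ := exists_tight_potential d hd_symm htri hd0
        (mu G w α x) (mu G w α y) T (hsuppx α) (hsuppy α)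
        (mu_le_one hw_pos h0 h1 x) ⟨x, by rw [hmuxx α]; linarith [hα.1]⟩ A hA hopt
      have hfyx : f y - f x = d x y := hftight x y hAxy
      -- cost equals the dual value
      have hcost_eq : cost d A
          = (f y + (1 - α) * laplacian G w f y) - (f x + (1 - α) * laplacian G w f x) := by
        rw [cost_eq_sum hA (hsuppx α) (hsuppy α), ← hsum_eq α A hA f]
        apply Finset.sum_congr rfl
        intro p _
        rcases eq_or_lt_of_le (hA.nonneg p.1 p.2) with h | h
        · rw [← h]; ring
        · rw [hftight p.1 p.2 h]
      -- W equals cost A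
      have hWeq : W d (mu G w α x) (mu G w α y) = cost d A := by
        apply le_antisymm
        · exact csInf_le (hbdd α) ⟨A, hA, rfl⟩
        · refine le_csInf ⟨cost d A, A, hA, rfl⟩ ?_
          rintro r ⟨B, hB, rfl⟩
          exact hopt B hB
      -- the value of κ_α/(1-α)
      have hκ : kappaAlpha G d w α x y / (1 - α)
          = (laplacian G w f x - laplacian G w f y) / d x y := by
        have hne1 : f y - f x ≠ 0 := by rw [hfyx]; exact ne_of_gt hdxy
        have hne2 : (1:ℝ) - α ≠ 0 := ne_of_gt h1α
        unfold kappaAlpha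
        rw [hWeq, hcost_eq, ← hfyx]
        field_simp
        ring
      rw [hκ]
      apply hb
      refine ⟨f, hfLip, ?_, rfl⟩
      rw [← hd_symm x y, hfyx]
      exact div_self (ne_of_gt hdxy)
    have hmem : Set.Ioo (1/2 : ℝ) 1 ∈ nhdsWithin (1:ℝ) (Set.Iio 1) :=
      Ioo_mem_nhdsLT_of_mem (by constructor <;> norm_num)
    exact ge_of_tendsto hk (Filter.eventually_of_mem hmem hev)
end

section
/- Let G = (V, E, d, w) be a locally finite weighted graph. For any edge uv ∈ E, the Ricci curvature satisfies the lower bound κ(u,v) ≥ 2w_{uv}/D_u + 2w_{uv}/D_v − Σ_{x∈Γ(u)} (w_{ux}/D_u)(d(x,u)/d(u,v)) − Σ_{y∈Γ(v)} (w_{vy}/D_v)(d(y,v)/d(u,v)). -/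
open Filter Finset
open scoped Classical

namespace RicciWeighted

variable {V : Type*}

lemma my_d_nonneg {G : SimpleGraph V} {d : V → V → ℝ}
    (hd_pos : ∀ x y, G.Adj x y → 0 < d x y) (hshort : IsShortestDist G d) (x y : V) :
    0 ≤ d x y := by
  refine (hshort x y).2 ?_
  rintro r ⟨p, rfl⟩
  apply List.sum_nonneg
  intro a ha
  obtain ⟨e, _, rfl⟩ := List.mem_map.1 ha
  exact (hd_pos _ _ e.adj).le

lemma my_d_self {G : SimpleGraph V} {d : V → V → ℝ}
    (hd_pos : ∀ x y, G.Adj x y → 0 < d x y) (hshort : IsShortestDist G d) (x : V) :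
    d x x = 0 :=
  le_antisymm ((hshort x x).1 ⟨SimpleGraph.Walk.nil, by simp [walkLength]⟩)
    (my_d_nonneg hd_pos hshort x x)

lemma my_d_triangle {G : SimpleGraph V} {d : V → V → ℝ}
    (hshort : IsShortestDist G d) (x y z : V) :
    d x z ≤ d x y + d y z := by
  refine le_of_forall_pos_le_add fun ε hε => ?_
  obtain ⟨r1, ⟨p, hp⟩, -, h1⟩ := (hshort x y).exists_between (lt_add_of_pos_right _ (half_pos hε))
  obtain ⟨r2, ⟨q, hq⟩, -, h2⟩ := (hshort y z).exists_between (lt_add_of_pos_right _ (half_pos hε))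
  have hm : d x z ≤ r1 + r2 := (hshort x z).1
    ⟨p.append q, by simp [walkLength, SimpleGraph.Walk.darts_append, hp.symm, hq.symm]⟩
  linarith

set_option maxHeartbeats 2000000 in
lemma main_estimate (G : SimpleGraph V) [∀ v : V, Fintype (G.neighborSet v)]
    (d w : V → V → ℝ)
    (hd_symm : ∀ x y : V, d x y = d y x)
    (hd_pos : ∀ x y : V, G.Adj x y → 0 < d x y)
    (hshort : IsShortestDist G d)
    (hw_symm : ∀ x y : V, w x y = w y x)
    (hw_pos : ∀ x y : V, G.Adj x y → 0 < w x y)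
    (u v : V) (huv : G.Adj u v)
    (α : ℝ) (hα1 : α < 1) (hα2 : 1/2 ≤ α)
    (hα3 : (1 - α) * (w u v / deg G w u + w u v / deg G w v) ≤ 1/2) :
    2 * w u v / deg G w u + 2 * w u v / deg G w v -
        (∑ x ∈ G.neighborFinset u, (w u x / deg G w u) * (d x u / d u v)) -
        (∑ y ∈ G.neighborFinset v, (w v y / deg G w v) * (d y v / d u v)) ≤
      kappaAlpha G d w α u v / (1 - α) := by
  have hne : u ≠ v := huv.ne
  have hvu : G.Adj v u := huv.symm
  have hmem : ∀ p q : V, q ∈ G.neighborFinset p ↔ G.Adj p q := fun p q =>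
    G.mem_neighborFinset p q
  have hd0 : ∀ x, d x x = 0 := my_d_self hd_pos hshort
  have hdnn : ∀ x y, 0 ≤ d x y := my_d_nonneg hd_pos hshort
  have hduv : 0 < d u v := hd_pos u v huv
  set Du := deg G w u with hDu_def
  set Dv := deg G w v with hDv_def
  have hDu : 0 < Du := Finset.sum_pos (fun x hx => hw_pos u x ((hmem u x).mp hx))
    ⟨v, (hmem u v).mpr huv⟩
  have hDv : 0 < Dv := Finset.sum_pos (fun x hx => hw_pos v x ((hmem v x).mp hx))
    ⟨u, (hmem v u).mpr hvu⟩
  set a := (1 - α) * w u v / Du with ha_def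
  set b := (1 - α) * w v u / Dv with hb_def
  have h1α : (0:ℝ) < 1 - α := by linarith
  have hwuv : 0 < w u v := hw_pos u v huv
  have hwvu : 0 < w v u := hw_pos v u hvu
  have ha0 : 0 ≤ a := by positivity
  have hb0 : 0 ≤ b := by positivity
  have hab : a + b ≤ 1/2 := by
    have : b = (1 - α) * (w u v / Dv) := by rw [hb_def, hw_symm v u]; ring
    have ha' : a = (1 - α) * (w u v / Du) := by rw [ha_def]; ring
    rw [this, ha']
    calc (1 - α) * (w u v / Du) + (1 - α) * (w u v / Dv)
        = (1 - α) * (w u v / Du + w u v / Dv) := by ring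
      _ ≤ 1/2 := hα3
  set c := 1 - a - b with hc_def
  have hc : (0:ℝ) < c := by rw [hc_def]; linarith
  have hbα : b ≤ α := by linarith
  -- the reduced measures
  set F : V → ℝ := fun x => mu G w α u x - (if x = u then b else 0) - (if x = v then a else 0)
    with hF_def
  set Gf : V → ℝ := fun y => mu G w α v y - (if y = v then a else 0) - (if y = u then b else 0)
    with hGf_def
  set Nu := insert u (G.neighborFinset u) with hNu_def
  set Nv := insert v (G.neighborFinset v) with hNv_def
  have huNu : u ∈ Nu := Finset.mem_insert_self u _
  have hvNu : v ∈ Nu := Finset.mem_insert_of_mem ((hmem u v).mpr huv)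
  have hvNv : v ∈ Nv := Finset.mem_insert_self v _
  have huNv : u ∈ Nv := Finset.mem_insert_of_mem ((hmem v u).mpr hvu)
  have hmuu : ∀ x, x ∉ Nu → mu G w α u x = 0 := by
    intro x hx
    simp only [hNu_def, Finset.mem_insert, hmem] at hx
    push_neg at hx
    simp [mu, hx.1, hx.2]
  have hmuv : ∀ y, y ∉ Nv → mu G w α v y = 0 := by
    intro y hy
    simp only [hNv_def, Finset.mem_insert, hmem] at hy
    push_neg at hy
    simp [mu, hy.1, hy.2]
  have hF0 : ∀ x, x ∉ Nu → F x = 0 := by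
    intro x hx
    have h1 : x ≠ u := fun h => hx (h ▸ huNu)
    have h2 : x ≠ v := fun h => hx (h ▸ hvNu)
    simp [hF_def, hmuu x hx, h1, h2]
  have hG0 : ∀ y, y ∉ Nv → Gf y = 0 := by
    intro y hy
    have h1 : y ≠ v := fun h => hy (h ▸ hvNv)
    have h2 : y ≠ u := fun h => hy (h ▸ huNv)
    simp [hGf_def, hmuv y hy, h1, h2]
  -- values of F
  have hFu : F u = α - b := by simp [hF_def, mu, hne]
  have hFv : F v = 0 := by
    have : mu G w α u v = a := by simp [mu, hne.symm, huv, ha_def]; rfl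
    simp [hF_def, this, hne.symm, hne]
  have hFadj : ∀ x, x ≠ u → x ≠ v → F x = mu G w α u x := by
    intro x h1 h2; simp [hF_def, h1, h2]
  have hGv : Gf v = α - a := by simp [hGf_def, mu, hne.symm]
  have hGu : Gf u = 0 := by
    have : mu G w α v u = b := by simp [mu, hne, hvu, hb_def]; rfl
    simp [hGf_def, this, hne, hne.symm]
  have hGadj : ∀ y, y ≠ v → y ≠ u → Gf y = mu G w α v y := by
    intro y h1 h2; simp [hGf_def, h1, h2]
  have hmu_le : ∀ p z, 0 ≤ mu G w α p z ∧ mu G w α p z ≤ 1 := by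
    intro p z
    unfold mu
    split_ifs with h1 h2
    · constructor <;> linarith
    · have hDp : 0 < deg G w p := Finset.sum_pos
        (fun x hx => hw_pos p x ((hmem p x).mp hx)) ⟨z, (hmem p z).mpr h2⟩
      have hwz : 0 < w p z := hw_pos p z h2
      have hwle : w p z ≤ deg G w p :=
        Finset.single_le_sum (fun x hx => (hw_pos p x ((hmem p x).mp hx)).le)
          ((hmem p z).mpr h2)
      constructor
      · positivity
      · rw [div_le_one hDp]; nlinarith
    · exact ⟨le_refl 0, zero_le_one⟩
  have hFnn : ∀ x, 0 ≤ F x := by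
    intro x
    by_cases h1 : x = u
    · rw [h1, hFu]; linarith
    by_cases h2 : x = v
    · rw [h2, hFv]
    · rw [hFadj x h1 h2]; exact (hmu_le u x).1
  have hGnn : ∀ y, 0 ≤ Gf y := by
    intro y
    by_cases h1 : y = v
    · rw [h1, hGv]
      have : a = (1 - α) * (w u v / Du) := by rw [ha_def]; ring
      have haD : 0 < w u v / Du := by positivity
      nlinarith
    by_cases h2 : y = u
    · rw [h2, hGu]
    · rw [hGadj y h1 h2]; exact (hmu_le v y).1
  -- sums
  have hmusum_u : ∑ x ∈ Nu, mu G w α u x = 1 := by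
    rw [hNu_def, Finset.sum_insert (by simp [hmem])]
    have h1 : mu G w α u u = α := by simp [mu]
    have h2 : ∑ x ∈ G.neighborFinset u, mu G w α u x
        = ∑ x ∈ G.neighborFinset u, (1 - α) * w u x / Du := by
      refine Finset.sum_congr rfl fun x hx => ?_
      have hadj : G.Adj u x := (hmem u x).mp hx
      simp [mu, hadj, hadj.ne']; rfl
    rw [h1, h2]
    have : ∑ x ∈ G.neighborFinset u, (1 - α) * w u x / Du
        = (1 - α) * (∑ x ∈ G.neighborFinset u, w u x) / Du := by
      rw [Finset.mul_sum, Finset.sum_div]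
    rw [this]
    rw [hDu_def] at *
    rw [show (∑ x ∈ G.neighborFinset u, w u x) = deg G w u from rfl]
    field_simp
    ring
  have hmusum_v : ∑ y ∈ Nv, mu G w α v y = 1 := by
    rw [hNv_def, Finset.sum_insert (by simp [hmem])]
    have h1 : mu G w α v v = α := by simp [mu]
    have h2 : ∑ y ∈ G.neighborFinset v, mu G w α v y
        = ∑ y ∈ G.neighborFinset v, (1 - α) * w v y / Dv := by
      refine Finset.sum_congr rfl fun y hy => ?_
      have hadj : G.Adj v y := (hmem v y).mp hy
      simp [mu, hadj, hadj.ne']; rfl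
    rw [h1, h2]
    have : ∑ y ∈ G.neighborFinset v, (1 - α) * w v y / Dv
        = (1 - α) * (∑ y ∈ G.neighborFinset v, w v y) / Dv := by
      rw [Finset.mul_sum, Finset.sum_div]
    rw [this]
    rw [hDv_def] at *
    rw [show (∑ y ∈ G.neighborFinset v, w v y) = deg G w v from rfl]
    field_simp
    ring
  have hFsum : ∑ x ∈ Nu, F x = c := by
    rw [hF_def]
    simp only [Finset.sum_sub_distrib]
    rw [hmusum_u, Finset.sum_ite_eq' Nu u (fun _ => b), Finset.sum_ite_eq' Nu v (fun _ => a)]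
    simp only [huNu, hvNu, if_true, hc_def]
    ring
  have hGsum : ∑ y ∈ Nv, Gf y = c := by
    rw [hGf_def]
    simp only [Finset.sum_sub_distrib]
    rw [hmusum_v, Finset.sum_ite_eq' Nv v (fun _ => a), Finset.sum_ite_eq' Nv u (fun _ => b)]
    simp only [huNv, hvNv, if_true, hc_def]
  -- the coupling
  set A : V → V → ℝ := fun x y => F x * Gf y / c + (if x = u ∧ y = u then b else 0)
    + (if x = v ∧ y = v then a else 0) with hA_def
  have hAnn : ∀ x y, 0 ≤ A x y := by
    intro x y
    have h1 : 0 ≤ F x * Gf y / c := by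
      have := hFnn x; have := hGnn y; positivity
    have h2 : (0:ℝ) ≤ if x = u ∧ y = u then b else 0 := by split_ifs <;> simp [hb0]
    have h3 : (0:ℝ) ≤ if x = v ∧ y = v then a else 0 := by split_ifs <;> simp [ha0]
    simp only [hA_def]; linarith
  have hA0 : ∀ x y, x ∉ Nu ∨ y ∉ Nv → A x y = 0 := by
    intro x y h
    rcases h with h | h
    · have h1 : x ≠ u := fun hh => h (hh ▸ huNu)
      have h2 : x ≠ v := fun hh => h (hh ▸ hvNu)
      simp [hA_def, hF0 x h, h1, h2]
    · have h1 : y ≠ u := fun hh => h (hh ▸ huNv)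
      have h2 : y ≠ v := fun hh => h (hh ▸ hvNv)
      simp [hA_def, hG0 y h, h1, h2]
  -- row sums
  have hrow : ∀ x, ∑ y ∈ Nv, A x y = mu G w α u x := by
    intro x
    simp only [hA_def]
    rw [Finset.sum_add_distrib, Finset.sum_add_distrib]
    have e1 : ∑ y ∈ Nv, F x * Gf y / c = F x := by
      rw [show (fun y => F x * Gf y / c) = fun y => (F x / c) * Gf y from by
        funext y; ring]
      rw [← Finset.mul_sum, hGsum]
      field_simp
    have e2 : ∑ y ∈ Nv, (if x = u ∧ y = u then b else 0) = if x = u then b else 0 := by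
      by_cases hx : x = u
      · simp only [hx, true_and]
        rw [Finset.sum_ite_eq' Nv u (fun _ => b)]
        simp [huNv]
      · simp [hx]
    have e3 : ∑ y ∈ Nv, (if x = v ∧ y = v then a else 0) = if x = v then a else 0 := by
      by_cases hx : x = v
      · simp only [hx, true_and]
        rw [Finset.sum_ite_eq' Nv v (fun _ => a)]
        simp [hvNv]
      · simp [hx]
    rw [e1, e2, e3, hF_def]
    ring
  have hcol : ∀ y, ∑ x ∈ Nu, A x y = mu G w α v y := by
    intro y
    simp only [hA_def]
    rw [Finset.sum_add_distrib, Finset.sum_add_distrib]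
    have e1 : ∑ x ∈ Nu, F x * Gf y / c = Gf y := by
      rw [show (fun x => F x * Gf y / c) = fun x => (Gf y / c) * F x from by
        funext x; ring]
      rw [← Finset.mul_sum, hFsum]
      field_simp
    have e2 : ∑ x ∈ Nu, (if x = u ∧ y = u then b else 0) = if y = u then b else 0 := by
      by_cases hy : y = u
      · simp only [hy, and_true]
        rw [Finset.sum_ite_eq' Nu u (fun _ => b)]
        simp [huNu]
      · simp [hy]
    have e3 : ∑ x ∈ Nu, (if x = v ∧ y = v then a else 0) = if y = v then a else 0 := by
      by_cases hy : y = v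
      · simp only [hy, and_true]
        rw [Finset.sum_ite_eq' Nu v (fun _ => a)]
        simp [hvNu]
      · simp [hy]
    rw [e1, e2, e3, hGf_def]
    ring
  have hcoupling : IsCoupling (mu G w α u) (mu G w α v) A := by
    constructor
    · intro x y
      refine ⟨hAnn x y, ?_⟩
      by_cases hy : y ∈ Nv
      · calc A x y ≤ ∑ y' ∈ Nv, A x y' :=
              Finset.single_le_sum (fun y' _ => hAnn x y') hy
          _ = mu G w α u x := hrow x
          _ ≤ 1 := (hmu_le u x).2
      · rw [hA0 x y (Or.inr hy)]; exact zero_le_one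
    · apply Set.Finite.subset (Nu ×ˢ Nv : Finset (V × V)).finite_toSet
      intro p hp
      simp only [Function.mem_support] at hp
      by_contra hmem'
      simp only [Finset.coe_product, Set.mem_prod, Finset.mem_coe] at hmem'
      push_neg at hmem'
      rcases Classical.em (p.1 ∈ Nu) with h | h
      · exact hp (hA0 p.1 p.2 (Or.inr (hmem' h)))
      · exact hp (hA0 p.1 p.2 (Or.inl h))
    · intro x
      rw [finsum_eq_sum_of_support_subset _ (s := Nv) ?_]
      · exact hrow x
      · intro y hy
        simp only [Function.mem_support] at hy
        by_contra hc'
        exact hy (hA0 x y (Or.inr hc'))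
    · intro y
      rw [finsum_eq_sum_of_support_subset _ (s := Nu) ?_]
      · exact hcol y
      · intro x hx
        simp only [Function.mem_support] at hx
        by_contra hc'
        exact hx (hA0 x y (Or.inl hc'))
  -- the cost
  have hcost : cost d A = ∑ x ∈ Nu, ∑ y ∈ Nv, A x y * d x y := by
    rw [cost, finsum_eq_sum_of_support_subset _ (s := Nu ×ˢ Nv) ?_]
    · rw [Finset.sum_product]
    · intro p hp
      simp only [Function.mem_support] at hp
      by_contra hmem'
      simp only [Finset.coe_product, Set.mem_prod, Finset.mem_coe] at hmem'
      push_neg at hmem'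
      rcases Classical.em (p.1 ∈ Nu) with h | h
      · exact hp (by rw [hA0 p.1 p.2 (Or.inr (hmem' h))]; ring)
      · exact hp (by rw [hA0 p.1 p.2 (Or.inl h)]; ring)
  have hAd : ∀ x y, A x y * d x y = F x * Gf y / c * d x y := by
    intro x y
    have h2 : (if x = u ∧ y = u then b else 0) * d x y = 0 := by
      split_ifs with h
      · rw [h.1, h.2, hd0]; ring
      · ring
    have h3 : (if x = v ∧ y = v then a else 0) * d x y = 0 := by
      split_ifs with h
      · rw [h.1, h.2, hd0]; ring
      · ring
    simp only [hA_def]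
    rw [add_mul, add_mul, h2, h3]
    ring
  set Tu := ∑ x ∈ Nu, F x * d x u with hTu_def
  set Tv := ∑ y ∈ Nv, Gf y * d v y with hTv_def
  have hcost_le : cost d A ≤ Tu + c * d u v + Tv := by
    rw [hcost]
    have step1 : ∀ x ∈ Nu, ∑ y ∈ Nv, A x y * d x y
        ≤ ∑ y ∈ Nv, F x * Gf y / c * (d x u + d u v + d v y) := by
      intro x _
      refine Finset.sum_le_sum fun y _ => ?_
      rw [hAd x y]
      have hc1 : 0 ≤ F x * Gf y / c := by
        have := hFnn x; have := hGnn y; positivity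
      have htri : d x y ≤ d x u + d u v + d v y := by
        calc d x y ≤ d x u + d u y := my_d_triangle hshort x u y
          _ ≤ d x u + (d u v + d v y) := by
              have := my_d_triangle hshort u v y; linarith
          _ = d x u + d u v + d v y := by ring
      exact mul_le_mul_of_nonneg_left htri hc1
    have hcne : c ≠ 0 := ne_of_gt hc
    have step2 : ∑ x ∈ Nu, ∑ y ∈ Nv, F x * Gf y / c * (d x u + d u v + d v y)
        = Tu + c * d u v + Tv := by
      have inner : ∀ x, ∑ y ∈ Nv, F x * Gf y / c * (d x u + d u v + d v y)
          = F x * d x u + F x * d u v + F x * (Tv / c) := by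
        intro x
        have e : ∀ y, F x * Gf y / c * (d x u + d u v + d v y)
            = Gf y * (F x / c * (d x u + d u v)) + Gf y * d v y * (F x / c) := by
          intro y; ring
        rw [Finset.sum_congr rfl fun y _ => e y, Finset.sum_add_distrib,
          ← Finset.sum_mul, ← Finset.sum_mul, hGsum, ← hTv_def]
        field_simp
      rw [Finset.sum_congr rfl fun x _ => inner x, Finset.sum_add_distrib,
        Finset.sum_add_distrib, ← Finset.sum_mul, ← Finset.sum_mul, ← hTu_def, hFsum]
      have : c * (Tv / c) = Tv := by field_simp
      rw [this]
    calc ∑ x ∈ Nu, ∑ y ∈ Nv, A x y * d x y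
        ≤ ∑ x ∈ Nu, ∑ y ∈ Nv, F x * Gf y / c * (d x u + d u v + d v y) :=
          Finset.sum_le_sum step1
      _ = Tu + c * d u v + Tv := step2
  -- compute Tu, Tv
  set Su := ∑ x ∈ G.neighborFinset u, (w u x / Du) * d x u with hSu_def
  set Sv := ∑ y ∈ G.neighborFinset v, (w v y / Dv) * d y v with hSv_def
  have hTu : Tu = (1 - α) * Su - a * d u v := by
    rw [hTu_def, hNu_def, Finset.sum_insert (by simp [hmem])]
    rw [hFu, hd0 u, mul_zero, zero_add]
    have e : ∀ x ∈ G.neighborFinset u, F x * d x u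
        = (1 - α) * ((w u x / Du) * d x u) - (if x = v then a * d x u else 0) := by
      intro x hx
      have hadj : G.Adj u x := (hmem u x).mp hx
      have hxu : x ≠ u := hadj.ne'
      simp only [hF_def, mu, hxu, if_false, hadj, if_true]
      split_ifs with h <;> ring
    rw [Finset.sum_congr rfl e, Finset.sum_sub_distrib, ← Finset.mul_sum, ← hSu_def]
    rw [Finset.sum_ite_eq' (G.neighborFinset u) v (fun x => a * d x u)]
    rw [if_pos ((hmem u v).mpr huv), hd_symm v u]
  have hTv2 : Tv = (1 - α) * Sv - b * d u v := by
    rw [hTv_def, hNv_def, Finset.sum_insert (by simp [hmem])]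
    rw [hGv, hd0 v, mul_zero, zero_add]
    have e : ∀ y ∈ G.neighborFinset v, Gf y * d v y
        = (1 - α) * ((w v y / Dv) * d y v) - (if y = u then b * d v y else 0) := by
      intro y hy
      have hadj : G.Adj v y := (hmem v y).mp hy
      have hyv : y ≠ v := hadj.ne'
      rw [hd_symm v y]
      simp only [hGf_def, mu, hyv, if_false, hadj, if_true]
      split_ifs with h <;> ring
    rw [Finset.sum_congr rfl e, Finset.sum_sub_distrib, ← Finset.mul_sum, ← hSv_def]
    rw [Finset.sum_ite_eq' (G.neighborFinset v) u (fun y => b * d v y)]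
    rw [if_pos ((hmem v u).mpr hvu), hd_symm v u]
  -- bound on W
  have hW_le : W d (mu G w α u) (mu G w α v) ≤ Tu + c * d u v + Tv := by
    have hmem2 : cost d A ∈
        {r : ℝ | ∃ A' : V → V → ℝ, IsCoupling (mu G w α u) (mu G w α v) A' ∧ cost d A' = r} :=
      ⟨A, hcoupling, rfl⟩
    have hbdd : BddBelow
        {r : ℝ | ∃ A' : V → V → ℝ, IsCoupling (mu G w α u) (mu G w α v) A' ∧ cost d A' = r} := by
      refine ⟨0, ?_⟩
      rintro r ⟨A', hA', rfl⟩
      apply finsum_nonneg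
      intro p
      exact mul_nonneg (hA'.mem_Icc p.1 p.2).1 (hdnn p.1 p.2)
    exact le_trans (csInf_le hbdd hmem2) hcost_le
  -- final assembly
  have hSu_eq : ∑ x ∈ G.neighborFinset u, (w u x / Du) * (d x u / d u v) = Su / d u v := by
    rw [hSu_def, Finset.sum_div]
    exact Finset.sum_congr rfl fun x _ => by ring
  have hSv_eq : ∑ y ∈ G.neighborFinset v, (w v y / Dv) * (d y v / d u v) = Sv / d u v := by
    rw [hSv_def, Finset.sum_div]
    exact Finset.sum_congr rfl fun y _ => by ring
  have hdiv : W d (mu G w α u) (mu G w α v) / d u v ≤ (Tu + c * d u v + Tv) / d u v :=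
    by gcongr
  have hfinal : (2 * w u v / Du + 2 * w u v / Dv - Su / d u v - Sv / d u v) * (1 - α)
      = 1 - (Tu + c * d u v + Tv) / d u v := by
    rw [hTu, hTv2, hc_def, ha_def, hb_def, hw_symm v u]
    field_simp
    ring
  simp only [kappaAlpha]
  rw [hSu_eq, hSv_eq, le_div_iff₀ h1α]
  linarith [hfinal, hdiv]

end RicciWeighted

open RicciWeighted in
/-- For a locally finite weighted graph `G = (V,E,d,w)` and an edge
`uv ∈ E`, the Ricci curvature satisfies the lower bound
`κ(u,v) ≥ 2w_{uv}/D_u + 2w_{uv}/D_v − ∑_{x∈Γ(u)} (w_{ux}/D_u)(d(x,u)/d(u,v))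
  − ∑_{y∈Γ(v)} (w_{vy}/D_v)(d(y,v)/d(u,v))`. -/
theorem curvature_lower_bound
    {V : Type*} (G : SimpleGraph V) [∀ v : V, Fintype (G.neighborSet v)]
    (hconn : G.Connected)
    (d w : V → V → ℝ)
    (hd_symm : ∀ x y : V, d x y = d y x)
    (hd_pos : ∀ x y : V, G.Adj x y → 0 < d x y)
    (hshort : IsShortestDist G d)
    (hw_symm : ∀ x y : V, w x y = w y x)
    (hw_pos : ∀ x y : V, G.Adj x y → 0 < w x y)
    (u v : V) (huv : G.Adj u v)
    (k : ℝ) (hk : IsRicci G d w u v k) :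
    2 * w u v / deg G w u + 2 * w u v / deg G w v -
        (∑ x ∈ G.neighborFinset u, (w u x / deg G w u) * (d x u / d u v)) -
        (∑ y ∈ G.neighborFinset v, (w v y / deg G w v) * (d y v / d u v)) ≤ k := by
  
  classical
  have hmem : ∀ p q : V, q ∈ G.neighborFinset p ↔ G.Adj p q := fun p q =>
    G.mem_neighborFinset p q
  have hDu : 0 < deg G w u := Finset.sum_pos (fun x hx => hw_pos u x ((hmem u x).mp hx))
    ⟨v, (hmem u v).mpr huv⟩
  have hDv : 0 < deg G w v := Finset.sum_pos (fun x hx => hw_pos v x ((hmem v x).mp hx))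
    ⟨u, (hmem v u).mpr huv.symm⟩
  have hwuv : 0 < w u v := hw_pos u v huv
  set t := w u v / deg G w u + w u v / deg G w v with ht_def
  have ht : 0 ≤ t := by positivity
  have h1t : (0:ℝ) < 1 + t := by linarith
  have hα₀ : max (1/2) (1 - 1/(2*(1+t))) < 1 := by
    apply max_lt (by norm_num)
    have : 0 < 1/(2*(1+t)) := by positivity
    linarith
  refine ge_of_tendsto hk ?_
  filter_upwards [Ioo_mem_nhdsLT_of_mem
    (show (1:ℝ) ∈ Set.Ioc (max (1/2) (1 - 1/(2*(1+t)))) 1 from ⟨hα₀, le_refl 1⟩)] with α hα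
  have h1 : α < 1 := hα.2
  have h2 : 1/2 ≤ α := le_trans (le_max_left _ _) hα.1.le
  have h3 : 1 - 1/(2*(1+t)) < α := lt_of_le_of_lt (le_max_right _ _) hα.1
  have h4 : (1 - α) * t ≤ 1/2 := by
    have h5 : 1 - α < 1/(2*(1+t)) := by linarith
    have h6 : (1 - α) * (1 + t) < 1/(2*(1+t)) * (1+t) :=
      mul_lt_mul_of_pos_right h5 h1t
    have h7 : 1/(2*(1+t)) * (1+t) = 1/2 := by field_simp
    nlinarith [mul_nonneg (by linarith : (0:ℝ) ≤ 1 - α) ht]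
  exact main_estimate G d w hd_symm hd_pos hshort hw_symm hw_pos u v huv α h1 h2 h4
end

section
/- Let G = (V, E, d, w) be a locally finite weighted graph, let u ∼ v, and let α ∈ [0,1). If A is a coupling between μ_u^α and μ_v^α, then the function B = (1/(1−α))(𝟙_{(u,v)} − A), where 𝟙_{(u,v)} is the indicator of the single pair (u,v), is a ∗-coupling between μ_u and μ_v, provided A(u,v) < 1. -/
open Filter Finset
open scoped Classical

namespace RicciWeighted

variable {V : Type*}

section Aux

open RicciWeighted

variable {V : Type*} (G : SimpleGraph V) [∀ v : V, Fintype (G.neighborSet v)]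

/-- Total mass of `μ_x^α` is 1, provided `x` has a neighbor and weights are positive. -/
lemma mu_total_mass (w : V → V → ℝ) (hw_pos : ∀ x y : V, G.Adj x y → 0 < w x y)
    (α : ℝ) (x y : V) (hxy : G.Adj x y) :
    ∑ᶠ z : V, mu G w α x z = 1 := by
  classical
  have hD : 0 < deg G w x := by
    apply Finset.sum_pos
    · intro z hz
      exact hw_pos x z (by simpa using hz)
    · exact ⟨y, by simpa using hxy⟩
  have hxnot : x ∉ G.neighborFinset x := by simp
  have hsupp : Function.support (mu G w α x) ⊆ ↑(insert x (G.neighborFinset x)) := by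
    intro z hz
    simp only [Function.mem_support, mu] at hz
    by_cases h1 : z = x
    · simp [h1]
    · by_cases h2 : G.Adj x z
      · simp [h2]
      · simp [h1, h2] at hz
  rw [finsum_eq_sum_of_support_subset _ hsupp, Finset.sum_insert hxnot]
  have h1 : mu G w α x x = α := by simp [mu]
  have h2 : ∑ z ∈ G.neighborFinset x, mu G w α x z
      = ∑ z ∈ G.neighborFinset x, (1 - α) * w x z / deg G w x := by
    apply Finset.sum_congr rfl
    intro z hz
    have hadj : G.Adj x z := by simpa using hz
    have hne : z ≠ x := fun h => by simp [h] at hadj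
    simp [mu, hne, hadj]
  rw [h1, h2]
  rw [← Finset.sum_div, ← Finset.mul_sum]
  rw [show (∑ z ∈ G.neighborFinset x, w x z) = deg G w x from rfl]
  field_simp
  ring

end Aux

end RicciWeighted

open RicciWeighted in
/-- Let `u ∼ v`, `α ∈ [0,1)` and let `A` be a coupling between
`μ_u^α` and `μ_v^α` with `A(u,v) < 1`.  Then `B = (1/(1−α))(𝟙_{(u,v)} − A)` is a
`∗`-coupling between `μ_u` and `μ_v`. -/
theorem star_coupling_of_coupling
    {V : Type*} (G : SimpleGraph V) [∀ v : V, Fintype (G.neighborSet v)]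
    (hconn : G.Connected)
    (d w : V → V → ℝ)
    (hd_symm : ∀ x y : V, d x y = d y x)
    (hd_pos : ∀ x y : V, G.Adj x y → 0 < d x y)
    (hw_symm : ∀ x y : V, w x y = w y x)
    (hw_pos : ∀ x y : V, G.Adj x y → 0 < w x y)
    (u v : V) (huv : G.Adj u v)
    (α : ℝ) (hα : α ∈ Set.Ico (0 : ℝ) 1)
    (A : V → V → ℝ) (hA : IsCoupling (mu G w α u) (mu G w α v) A)
    (hAuv : A u v < 1) :
    IsStarCoupling (mu G w 0 u) (mu G w 0 v) u v
      (fun x y => (1 / (1 - α)) * ((if x = u ∧ y = v then (1 : ℝ) else 0) - A x y)) := by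
  classical
  obtain ⟨hα0, hα1⟩ := hα
  have h1α : 0 < 1 - α := by linarith
  have hinv : 0 < 1 / (1 - α) := by positivity
  have hAnn : ∀ x y : V, 0 ≤ A x y := fun x y => (hA.mem_Icc x y).1
  -- finite supports of the rows and columns of A
  have hrow : ∀ x : V, (Function.support fun y => A x y).Finite := by
    intro x
    have : (Function.support fun y => A x y)
        ⊆ (fun y => (x, y)) ⁻¹' (Function.support fun p : V × V => A p.1 p.2) := by
      intro y hy; exact hy
    exact Set.Finite.subset
      (hA.finite_support.preimage (fun a _ b _ h => by simpa using h)) this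
  have hcol : ∀ y : V, (Function.support fun x => A x y).Finite := by
    intro y
    have : (Function.support fun x => A x y)
        ⊆ (fun x => (x, y)) ⁻¹' (Function.support fun p : V × V => A p.1 p.2) := by
      intro x hx; exact hx
    exact Set.Finite.subset
      (hA.finite_support.preimage (fun a _ b _ h => by simpa using h)) this
  -- total mass of A is 1
  have hmass : ∑ᶠ p : V × V, A p.1 p.2 = 1 := by
    set S : Finset (V × V) := hA.finite_support.toFinset with hS
    set sx : Finset V := S.image Prod.fst
    set sy : Finset V := S.image Prod.snd
    have hmem : ∀ x y : V, A x y ≠ 0 → x ∈ sx ∧ y ∈ sy := by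
      intro x y h
      have : (x, y) ∈ S := by simp [hS, Set.Finite.mem_toFinset, Function.mem_support, h]
      exact ⟨Finset.mem_image.2 ⟨(x, y), this, rfl⟩, Finset.mem_image.2 ⟨(x, y), this, rfl⟩⟩
    have hsub : (Function.support fun p : V × V => A p.1 p.2) ⊆ ↑(sx ×ˢ sy) := by
      rintro ⟨x, y⟩ h
      have := hmem x y h
      simp [Finset.mem_product, this.1, this.2]
    rw [finsum_eq_sum_of_support_subset _ hsub, Finset.sum_product]
    have hx_eq : ∀ x : V, ∑ y ∈ sy, A x y = mu G w α u x := by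
      intro x
      rw [← hA.marginal_fst x]
      symm
      apply finsum_eq_sum_of_support_subset
      intro y hy
      exact (hmem x y hy).2
    rw [Finset.sum_congr rfl fun x _ => hx_eq x]
    have hmu_sub : Function.support (mu G w α u) ⊆ ↑sx := by
      intro x hx
      have hx' : mu G w α u x ≠ 0 := hx
      rw [← hA.marginal_fst x] at hx'
      by_contra hc
      apply hx'
      apply finsum_eq_zero_of_forall_eq_zero
      intro y
      by_contra hy
      exact hc (hmem x y hy).1
    rw [← finsum_eq_sum_of_support_subset _ hmu_sub]
    exact mu_total_mass G w hw_pos α u v huv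
  constructor
  · -- B u v > 0
    have hif : (if u = u ∧ v = v then (1 : ℝ) else 0) = 1 := by simp
    simp only [hif]
    have : 0 < 1 - A u v := by linarith
    positivity
  · -- nonpositivity off (u,v)
    intro x y hxy
    have hne : ¬(x = u ∧ y = v) := by
      rintro ⟨rfl, rfl⟩; exact hxy rfl
    simp only [if_neg hne]
    have := hAnn x y
    nlinarith
  · -- finite support
    apply Set.Finite.subset (hA.finite_support.insert (u, v))
    rintro ⟨x, y⟩ h
    simp only [Function.mem_support] at h
    by_cases hx : (x, y) = (u, v)
    · exact Set.mem_insert_iff.2 (Or.inl hx)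
    · right
      have hne : ¬(x = u ∧ y = v) := fun hc => hx (by simp [hc.1, hc.2])
      simp only [if_neg hne, zero_sub, mul_neg, neg_ne_zero] at h
      have : A x y ≠ 0 := fun h0 => h (by simp [h0])
      exact this
  · -- sum zero
    have hind : (Function.support fun p : V × V =>
        (if p.1 = u ∧ p.2 = v then (1 : ℝ) else 0)).Finite := by
      apply Set.Finite.subset (Set.finite_singleton (u, v))
      rintro ⟨x, y⟩ h
      simp only [Function.mem_support] at h
      by_cases hc : x = u ∧ y = v
      · simp [hc.1, hc.2]
      · simp [if_neg hc] at h
    have hdiffsupp : (Function.support fun p : V × V =>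
        (if p.1 = u ∧ p.2 = v then (1 : ℝ) else 0) - A p.1 p.2).Finite := by
      apply Set.Finite.subset (hind.union hA.finite_support)
      intro p hp
      simp only [Function.mem_support] at hp
      by_contra hc
      simp only [Set.mem_union, Function.mem_support, not_or, not_not] at hc
      rw [hc.1, hc.2, sub_zero] at hp
      exact hp rfl
    rw [← mul_finsum _ _,
      finsum_sub_distrib hind hA.finite_support, hmass]
    have : ∑ᶠ p : V × V, (if p.1 = u ∧ p.2 = v then (1 : ℝ) else 0) = 1 := by
      rw [finsum_eq_single _ ((u, v) : V × V)]
      · simp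
      · rintro ⟨x, y⟩ hxy
        have : ¬(x = u ∧ y = v) := by
          rintro ⟨rfl, rfl⟩; exact hxy rfl
        simp [this]
    rw [this]; ring
  · -- marginal_fst
    intro x hx
    have hind : ∀ y : V, (if x = u ∧ y = v then (1 : ℝ) else 0) = 0 := by
      intro y
      have : ¬(x = u ∧ y = v) := fun h => hx h.1
      simp [this]
    have heq : (fun y => (1 / (1 - α)) * ((if x = u ∧ y = v then (1 : ℝ) else 0) - A x y))
        = fun y => (1 / (1 - α)) * (-A x y) := by
      funext y; rw [hind y]; ring
    rw [heq]
    have hnegsupp : (Function.support fun y => -A x y).Finite := by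
      apply Set.Finite.subset (hrow x)
      intro y hy
      simp only [Function.mem_support, neg_ne_zero] at hy
      exact hy
    rw [← mul_finsum _ _, finsum_neg_distrib, hA.marginal_fst x]
    have hadj_cases : mu G w α u x = (1 - α) * mu G w 0 u x := by
      simp only [mu, if_neg hx]
      by_cases h : G.Adj u x
      · simp [h]; ring
      · simp [h]
    rw [hadj_cases]
    field_simp
  · -- marginal_snd
    intro y hy
    have hind : ∀ x : V, (if x = u ∧ y = v then (1 : ℝ) else 0) = 0 := by
      intro x
      have : ¬(x = u ∧ y = v) := fun h => hy h.2
      simp [this]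
    have heq : (fun x => (1 / (1 - α)) * ((if x = u ∧ y = v then (1 : ℝ) else 0) - A x y))
        = fun x => (1 / (1 - α)) * (-A x y) := by
      funext x; rw [hind x]; ring
    rw [heq]
    have hnegsupp : (Function.support fun x => -A x y).Finite := by
      apply Set.Finite.subset (hcol y)
      intro x hx
      simp only [Function.mem_support, neg_ne_zero] at hx
      exact hx
    rw [← mul_finsum _ _, finsum_neg_distrib, hA.marginal_snd y]
    have hadj_cases : mu G w α v y = (1 - α) * mu G w 0 v y := by
      simp only [mu, if_neg hy]
      by_cases h : G.Adj v y
      · simp [h]; ring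
      · simp [h]
    rw [hadj_cases]
    field_simp
end

section
/- Let G = (V, E, d, w) be a locally finite weighted graph, let u ∼ v, and let B be a ∗-coupling between μ_u and μ_v. For any α ∈ [0,1) with (1−α)B(u,v) ≤ 1, the function A = 𝟙_{(u,v)} − (1−α)B, where 𝟙_{(u,v)} is the indicator of the single pair (u,v), is a coupling between μ_u^α and μ_v^α. -/
open Filter Finset
open scoped Classical

open RicciWeighted in
/-- Let `u ∼ v` and let `B` be a `∗`-coupling between `μ_u` and `μ_v`.
For any `α ∈ [0,1)` with `(1−α)B(u,v) ≤ 1`, the function `A = 𝟙_{(u,v)} − (1−α)B` is a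
coupling between `μ_u^α` and `μ_v^α`. -/
theorem coupling_of_star_coupling
    {V : Type*} (G : SimpleGraph V) [∀ v : V, Fintype (G.neighborSet v)]
    (hconn : G.Connected)
    (d w : V → V → ℝ)
    (hd_symm : ∀ x y : V, d x y = d y x)
    (hd_pos : ∀ x y : V, G.Adj x y → 0 < d x y)
    (hw_symm : ∀ x y : V, w x y = w y x)
    (hw_pos : ∀ x y : V, G.Adj x y → 0 < w x y)
    (u v : V) (huv : G.Adj u v)
    (B : V → V → ℝ)
    (hB : IsStarCoupling (mu G w 0 u) (mu G w 0 v) u v B)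
    (α : ℝ) (hα : α ∈ Set.Ico (0 : ℝ) 1)
    (hle : (1 - α) * B u v ≤ 1) :
    IsCoupling (mu G w α u) (mu G w α v)
      (fun x y => (if x = u ∧ y = v then (1 : ℝ) else 0) - (1 - α) * B x y) := by
  classical
  obtain ⟨hα0, hα1⟩ := hα
  have h1α : (0:ℝ) < 1 - α := by linarith
  set S : Finset (V × V) := hB.finite_support.toFinset with hSdef
  have hmemS : ∀ p : V × V, B p.1 p.2 ≠ 0 → p ∈ S := by
    intro p h
    simpa [hSdef, Set.Finite.mem_toFinset, Function.mem_support] using h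
  set X : Finset V := S.image Prod.fst ∪ {u} with hXdef
  set Y : Finset V := S.image Prod.snd ∪ {v} with hYdef
  have huX : u ∈ X := by simp [hXdef]
  have hvY : v ∈ Y := by simp [hYdef]
  have hmemX : ∀ x y : V, B x y ≠ 0 → x ∈ X := fun x y h =>
    Finset.mem_union_left _ (Finset.mem_image.mpr ⟨(x, y), hmemS (x, y) h, rfl⟩)
  have hmemY : ∀ x y : V, B x y ≠ 0 → y ∈ Y := fun x y h =>
    Finset.mem_union_left _ (Finset.mem_image.mpr ⟨(x, y), hmemS (x, y) h, rfl⟩)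
  have hrow : ∀ x : V, (∑ᶠ y, B x y) = ∑ y ∈ Y, B x y := by
    intro x
    apply finsum_eq_finset_sum_of_support_subset
    intro y hy
    exact Finset.mem_coe.mpr (hmemY x y hy)
  have hcol : ∀ y : V, (∑ᶠ x, B x y) = ∑ x ∈ X, B x y := by
    intro y
    apply finsum_eq_finset_sum_of_support_subset
    intro x hx
    exact Finset.mem_coe.mpr (hmemX x y hx)
  have htotXY : ∑ x ∈ X, ∑ y ∈ Y, B x y = 0 := by
    have h1 : (∑ᶠ p : V × V, B p.1 p.2) = ∑ p ∈ X ×ˢ Y, B p.1 p.2 := by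
      apply finsum_eq_finset_sum_of_support_subset
      intro p hp
      exact Finset.mem_coe.mpr (Finset.mem_product.mpr ⟨hmemX p.1 p.2 hp, hmemY p.1 p.2 hp⟩)
    rw [Finset.sum_product] at h1
    rw [← h1, hB.sum_zero]
  have hvN : v ∈ G.neighborFinset u := (SimpleGraph.mem_neighborFinset _ _ _).mpr huv
  have huN : u ∈ G.neighborFinset v := (SimpleGraph.mem_neighborFinset _ _ _).mpr huv.symm
  have hdeg_u : 0 < deg G w u :=
    Finset.sum_pos (fun y hy => hw_pos u y ((SimpleGraph.mem_neighborFinset _ _ _).mp hy)) ⟨v, hvN⟩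
  have hdeg_v : 0 < deg G w v :=
    Finset.sum_pos (fun y hy => hw_pos v y ((SimpleGraph.mem_neighborFinset _ _ _).mp hy)) ⟨u, huN⟩
  -- mu 0 on neighbors
  have hmu0_u : ∀ x : V, G.Adj u x → mu G w 0 u x = w u x / deg G w u := by
    intro x hadj
    have hxu : x ≠ u := hadj.ne'
    simp [mu, hxu, hadj]
  have hmu0_v : ∀ y : V, G.Adj v y → mu G w 0 v y = w v y / deg G w v := by
    intro y hadj
    have hyv : y ≠ v := hadj.ne'
    simp [mu, hyv, hadj]
  have hmassNu : ∑ x ∈ G.neighborFinset u, mu G w 0 u x = 1 := by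
    rw [Finset.sum_congr rfl (fun x hx => hmu0_u x ((SimpleGraph.mem_neighborFinset _ _ _).mp hx)),
      ← Finset.sum_div]
    exact div_self hdeg_u.ne'
  have hmassNv : ∑ y ∈ G.neighborFinset v, mu G w 0 v y = 1 := by
    rw [Finset.sum_congr rfl (fun y hy => hmu0_v y ((SimpleGraph.mem_neighborFinset _ _ _).mp hy)),
      ← Finset.sum_div]
    exact div_self hdeg_v.ne'
  have hNu : G.neighborFinset u ⊆ X.erase u := by
    intro x hx
    have hadj : G.Adj u x := (SimpleGraph.mem_neighborFinset _ _ _).mp hx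
    have hxu : x ≠ u := hadj.ne'
    have hmu : mu G w 0 u x ≠ 0 := by
      rw [hmu0_u x hadj]
      exact ne_of_gt (div_pos (hw_pos u x hadj) hdeg_u)
    have hrowx : (∑ᶠ y, B x y) = -(mu G w 0 u x) := hB.marginal_fst x hxu
    have hex : ∃ y, B x y ≠ 0 := by
      by_contra h
      push_neg at h
      rw [finsum_eq_zero_of_forall_eq_zero h] at hrowx
      exact hmu (by linarith)
    obtain ⟨y, hy⟩ := hex
    exact Finset.mem_erase.mpr ⟨hxu, hmemX x y hy⟩
  have hNv : G.neighborFinset v ⊆ Y.erase v := by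
    intro y hy
    have hadj : G.Adj v y := (SimpleGraph.mem_neighborFinset _ _ _).mp hy
    have hyv : y ≠ v := hadj.ne'
    have hmu : mu G w 0 v y ≠ 0 := by
      rw [hmu0_v y hadj]
      exact ne_of_gt (div_pos (hw_pos v y hadj) hdeg_v)
    have hcoly : (∑ᶠ x, B x y) = -(mu G w 0 v y) := hB.marginal_snd y hyv
    have hex : ∃ x, B x y ≠ 0 := by
      by_contra h
      push_neg at h
      rw [finsum_eq_zero_of_forall_eq_zero h] at hcoly
      exact hmu (by linarith)
    obtain ⟨x, hx⟩ := hex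
    exact Finset.mem_erase.mpr ⟨hyv, hmemY x y hx⟩
  have hvanish_u : ∀ x ∈ X.erase u, x ∉ G.neighborFinset u → mu G w 0 u x = 0 := by
    intro x hx hnx
    have hxu : x ≠ u := (Finset.mem_erase.mp hx).1
    have hnadj : ¬ G.Adj u x := fun h => hnx ((SimpleGraph.mem_neighborFinset _ _ _).mpr h)
    simp [mu, hxu, hnadj]
  have hvanish_v : ∀ y ∈ Y.erase v, y ∉ G.neighborFinset v → mu G w 0 v y = 0 := by
    intro y hy hny
    have hyv : y ≠ v := (Finset.mem_erase.mp hy).1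
    have hnadj : ¬ G.Adj v y := fun h => hny ((SimpleGraph.mem_neighborFinset _ _ _).mpr h)
    simp [mu, hyv, hnadj]
  have hmass_u : ∑ x ∈ X.erase u, mu G w 0 u x = 1 := by
    rw [← Finset.sum_subset hNu hvanish_u]; exact hmassNu
  have hmass_v : ∑ y ∈ Y.erase v, mu G w 0 v y = 1 := by
    rw [← Finset.sum_subset hNv hvanish_v]; exact hmassNv
  have hBurow : ∑ y ∈ Y, B u y = 1 := by
    have h2 : ∑ x ∈ X.erase u, (∑ y ∈ Y, B x y) = -1 := by
      have hc : ∀ x ∈ X.erase u, (∑ y ∈ Y, B x y) = -(mu G w 0 u x) := by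
        intro x hx
        rw [← hrow x]
        exact hB.marginal_fst x (Finset.mem_erase.mp hx).1
      rw [Finset.sum_congr rfl hc, Finset.sum_neg_distrib, hmass_u]
    have h3 := Finset.add_sum_erase X (fun x => ∑ y ∈ Y, B x y) huX
    rw [h2, htotXY] at h3
    linarith
  have hBvcol : ∑ x ∈ X, B x v = 1 := by
    have htotYX : ∑ y ∈ Y, ∑ x ∈ X, B x y = 0 := by
      rw [Finset.sum_comm]; exact htotXY
    have h2 : ∑ y ∈ Y.erase v, (∑ x ∈ X, B x y) = -1 := by
      have hc : ∀ y ∈ Y.erase v, (∑ x ∈ X, B x y) = -(mu G w 0 v y) := by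
        intro y hy
        rw [← hcol y]
        exact hB.marginal_snd y (Finset.mem_erase.mp hy).1
      rw [Finset.sum_congr rfl hc, Finset.sum_neg_distrib, hmass_v]
    have h3 := Finset.add_sum_erase Y (fun y => ∑ x ∈ X, B x y) hvY
    rw [h2, htotYX] at h3
    linarith
  have hkey : ∀ x y : V, (x, y) ≠ (u, v) → -B x y ≤ B u v := by
    intro x y hne
    by_cases h0 : B x y = 0
    · rw [h0]; simpa using hB.pos.le
    · have huvT : (u, v) ∈ S ∪ {(u, v)} := Finset.mem_union_right _ (Finset.mem_singleton_self _)
      have hxyT : (x, y) ∈ (S ∪ {(u, v)}).erase (u, v) :=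
        Finset.mem_erase.mpr ⟨hne, Finset.mem_union_left _ (hmemS (x, y) h0)⟩
      have hsum0 : ∑ p ∈ S ∪ {(u, v)}, B p.1 p.2 = 0 := by
        rw [← hB.sum_zero]
        symm
        apply finsum_eq_finset_sum_of_support_subset
        intro p hp
        exact Finset.mem_coe.mpr (Finset.mem_union_left _ (hmemS p hp))
      have hadd := Finset.add_sum_erase _ (fun p : V × V => B p.1 p.2) huvT
      have hnn : ∀ p ∈ (S ∪ {(u, v)}).erase (u, v), 0 ≤ -(B p.1 p.2) := by
        intro p hp
        have hpne : p ≠ (u, v) := (Finset.mem_erase.mp hp).1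
        exact neg_nonneg.mpr (hB.nonpos p.1 p.2 hpne)
      have hsingle : -B x y ≤ ∑ p ∈ (S ∪ {(u, v)}).erase (u, v), -(B p.1 p.2) :=
        Finset.single_le_sum hnn hxyT
      rw [Finset.sum_neg_distrib] at hsingle
      rw [hsum0] at hadd
      linarith
  refine ⟨?_, ?_, ?_, ?_⟩
  · intro x y
    rw [Set.mem_Icc]
    by_cases h : x = u ∧ y = v
    · rw [if_pos h, h.1, h.2]
      have hpos : 0 < (1 - α) * B u v := mul_pos h1α hB.pos
      constructor <;> linarith
    · have hne : (x, y) ≠ (u, v) := by simpa [Prod.ext_iff] using h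
      rw [if_neg h]
      have hnp := hB.nonpos x y hne
      have h1 := hkey x y hne
      have h2 : (1 - α) * (-B x y) ≤ (1 - α) * B u v :=
        mul_le_mul_of_nonneg_left h1 h1α.le
      constructor
      · nlinarith
      · nlinarith
  · apply Set.Finite.subset (hB.finite_support.union (Set.finite_singleton (u, v)))
    intro p hp
    by_cases h0 : B p.1 p.2 = 0
    · right
      have hpe : p.1 = u ∧ p.2 = v := by
        by_contra h
        apply hp
        simp [h0, h]
      have : p = (u, v) := Prod.ext hpe.1 hpe.2
      simp [this]
    · left
      exact h0
  · intro x
    have hsupp : (Function.support fun y =>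
        (if x = u ∧ y = v then (1:ℝ) else 0) - (1 - α) * B x y) ⊆ ↑Y := by
      intro y hy
      by_cases h0 : B x y = 0
      · have hxy : x = u ∧ y = v := by
          by_contra h
          apply hy
          simp [h0, h]
        exact Finset.mem_coe.mpr (hxy.2 ▸ hvY)
      · exact Finset.mem_coe.mpr (hmemY x y h0)
    rw [finsum_eq_finset_sum_of_support_subset _ hsupp, Finset.sum_sub_distrib, ← Finset.mul_sum]
    by_cases hx : x = u
    · have hind : ∑ y ∈ Y, (if x = u ∧ y = v then (1:ℝ) else 0) = 1 := by
        simp [hx, hvY]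
      have hBxrow : ∑ y ∈ Y, B x y = 1 := by rw [hx]; exact hBurow
      rw [hind, hBxrow, hx]
      simp [mu]
    · have hind : ∑ y ∈ Y, (if x = u ∧ y = v then (1:ℝ) else 0) = 0 := by
        simp [hx]
      have hr : ∑ y ∈ Y, B x y = -(mu G w 0 u x) := by
        rw [← hrow x]; exact hB.marginal_fst x hx
      rw [hind, hr]
      by_cases hadj : G.Adj u x
      · simp [mu, hx, hadj]
        ring
      · simp [mu, hx, hadj]
  · intro y
    have hsupp : (Function.support fun x =>
        (if x = u ∧ y = v then (1:ℝ) else 0) - (1 - α) * B x y) ⊆ ↑X := by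
      intro x hx
      by_cases h0 : B x y = 0
      · have hxy : x = u ∧ y = v := by
          by_contra h
          apply hx
          simp [h0, h]
        exact Finset.mem_coe.mpr (hxy.1 ▸ huX)
      · exact Finset.mem_coe.mpr (hmemX x y h0)
    rw [finsum_eq_finset_sum_of_support_subset _ hsupp, Finset.sum_sub_distrib]
    by_cases hy : y = v
    · have hind : ∑ x ∈ X, (if x = u ∧ y = v then (1:ℝ) else 0) = 1 := by
        simp [hy, huX]
      have hmul : ∑ x ∈ X, (1 - α) * B x y = (1 - α) * ∑ x ∈ X, B x y := by
        rw [Finset.mul_sum]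
      have hBycol : ∑ x ∈ X, B x y = 1 := by rw [hy]; exact hBvcol
      rw [hind, hmul, hBycol, hy]
      simp [mu]
    · have hind : ∑ x ∈ X, (if x = u ∧ y = v then (1:ℝ) else 0) = 0 := by
        simp [hy]
      have hmul : ∑ x ∈ X, (1 - α) * B x y = (1 - α) * ∑ x ∈ X, B x y := by
        rw [Finset.mul_sum]
      have hr : ∑ x ∈ X, B x y = -(mu G w 0 v y) := by
        rw [← hcol y]; exact hB.marginal_snd y hy
      rw [hind, hmul, hr]
      by_cases hadj : G.Adj v y
      · simp [mu, hy, hadj]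
        ring
      · simp [mu, hy, hadj]
end
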